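/- arXiv:1105.2378 — 6 statements merged into one kernel-verified Lean document; each statement's English description precedes it below -/
import Mathlib

section
/- Let a₁, a₂ ∈ ℝ, 0 < α₁ < α₂, κ₁ ≥ 0 and κ₂ > 0. For all z₀, w₀ ∈ ℝ² there exists a nonempty open set U ⊆ ℝ² such that U is contained in the intersection of the closure of A(z₀) and the closure of A(w₀). -/
/-- `Reachable a₁ a₂ α₁ α₂ κ₁ κ₂ z₀ w`: the point `w` can be reached from `z₀` by
concatenating finitely many integral curves of the control system
`ẋ = a₁x − α₁x² + y² + κ₁u`, `ẏ = a₂y − α₂xy + κ₂v` with constant controls `(u,v)`,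
each run for a nonnegative time. -/
inductive Reachable (a₁ a₂ α₁ α₂ κ₁ κ₂ : ℝ) : ℝ × ℝ → ℝ × ℝ → Prop
  | refl (z : ℝ × ℝ) : Reachable a₁ a₂ α₁ α₂ κ₁ κ₂ z z
  | step {z w w' : ℝ × ℝ} (u v T : ℝ) (γ : ℝ → ℝ × ℝ) (hT : 0 ≤ T)
      (hode : ∀ s ∈ Set.Icc (0:ℝ) T,
        HasDerivAt γ
          (a₁ * (γ s).1 - α₁ * (γ s).1 ^ 2 + (γ s).2 ^ 2 + κ₁ * u,
            a₂ * (γ s).2 - α₂ * (γ s).1 * (γ s).2 + κ₂ * v) s)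
      (h0 : γ 0 = w) (hend : γ T = w')
      (hprev : Reachable a₁ a₂ α₁ α₂ κ₁ κ₂ z w) :
      Reachable a₁ a₂ α₁ α₂ κ₁ κ₂ z w'

open Set Metric

namespace S13

theorem Reachable.trans' {a₁ a₂ α₁ α₂ κ₁ κ₂ : ℝ} {z w w' : ℝ × ℝ}
    (h₁ : Reachable a₁ a₂ α₁ α₂ κ₁ κ₂ z w) (h₂ : Reachable a₁ a₂ α₁ α₂ κ₁ κ₂ w w') :
    Reachable a₁ a₂ α₁ α₂ κ₁ κ₂ z w' := by
  induction h₂ with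
  | refl => exact h₁
  | step u v T γ hT hode h0 hend hprev ih =>
      exact Reachable.step u v T γ hT hode h0 hend ih

/-- The controlled vector field, with `u = 0`. -/
noncomputable def Fv (a₁ a₂ α₁ α₂ κ₂ v : ℝ) (z : ℝ × ℝ) : ℝ × ℝ :=
  (a₁ * z.1 - α₁ * z.1 ^ 2 + z.2 ^ 2, a₂ * z.2 - α₂ * z.1 * z.2 + κ₂ * v)

/-- A bound for the uncontrolled field on the ball of radius 1 around a point of norm `R`. -/
noncomputable def CB (a₁ a₂ α₁ α₂ : ℝ) (R : ℝ) : ℝ :=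
  (|a₁| + |a₂|) * (R + 1) + (1 + α₁ + α₂) * (R + 1) ^ 2 + 1

/-- A Lipschitz bound on the same ball. -/
noncomputable def LB (a₁ a₂ α₁ α₂ : ℝ) (R : ℝ) : ℝ :=
  |a₁| + |a₂| + 2 * (1 + α₁ + α₂) * (R + 1)

lemma abs3 {A B C x y z : ℝ} (hA : |A| ≤ x) (hB : |B| ≤ y) (hC : |C| ≤ z) :
    |A - B + C| ≤ x + y + z := by
  have h1 : |A - B + C| ≤ |A - B| + |C| := abs_add_le _ _
  have h2 : |A - B| ≤ |A| + |B| := abs_sub _ _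
  linarith

section Bounds

variable {a₁ a₂ α₁ α₂ κ₂ : ℝ}

lemma CB_one_le (hα₁ : 0 < α₁) (hα₂ : 0 < α₂) {R : ℝ} (hR : 0 ≤ R) :
    1 ≤ CB a₁ a₂ α₁ α₂ R := by
  unfold CB
  have h1 : (0:ℝ) ≤ (|a₁| + |a₂|) * (R + 1) := by positivity
  have h2 : (0:ℝ) ≤ (1 + α₁ + α₂) * (R + 1) ^ 2 := by positivity
  linarith

lemma CB_pos' (hα₁ : 0 < α₁) (hα₂ : 0 < α₂) {R : ℝ} (hR : 0 ≤ R) : 0 < CB a₁ a₂ α₁ α₂ R := by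
  linarith [CB_one_le (a₁ := a₁) (a₂ := a₂) hα₁ hα₂ hR]

lemma CB_mono (hα₁ : 0 < α₁) (hα₂ : 0 < α₂) {R R' : ℝ} (hR : 0 ≤ R) (h : R ≤ R') :
    CB a₁ a₂ α₁ α₂ R ≤ CB a₁ a₂ α₁ α₂ R' := by
  unfold CB
  have h2 : (R+1)^2 ≤ (R'+1)^2 := by nlinarith
  have g1 : (|a₁| + |a₂|) * (R + 1) ≤ (|a₁| + |a₂|) * (R' + 1) := by
    have := abs_nonneg a₁; have := abs_nonneg a₂
    apply mul_le_mul_of_nonneg_left (by linarith) (by linarith)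
  have g2 : (1 + α₁ + α₂) * (R + 1) ^ 2 ≤ (1 + α₁ + α₂) * (R' + 1) ^ 2 := by
    apply mul_le_mul_of_nonneg_left h2 (by linarith)
  linarith

lemma LB_nonneg (hα₁ : 0 < α₁) (hα₂ : 0 < α₂) {R : ℝ} (hR : 0 ≤ R) :
    0 ≤ LB a₁ a₂ α₁ α₂ R := by
  unfold LB
  have := abs_nonneg a₁; have := abs_nonneg a₂
  have : (0:ℝ) ≤ 2 * (1 + α₁ + α₂) * (R + 1) := by positivity
  linarith [abs_nonneg a₁, abs_nonneg a₂]

lemma LB_mono (hα₁ : 0 < α₁) (hα₂ : 0 < α₂) {R R' : ℝ} (hR : 0 ≤ R) (h : R ≤ R') :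
    LB a₁ a₂ α₁ α₂ R ≤ LB a₁ a₂ α₁ α₂ R' := by
  unfold LB
  have g : 2 * (1 + α₁ + α₂) * (R + 1) ≤ 2 * (1 + α₁ + α₂) * (R' + 1) := by
    apply mul_le_mul_of_nonneg_left (by linarith) (by linarith)
  linarith

lemma in_ball_coords {q z : ℝ × ℝ} (hz : z ∈ closedBall q 1) :
    |z.1| ≤ ‖q‖ + 1 ∧ |z.2| ≤ ‖q‖ + 1 := by
  have h := mem_closedBall_iff_norm.1 hz
  have hzn : ‖z‖ ≤ ‖q‖ + 1 := by
    have h2 : ‖z‖ ≤ ‖z - q‖ + ‖q‖ := by simpa using norm_add_le (z - q) q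
    linarith
  constructor
  · exact le_trans (by simpa using norm_fst_le z) hzn
  · exact le_trans (by simpa using norm_snd_le z) hzn

lemma normFv_le (hα₁ : 0 < α₁) (hα₂ : 0 < α₂) (hκ₂ : 0 < κ₂)
    {q z : ℝ × ℝ} (hz : z ∈ closedBall q 1) (v : ℝ) :
    ‖Fv a₁ a₂ α₁ α₂ κ₂ v z‖ ≤ CB a₁ a₂ α₁ α₂ ‖q‖ + κ₂ * |v| := by
  obtain ⟨h1, h2⟩ := in_ball_coords hz
  set N := ‖q‖ + 1 with hNdef
  have hN1 : 1 ≤ N := by have := norm_nonneg q; simp only [hNdef]; linarith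
  have hN0 : 0 ≤ N := by linarith
  have hb1 : |a₁ * z.1| ≤ |a₁| * N := by
    rw [abs_mul]; exact mul_le_mul_of_nonneg_left h1 (abs_nonneg _)
  have hb2 : |α₁ * z.1 ^ 2| ≤ α₁ * N ^ 2 := by
    rw [abs_mul, abs_of_pos hα₁, abs_of_nonneg (sq_nonneg z.1)]
    exact mul_le_mul_of_nonneg_left (sq_le_sq' (abs_le.1 h1).1 (abs_le.1 h1).2) hα₁.le
  have hb3 : |z.2 ^ 2| ≤ N ^ 2 := by
    rw [abs_of_nonneg (sq_nonneg z.2)]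
    exact sq_le_sq' (abs_le.1 h2).1 (abs_le.1 h2).2
  have hb4 : |a₂ * z.2| ≤ |a₂| * N := by
    rw [abs_mul]; exact mul_le_mul_of_nonneg_left h2 (abs_nonneg _)
  have hb5 : |α₂ * z.1 * z.2| ≤ α₂ * N ^ 2 := by
    rw [abs_mul, abs_mul, abs_of_pos hα₂, pow_two]
    rw [mul_assoc]
    apply mul_le_mul_of_nonneg_left _ hα₂.le
    calc |z.1| * |z.2| ≤ N * |z.2| := mul_le_mul_of_nonneg_right h1 (abs_nonneg _)
    _ ≤ N * N := mul_le_mul_of_nonneg_left h2 hN0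
  have hb6 : |κ₂ * v| = κ₂ * |v| := by rw [abs_mul, abs_of_pos hκ₂]
  have hk0 : 0 ≤ κ₂ * |v| := by positivity
  have key1 : |a₁ * z.1 - α₁ * z.1 ^ 2 + z.2 ^ 2| ≤ |a₁| * N + α₁ * N ^ 2 + N ^ 2 :=
    abs3 hb1 hb2 hb3
  have key2 : |a₂ * z.2 - α₂ * z.1 * z.2 + κ₂ * v| ≤ |a₂| * N + α₂ * N ^ 2 + κ₂ * |v| :=
    abs3 hb4 hb5 hb6.le
  have hCB : CB a₁ a₂ α₁ α₂ ‖q‖ = (|a₁| + |a₂|) * N + (1 + α₁ + α₂) * N ^ 2 + 1 := rfl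
  have hsqN : (0:ℝ) ≤ N ^ 2 := sq_nonneg N
  have ha1n := abs_nonneg a₁; have ha2n := abs_nonneg a₂
  have g1 : (0:ℝ) ≤ |a₂| * N := by positivity
  have g2 : (0:ℝ) ≤ |a₁| * N := by positivity
  have g3 : (0:ℝ) ≤ α₂ * N ^ 2 := by positivity
  have g4 : (0:ℝ) ≤ α₁ * N ^ 2 := by positivity
  rw [Fv, Prod.norm_def]
  apply max_le
  · show |a₁ * z.1 - α₁ * z.1 ^ 2 + z.2 ^ 2| ≤ _
    rw [hCB]; linarith
  · show |a₂ * z.2 - α₂ * z.1 * z.2 + κ₂ * v| ≤ _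
    rw [hCB]; linarith

lemma Fv_lip (hα₁ : 0 < α₁) (hα₂ : 0 < α₂) (hκ₂ : 0 < κ₂)
    {q z z' : ℝ × ℝ} (hz : z ∈ closedBall q 1) (hz' : z' ∈ closedBall q 1) (v : ℝ) :
    ‖Fv a₁ a₂ α₁ α₂ κ₂ v z - Fv a₁ a₂ α₁ α₂ κ₂ v z'‖ ≤ LB a₁ a₂ α₁ α₂ ‖q‖ * ‖z - z'‖ := by
  obtain ⟨h1, h2⟩ := in_ball_coords hz
  obtain ⟨h1', h2'⟩ := in_ball_coords hz'
  set N := ‖q‖ + 1 with hNdef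
  have hN1 : 1 ≤ N := by have := norm_nonneg q; simp only [hNdef]; linarith
  have hN0 : 0 ≤ N := by linarith
  set D := ‖z - z'‖ with hDdef
  have hD0 : 0 ≤ D := norm_nonneg _
  have hd1 : |z.1 - z'.1| ≤ D := by
    have : ‖(z - z').1‖ ≤ D := norm_fst_le _
    simpa using this
  have hd2 : |z.2 - z'.2| ≤ D := by
    have : ‖(z - z').2‖ ≤ D := norm_snd_le _
    simpa using this
  have hLB : LB a₁ a₂ α₁ α₂ ‖q‖ = |a₁| + |a₂| + 2 * (1 + α₁ + α₂) * N := rfl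
  rw [Prod.norm_def]
  have e1 : (Fv a₁ a₂ α₁ α₂ κ₂ v z - Fv a₁ a₂ α₁ α₂ κ₂ v z').1
      = a₁ * (z.1 - z'.1) - α₁ * ((z.1 + z'.1) * (z.1 - z'.1)) + (z.2 + z'.2) * (z.2 - z'.2) := by
    simp only [Fv, Prod.fst_sub]
    ring
  have e2 : (Fv a₁ a₂ α₁ α₂ κ₂ v z - Fv a₁ a₂ α₁ α₂ κ₂ v z').2
      = a₂ * (z.2 - z'.2) - α₂ * (z.1 * (z.2 - z'.2) + z'.2 * (z.1 - z'.1)) + 0 := by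
    simp only [Fv, Prod.snd_sub]
    ring
  have hb1 : |a₁ * (z.1 - z'.1)| ≤ |a₁| * D := by
    rw [abs_mul]; exact mul_le_mul_of_nonneg_left hd1 (abs_nonneg _)
  have hsum1 : |z.1 + z'.1| ≤ 2 * N := (abs_add_le _ _).trans (by linarith)
  have hsum2 : |z.2 + z'.2| ≤ 2 * N := (abs_add_le _ _).trans (by linarith)
  have hb2 : |α₁ * ((z.1 + z'.1) * (z.1 - z'.1))| ≤ α₁ * (2 * N * D) := by
    rw [abs_mul, abs_of_pos hα₁, abs_mul]
    apply mul_le_mul_of_nonneg_left _ hα₁.le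
    calc |z.1 + z'.1| * |z.1 - z'.1| ≤ (2*N) * |z.1 - z'.1| :=
        mul_le_mul_of_nonneg_right hsum1 (abs_nonneg _)
    _ ≤ (2*N) * D := mul_le_mul_of_nonneg_left hd1 (by linarith)
  have hb3 : |(z.2 + z'.2) * (z.2 - z'.2)| ≤ 2 * N * D := by
    rw [abs_mul]
    calc |z.2 + z'.2| * |z.2 - z'.2| ≤ (2*N) * |z.2 - z'.2| :=
        mul_le_mul_of_nonneg_right hsum2 (abs_nonneg _)
    _ ≤ 2 * N * D := mul_le_mul_of_nonneg_left hd2 (by linarith)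
  have hb4 : |a₂ * (z.2 - z'.2)| ≤ |a₂| * D := by
    rw [abs_mul]; exact mul_le_mul_of_nonneg_left hd2 (abs_nonneg _)
  have hb5 : |α₂ * (z.1 * (z.2 - z'.2) + z'.2 * (z.1 - z'.1))| ≤ α₂ * (N * D + N * D) := by
    rw [abs_mul, abs_of_pos hα₂]
    apply mul_le_mul_of_nonneg_left _ hα₂.le
    calc |z.1 * (z.2 - z'.2) + z'.2 * (z.1 - z'.1)|
        ≤ |z.1 * (z.2 - z'.2)| + |z'.2 * (z.1 - z'.1)| := abs_add_le _ _
    _ ≤ N * D + N * D := by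
        apply add_le_add
        · rw [abs_mul]
          calc |z.1| * |z.2 - z'.2| ≤ N * |z.2 - z'.2| :=
              mul_le_mul_of_nonneg_right h1 (abs_nonneg _)
          _ ≤ N * D := mul_le_mul_of_nonneg_left hd2 hN0
        · rw [abs_mul]
          calc |z'.2| * |z.1 - z'.1| ≤ N * |z.1 - z'.1| :=
              mul_le_mul_of_nonneg_right h2' (abs_nonneg _)
          _ ≤ N * D := mul_le_mul_of_nonneg_left hd1 hN0
  apply max_le
  · rw [e1, Real.norm_eq_abs]
    have key := abs3 hb1 hb2 hb3
    rw [hLB]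
    have expand : (|a₁| + |a₂| + 2 * (1 + α₁ + α₂) * N) * D
        = |a₁| * D + α₁ * (2 * N * D) + 2 * N * D + (|a₂| * D + 2 * (α₂ * (N * D))) := by ring
    have g1 : (0:ℝ) ≤ |a₂| * D := mul_nonneg (abs_nonneg a₂) hD0
    have g2 : (0:ℝ) ≤ α₂ * (N * D) := mul_nonneg hα₂.le (mul_nonneg hN0 hD0)
    linarith
  · rw [e2, Real.norm_eq_abs]
    have key := abs3 hb4 hb5 (by simp : |(0:ℝ)| ≤ 0)
    rw [hLB]
    have expand : (|a₁| + |a₂| + 2 * (1 + α₁ + α₂) * N) * D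
        = |a₂| * D + α₂ * (N * D + N * D) + 0 + (|a₁| * D + 2 * (N * D) + 2 * (α₁ * (N * D))) := by
      ring
    have g1 : (0:ℝ) ≤ |a₁| * D := mul_nonneg (abs_nonneg a₁) hD0
    have g2 : (0:ℝ) ≤ α₁ * (N * D) := mul_nonneg hα₁.le (mul_nonneg hN0 hD0)
    have g3 : (0:ℝ) ≤ N * D := mul_nonneg hN0 hD0
    linarith

end Bounds

section Step

variable {a₁ a₂ α₁ α₂ κ₂ : ℝ}

lemma step_lemma (hα₁ : 0 < α₁) (hα₂ : 0 < α₂) (hκ₂ : 0 < κ₂) (κ₁ : ℝ)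
    (q : ℝ × ℝ) (v τ : ℝ) (hτ0 : 0 ≤ τ)
    (hτ : (CB a₁ a₂ α₁ α₂ ‖q‖ + κ₂ * |v|) * τ ≤ 1/2) :
    ∃ w' : ℝ × ℝ, Reachable a₁ a₂ α₁ α₂ κ₁ κ₂ q w' ∧
      ‖w' - q‖ ≤ (CB a₁ a₂ α₁ α₂ ‖q‖ + κ₂ * |v|) * τ ∧
      ‖w' - (q + τ • Fv a₁ a₂ α₁ α₂ κ₂ v q)‖ ≤
        LB a₁ a₂ α₁ α₂ ‖q‖ * ((CB a₁ a₂ α₁ α₂ ‖q‖ + κ₂ * |v|) * τ) * τ := by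
  set C : ℝ := CB a₁ a₂ α₁ α₂ ‖q‖ + κ₂ * |v| with hCdef
  set L : ℝ := LB a₁ a₂ α₁ α₂ ‖q‖ with hLdef
  have hqn : (0:ℝ) ≤ ‖q‖ := norm_nonneg q
  have hC1 : 1 ≤ C := by
    have := CB_one_le (a₁ := a₁) (a₂ := a₂) hα₁ hα₂ hqn
    have : (0:ℝ) ≤ κ₂ * |v| := by positivity
    simp only [hCdef]
    linarith [CB_one_le (a₁ := a₁) (a₂ := a₂) hα₁ hα₂ hqn]
  have hC0 : 0 < C := by linarith
  have hL0 : 0 ≤ L := LB_nonneg hα₁ hα₂ hqn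
  set b : ℝ := τ + 1 / (2 * C) with hbdef
  have hbpos : 0 < b := by
    rw [hbdef]
    have : 0 < 1 / (2 * C) := by positivity
    linarith
  have hτb : τ < b := by
    rw [hbdef]
    have : 0 < 1 / (2 * C) := by positivity
    linarith
  have hCb : C * b ≤ 1 := by
    have h2 : C * (1 / (2 * C)) = 1 / 2 := by
      field_simp
      try ring
    have : C * b = C * τ + C * (1 / (2 * C)) := by ring
    rw [this, h2]
    linarith
  have h0mem : (0:ℝ) ∈ Icc (-b) b := ⟨by linarith, hbpos.le⟩
  -- the Picard–Lindelöf data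
  have hpl : IsPicardLindelof (fun _ z => Fv a₁ a₂ α₁ α₂ κ₂ v z) (⟨0, h0mem⟩ : Icc (-b) b) q
      1 0 C.toNNReal L.toNNReal := by
    apply IsPicardLindelof.of_time_independent
    · intro z hz
      simp only [NNReal.coe_one] at hz
      rw [Real.coe_toNNReal _ hC0.le]
      exact normFv_le hα₁ hα₂ hκ₂ hz v
    · rw [lipschitzOnWith_iff_norm_sub_le]
      intro z hz z' hz'
      simp only [NNReal.coe_one] at hz hz'
      rw [Real.coe_toNNReal _ hL0]
      exact Fv_lip hα₁ hα₂ hκ₂ hz hz' v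
    · simp only [Real.coe_toNNReal _ hC0.le, tsub_zero, NNReal.coe_one, NNReal.coe_zero, sub_zero, zero_sub,
        neg_neg, max_self]
      linarith [hCb]
  obtain ⟨f, hf⟩ := ODE.FunSpace.exists_isFixedPt_next hpl (mem_closedBall_self le_rfl)
  have hder' : ∀ t ∈ Icc (-b) b,
      HasDerivWithinAt f.compProj (Fv a₁ a₂ α₁ α₂ κ₂ v (f.compProj t)) (Icc (-b) b) t := by
    intro t ht
    apply ODE.hasDerivWithinAt_picard_Icc (⟨0, h0mem⟩ : Icc (-b) b).2 hpl.continuousOn_uncurry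
      f.continuous_compProj.continuousOn (fun _ _ ↦ f.compProj_mem_closedBall hpl.mul_max_le)
      q ht |>.congr_of_mem _ ht
    intro t' ht'
    nth_rw 1 [← hf]
    rw [ODE.FunSpace.compProj_of_mem ht', ODE.FunSpace.next_apply]
  set γ : ℝ → ℝ × ℝ := f.compProj with hγdef
  have hγ0 : γ 0 = q := by
    have h2 := ODE.FunSpace.next_apply₀ hpl (mem_closedBall_self le_rfl) f
    rw [hf.eq] at h2
    exact (ODE.FunSpace.compProj_val (α := f) (t := (⟨0, h0mem⟩ : Icc (-b) b))).trans h2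
  have hmem : ∀ t, γ t ∈ closedBall q 1 := by
    intro t
    have := f.compProj_mem_closedBall hpl.mul_max_le (t := t)
    simpa only [NNReal.coe_one] using this
  have hder : ∀ t ∈ Icc (-b) b, HasDerivWithinAt γ (Fv a₁ a₂ α₁ α₂ κ₂ v (γ t)) (Icc (-b) b) t :=
    hder'
  have hderAt : ∀ s ∈ Icc 0 τ, HasDerivAt γ (Fv a₁ a₂ α₁ α₂ κ₂ v (γ s)) s := by
    intro s hs
    have hs' : s ∈ Icc (-b) b := ⟨by linarith [hs.1], by linarith [hs.2]⟩
    exact (hder s hs').hasDerivAt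
      (Icc_mem_nhds (by linarith [hs.1]) (by linarith [hs.2]))
  refine ⟨γ τ, ?_, ?_, ?_⟩
  · refine Reachable.step 0 v τ γ hτ0 ?_ hγ0 rfl (Reachable.refl q)
    intro s hs
    have h := hderAt s hs
    simpa only [Fv, mul_zero, add_zero] using h
  · have key := norm_image_sub_le_of_norm_deriv_le_segment'
      (f := γ) (f' := fun s => Fv a₁ a₂ α₁ α₂ κ₂ v (γ s)) (C := C) (a := 0) (b := τ)
      (fun x hx => (hderAt x hx).hasDerivWithinAt)
      (fun x _ => normFv_le hα₁ hα₂ hκ₂ (hmem x) v)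
      τ (right_mem_Icc.2 hτ0)
    rw [hγ0, sub_zero] at key
    exact key
  · set g : ℝ → ℝ × ℝ := fun t => γ t - t • Fv a₁ a₂ α₁ α₂ κ₂ v q with hgdef
    have hgder : ∀ x ∈ Icc 0 τ, HasDerivAt g
        (Fv a₁ a₂ α₁ α₂ κ₂ v (γ x) - Fv a₁ a₂ α₁ α₂ κ₂ v q) x := by
      intro x hx
      have h1 := hderAt x hx
      have h2 : HasDerivAt (fun t : ℝ => t • Fv a₁ a₂ α₁ α₂ κ₂ v q)
          ((1:ℝ) • Fv a₁ a₂ α₁ α₂ κ₂ v q) x := (hasDerivAt_id x).smul_const _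
      rw [one_smul] at h2
      exact h1.sub h2
    have hgbound : ∀ x ∈ Icc 0 τ,
        ‖Fv a₁ a₂ α₁ α₂ κ₂ v (γ x) - Fv a₁ a₂ α₁ α₂ κ₂ v q‖ ≤ L * (C * τ) := by
      intro x hx
      have h1 : ‖Fv a₁ a₂ α₁ α₂ κ₂ v (γ x) - Fv a₁ a₂ α₁ α₂ κ₂ v q‖
          ≤ L * ‖γ x - q‖ := Fv_lip hα₁ hα₂ hκ₂ (hmem x) (mem_closedBall_self zero_le_one) v
      have h2 := norm_image_sub_le_of_norm_deriv_le_segment'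
        (f := γ) (f' := fun s => Fv a₁ a₂ α₁ α₂ κ₂ v (γ s)) (C := C) (a := 0) (b := τ)
        (fun y hy => (hderAt y hy).hasDerivWithinAt)
        (fun y _ => normFv_le hα₁ hα₂ hκ₂ (hmem y) v)
        x hx
      rw [hγ0, sub_zero] at h2
      have h3 : ‖γ x - q‖ ≤ C * τ := by
        refine h2.trans ?_
        exact mul_le_mul_of_nonneg_left hx.2 hC0.le
      calc ‖Fv a₁ a₂ α₁ α₂ κ₂ v (γ x) - Fv a₁ a₂ α₁ α₂ κ₂ v q‖ ≤ L * ‖γ x - q‖ := h1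
      _ ≤ L * (C * τ) := mul_le_mul_of_nonneg_left h3 hL0
    have key := norm_image_sub_le_of_norm_deriv_le_segment'
      (f := g) (f' := fun x => Fv a₁ a₂ α₁ α₂ κ₂ v (γ x) - Fv a₁ a₂ α₁ α₂ κ₂ v q)
      (C := L * (C * τ)) (a := 0) (b := τ)
      (fun x hx => (hgder x hx).hasDerivWithinAt)
      (fun x hx => hgbound x (Ico_subset_Icc_self hx)) τ (right_mem_Icc.2 hτ0)
    have hg0 : g 0 = q := by simp [hgdef, hγ0]
    rw [hg0] at key
    have e : g τ - q = γ τ - (q + τ • Fv a₁ a₂ α₁ α₂ κ₂ v q) := by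
      simp only [hgdef]
      abel
    rw [e, sub_zero] at key
    calc ‖γ τ - (q + τ • Fv a₁ a₂ α₁ α₂ κ₂ v q)‖ ≤ L * (C * τ) * τ := key
    _ = L * (C * τ) * τ := rfl
end Step

section Vertical

variable {a₁ a₂ α₁ α₂ κ₂ : ℝ}

lemma stepV (hα₁ : 0 < α₁) (hα₂ : 0 < α₂) (hκ₂ : 0 < κ₂) (κ₁ : ℝ)
    (p : ℝ × ℝ) (ytgt ε : ℝ) (hy : |ytgt - p.2| ≤ 1/4) (hε : 0 < ε) :
    ∃ q : ℝ × ℝ, Reachable a₁ a₂ α₁ α₂ κ₁ κ₂ p q ∧ |q.1 - p.1| ≤ ε ∧ |q.2 - ytgt| ≤ ε := by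
  have hqn : (0:ℝ) ≤ ‖p‖ := norm_nonneg p
  set C₀ : ℝ := CB a₁ a₂ α₁ α₂ ‖p‖ with hC₀def
  set L₀ : ℝ := LB a₁ a₂ α₁ α₂ ‖p‖ with hL₀def
  have hC₀1 : 1 ≤ C₀ := CB_one_le hα₁ hα₂ hqn
  have hL₀ : 0 ≤ L₀ := LB_nonneg hα₁ hα₂ hqn
  set τ : ℝ := min (1/(4*C₀)) (ε/(C₀+L₀+1)) with hτdef
  have hτpos : 0 < τ := by
    rw [hτdef]
    apply lt_min
    · positivity
    · positivity
  have hτ1 : τ ≤ 1/(4*C₀) := min_le_left _ _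
  have hτ2 : τ ≤ ε/(C₀+L₀+1) := min_le_right _ _
  set η : ℝ := ytgt - p.2 with hηdef
  set v : ℝ := η/(κ₂*τ) with hvdef
  have hκτ : κ₂ * τ ≠ 0 := by positivity
  have hkv : κ₂ * |v| = |η|/τ := by
    rw [hvdef, abs_div, abs_mul, abs_of_pos hκ₂, abs_of_pos hτpos]
    field_simp
  have hCτ : (C₀ + κ₂*|v|) * τ ≤ 1/2 := by
    rw [hkv]
    have h1 : (C₀ + |η|/τ) * τ = C₀ * τ + |η| := by field_simp
    rw [h1]
    have h2 : C₀ * τ ≤ C₀ * (1/(4*C₀)) := mul_le_mul_of_nonneg_left hτ1 (by linarith)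
    have h3 : C₀ * (1/(4*C₀)) = 1/4 := by field_simp
    linarith
  clear_value τ
  obtain ⟨w', hreach, hb1, hb2⟩ := step_lemma hα₁ hα₂ hκ₂ κ₁ p v τ hτpos.le hCτ
  -- bounds on the frozen field at p
  have hFp0 : ‖Fv a₁ a₂ α₁ α₂ κ₂ 0 p‖ ≤ C₀ := by
    have h := @normFv_le a₁ a₂ α₁ α₂ κ₂ hα₁ hα₂ hκ₂ p p (mem_closedBall_self zero_le_one) 0
    simpa using h
  have hP : |a₁ * p.1 - α₁ * p.1 ^ 2 + p.2 ^ 2| ≤ C₀ := by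
    have h := (norm_fst_le (Fv a₁ a₂ α₁ α₂ κ₂ 0 p)).trans hFp0
    simpa [Fv] using h
  have hQ : |a₂ * p.2 - α₂ * p.1 * p.2| ≤ C₀ := by
    have h := (norm_snd_le (Fv a₁ a₂ α₁ α₂ κ₂ 0 p)).trans hFp0
    simpa [Fv] using h
  have hkv2 : τ * (κ₂ * v) = η := by
    rw [hvdef]
    field_simp
    try ring
  clear_value v η
  -- error bound
  set e : ℝ := L₀ * ((C₀ + κ₂*|v|) * τ) * τ with hedef
  have he : e ≤ L₀ * τ := by
    rw [hedef]
    have h0 : (0:ℝ) ≤ (C₀ + κ₂*|v|) * τ := by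
      have : (0:ℝ) ≤ κ₂ * |v| := by positivity
      apply mul_nonneg (by linarith) hτpos.le
    calc L₀ * ((C₀ + κ₂*|v|) * τ) * τ ≤ L₀ * (1/2) * τ := by
          apply mul_le_mul_of_nonneg_right _ hτpos.le
          exact mul_le_mul_of_nonneg_left hCτ hL₀
    _ ≤ L₀ * 1 * τ := by
          apply mul_le_mul_of_nonneg_right _ hτpos.le
          apply mul_le_mul_of_nonneg_left (by norm_num) hL₀
    _ = L₀ * τ := by ring
  have hτε : τ * (C₀ + L₀ + 1) ≤ ε := by
    have := mul_le_mul_of_nonneg_right hτ2 (by linarith : (0:ℝ) ≤ C₀ + L₀ + 1)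
    calc τ * (C₀ + L₀ + 1) ≤ ε/(C₀+L₀+1) * (C₀+L₀+1) := this
    _ = ε := by field_simp
  -- component estimates
  have hfst : |w'.1 - (p.1 + τ * (Fv a₁ a₂ α₁ α₂ κ₂ v p).1)| ≤ e := by
    have h := (norm_fst_le (w' - (p + τ • Fv a₁ a₂ α₁ α₂ κ₂ v p))).trans hb2
    simpa [Prod.smul_fst, smul_eq_mul] using h
  have hsnd : |w'.2 - (p.2 + τ * (Fv a₁ a₂ α₁ α₂ κ₂ v p).2)| ≤ e := by
    have h := (norm_snd_le (w' - (p + τ • Fv a₁ a₂ α₁ α₂ κ₂ v p))).trans hb2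
    simpa [Prod.smul_snd, smul_eq_mul] using h
  refine ⟨w', hreach, ?_, ?_⟩
  · have hcomp : (Fv a₁ a₂ α₁ α₂ κ₂ v p).1 = a₁ * p.1 - α₁ * p.1 ^ 2 + p.2 ^ 2 := rfl
    rw [hcomp] at hfst
    have h1 : |τ * (a₁ * p.1 - α₁ * p.1 ^ 2 + p.2 ^ 2)| ≤ τ * C₀ := by
      rw [abs_mul, abs_of_pos hτpos]
      exact mul_le_mul_of_nonneg_left hP hτpos.le
    calc |w'.1 - p.1| = |(w'.1 - (p.1 + τ * (a₁ * p.1 - α₁ * p.1 ^ 2 + p.2 ^ 2)))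
        + τ * (a₁ * p.1 - α₁ * p.1 ^ 2 + p.2 ^ 2)| := by congr 1; ring
    _ ≤ |w'.1 - (p.1 + τ * (a₁ * p.1 - α₁ * p.1 ^ 2 + p.2 ^ 2))|
        + |τ * (a₁ * p.1 - α₁ * p.1 ^ 2 + p.2 ^ 2)| := abs_add_le _ _
    _ ≤ e + τ * C₀ := add_le_add hfst h1
    _ ≤ L₀ * τ + τ * C₀ := by linarith
    _ = τ * (C₀ + L₀) := by ring
    _ ≤ ε := by
        have h2 : τ * (C₀ + L₀) ≤ τ * (C₀ + L₀ + 1) :=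
          mul_le_mul_of_nonneg_left (by linarith) hτpos.le
        linarith
  · have hcomp : (Fv a₁ a₂ α₁ α₂ κ₂ v p).2 = a₂ * p.2 - α₂ * p.1 * p.2 + κ₂ * v := rfl
    rw [hcomp] at hsnd
    have hexp : p.2 + τ * (a₂ * p.2 - α₂ * p.1 * p.2 + κ₂ * v)
        = ytgt + τ * (a₂ * p.2 - α₂ * p.1 * p.2) := by
      have : τ * (a₂ * p.2 - α₂ * p.1 * p.2 + κ₂ * v)
          = τ * (a₂ * p.2 - α₂ * p.1 * p.2) + τ * (κ₂ * v) := by ring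
      rw [this, hkv2, hηdef]
      ring
    rw [hexp] at hsnd
    have h1 : |τ * (a₂ * p.2 - α₂ * p.1 * p.2)| ≤ τ * C₀ := by
      rw [abs_mul, abs_of_pos hτpos]
      exact mul_le_mul_of_nonneg_left hQ hτpos.le
    calc |w'.2 - ytgt| = |(w'.2 - (ytgt + τ * (a₂ * p.2 - α₂ * p.1 * p.2)))
        + τ * (a₂ * p.2 - α₂ * p.1 * p.2)| := by congr 1; ring
    _ ≤ |w'.2 - (ytgt + τ * (a₂ * p.2 - α₂ * p.1 * p.2))|
        + |τ * (a₂ * p.2 - α₂ * p.1 * p.2)| := abs_add_le _ _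
    _ ≤ e + τ * C₀ := add_le_add hsnd h1
    _ ≤ L₀ * τ + τ * C₀ := by linarith
    _ = τ * (C₀ + L₀) := by ring
    _ ≤ ε := by
        have h2 : τ * (C₀ + L₀) ≤ τ * (C₀ + L₀ + 1) :=
          mul_le_mul_of_nonneg_left (by linarith) hτpos.le
        linarith

end Vertical



lemma moveV (hα₁ : 0 < α₁) (hα₂ : 0 < α₂) (hκ₂ : 0 < κ₂) (κ₁ : ℝ) :
    ∀ n : ℕ, ∀ (p : ℝ × ℝ) (ytgt ε : ℝ), 0 < ε →
    |ytgt - p.2| ≤ 3/16 + n/16 →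
    ∃ q : ℝ × ℝ, Reachable a₁ a₂ α₁ α₂ κ₁ κ₂ p q ∧ |q.1 - p.1| ≤ ε ∧ |q.2 - ytgt| ≤ ε := by
  intro n
  induction n with
  | zero =>
    intro p ytgt ε hε hd
    apply stepV hα₁ hα₂ hκ₂ κ₁ p ytgt ε _ hε
    push_cast at hd
    linarith
  | succ n ih =>
    intro p ytgt ε hε hd
    by_cases h : |ytgt - p.2| ≤ 3/16 + n/16
    · exact ih p ytgt ε hε h
    · push_neg at h
      push_cast at hd
      have hn0 : (0:ℝ) ≤ (n:ℝ)/16 := by positivity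
      have hd0 : 0 < |ytgt - p.2| := by linarith
      have hsgn : abs ((ytgt - p.2)/abs (ytgt - p.2)) = 1 := by
        rw [abs_div, abs_abs, div_self hd0.ne']
      have hsgnd : (ytgt - p.2)/abs (ytgt - p.2) * abs (ytgt - p.2) = ytgt - p.2 :=
        div_mul_cancel₀ _ hd0.ne'
      have hcd : ((n:ℝ)+2)/16 ≤ abs (ytgt - p.2) := by linarith
      have hc0 : (0:ℝ) ≤ ((n:ℝ)+2)/16 := by positivity
      set y₁ : ℝ := ytgt - (ytgt - p.2)/abs (ytgt - p.2) * (((n:ℝ)+2)/16) with hy₁def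
      have e1 : y₁ - p.2 = (ytgt - p.2)/abs (ytgt - p.2) * (abs (ytgt - p.2) - ((n:ℝ)+2)/16) := by
        rw [hy₁def, mul_sub, hsgnd]
        ring
      have hy₁p : |y₁ - p.2| ≤ 1/4 := by
        rw [e1, abs_mul, hsgn, one_mul, abs_of_nonneg (by linarith)]
        linarith
      have hδpos : 0 < min (1/16 : ℝ) (ε/2) := lt_min (by norm_num) (half_pos hε)
      obtain ⟨q₁, hr1, hx1, hy1⟩ := stepV hα₁ hα₂ hκ₂ κ₁ p y₁ _ hy₁p hδpos
      have hyy : |ytgt - y₁| = ((n:ℝ)+2)/16 := by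
        rw [hy₁def]
        have : ytgt - (ytgt - (ytgt - p.2)/abs (ytgt - p.2) * (((n:ℝ)+2)/16))
            = (ytgt - p.2)/abs (ytgt - p.2) * (((n:ℝ)+2)/16) := by ring
        rw [this, abs_mul, hsgn, one_mul, abs_of_nonneg hc0]
      have hδ1 : min (1/16 : ℝ) (ε/2) ≤ 1/16 := min_le_left _ _
      have hδ2 : min (1/16 : ℝ) (ε/2) ≤ ε/2 := min_le_right _ _
      have hnew : |ytgt - q₁.2| ≤ 3/16 + n/16 := by
        have htri : |ytgt - q₁.2| ≤ |ytgt - y₁| + |y₁ - q₁.2| := abs_sub_le _ _ _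
        have h2 : |y₁ - q₁.2| = |q₁.2 - y₁| := abs_sub_comm _ _
        rw [hyy, h2] at htri
        push_cast
        linarith
      obtain ⟨q, hr2, hx2, hy2⟩ := ih q₁ ytgt (ε/2) (half_pos hε) hnew
      refine ⟨q, Reachable.trans' hr1 hr2, ?_, by linarith⟩
      have htri : |q.1 - p.1| ≤ |q.1 - q₁.1| + |q₁.1 - p.1| := abs_sub_le _ _ _
      have h2 : |q.1 - q₁.1| = |q₁.1 - q.1| := abs_sub_comm _ _
      linarith [abs_sub_comm q.1 q₁.1]

lemma moveV' (hα₁ : 0 < α₁) (hα₂ : 0 < α₂) (hκ₂ : 0 < κ₂) (κ₁ : ℝ)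
    (p : ℝ × ℝ) (ytgt ε : ℝ) (hε : 0 < ε) :
    ∃ q : ℝ × ℝ, Reachable a₁ a₂ α₁ α₂ κ₁ κ₂ p q ∧ |q.1 - p.1| ≤ ε ∧ |q.2 - ytgt| ≤ ε := by
  obtain ⟨n, hn⟩ := exists_nat_ge (|ytgt - p.2| * 16)
  apply moveV hα₁ hα₂ hκ₂ κ₁ n p ytgt ε hε
  have : |ytgt - p.2| ≤ (n:ℝ)/16 := by linarith
  linarith

section March

variable {a₁ a₂ α₁ α₂ κ₂ : ℝ}

lemma march (hα₁ : 0 < α₁) (hα₂ : 0 < α₂) (hκ₂ : 0 < κ₂) (κ₁ : ℝ)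
    (m r Y s δ σ G xlow w₀ : ℝ)
    (hr : 0 ≤ r) (hδ : 0 < δ) (hσ : 0 < σ) (hw₀ : 0 < w₀)
    (hs : s = 1 ∨ s = -1)
    (hP : ∀ z : ℝ × ℝ, |z.1 - m| ≤ r → |z.2 - Y| ≤ w₀ →
      δ ≤ s * (a₁ * z.1 - α₁ * z.1 ^ 2 + z.2 ^ 2))
    (hbox : ∀ x : ℝ, xlow ≤ s * x → s * x ≤ G + σ → |x - m| ≤ r) :
    ∃ μ : ℝ, 0 < μ ∧ ∀ n : ℕ, ∀ p : ℝ × ℝ,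
      |p.1 - m| ≤ r → |p.2 - Y| ≤ w₀/2 → xlow ≤ s * p.1 → s * p.1 ≤ G + σ →
      G ≤ s * p.1 + n * μ →
      ∃ q : ℝ × ℝ, Reachable a₁ a₂ α₁ α₂ κ₁ κ₂ p q ∧
        G ≤ s * q.1 ∧ s * q.1 ≤ G + σ ∧ |q.2 - Y| ≤ w₀/2 := by
  have habs : ∀ x : ℝ, |s * x| = |x| := by
    intro x; rcases hs with h | h <;> simp [h, abs_mul]
  set R : ℝ := |m| + r + |Y| + w₀ + 1 with hRdef
  have hR0 : (0:ℝ) ≤ R := by positivity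
  set K : ℝ := 2 * CB a₁ a₂ α₁ α₂ R with hKdef
  have hCB1 : 1 ≤ CB a₁ a₂ α₁ α₂ R := CB_one_le hα₁ hα₂ hR0
  have hK2 : 2 ≤ K := by rw [hKdef]; linarith
  have hK0 : 0 < K := by linarith
  set L : ℝ := LB a₁ a₂ α₁ α₂ R with hLdef
  have hL0 : 0 ≤ L := LB_nonneg hα₁ hα₂ hR0
  set τ : ℝ := min (1/(2*K)) (min (σ/(2*K)) (δ/(4*L*K+1))) with hτdef
  have h4LK : (0:ℝ) < 4*L*K+1 := by positivity
  have hτpos : 0 < τ := by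
    rw [hτdef]
    apply lt_min (by positivity) (lt_min (by positivity) (by positivity))
  have hτ1 : τ ≤ 1/(2*K) := min_le_left _ _
  have hτ2 : τ ≤ σ/(2*K) := le_trans (min_le_right _ _) (min_le_left _ _)
  have hτ3 : τ ≤ δ/(4*L*K+1) := le_trans (min_le_right _ _) (min_le_right _ _)
  clear_value τ
  have hKτ : K * τ ≤ 1/2 := by
    have := mul_le_mul_of_nonneg_left hτ1 hK0.le
    have h2 : K * (1/(2*K)) = 1/2 := by
      field_simp
    linarith
  have hKτσ : K * τ ≤ σ/2 := by
    have := mul_le_mul_of_nonneg_left hτ2 hK0.le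
    have h2 : K * (σ/(2*K)) = σ/2 := by field_simp
    linarith
  have hLKτ : L*K*τ ≤ δ/4 := by
    have h5 : τ * (4*L*K+1) ≤ δ := (le_div_iff₀ h4LK).1 hτ3
    have hexp : τ * (4*L*K+1) = 4*(L*K*τ) + τ := by ring
    linarith [hτpos.le]
  clear_value R K L
  set μ : ℝ := δ*τ/2 with hμdef
  have hμpos : 0 < μ := by rw [hμdef]; positivity
  clear_value μ
  refine ⟨μ, hμpos, ?_⟩
  intro n
  induction n with
  | zero =>
    intro p hpm hpy hplow hpcap hcount
    simp only [Nat.cast_zero, zero_mul, add_zero] at hcount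
    exact ⟨p, Reachable.refl p, hcount, hpcap, hpy⟩
  | succ n ih =>
    intro p hpm hpy hplow hpcap hcount
    by_cases hstop : G ≤ s * p.1
    · exact ⟨p, Reachable.refl p, hstop, hpcap, hpy⟩
    · push_neg at hstop
      -- norm bound at p
      have hp1 : |p.1| ≤ |m| + r := by
        have := abs_sub_le p.1 m 0
        simp only [sub_zero] at this
        have h2 : |p.1 - m| + |m| ≤ r + |m| := add_le_add_left hpm _
        linarith [abs_sub_le p.1 m 0]
      have hp2 : |p.2| ≤ |Y| + w₀ := by
        have := abs_sub_le p.2 Y 0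
        simp only [sub_zero] at this
        have h2 : |p.2 - Y| ≤ w₀ := le_trans hpy (by linarith)
        linarith
      have hYn : (0:ℝ) ≤ |Y| := abs_nonneg Y
      have hmn : (0:ℝ) ≤ |m| := abs_nonneg m
      have hpn : ‖p‖ ≤ R := by
        rw [Prod.norm_def]
        apply max_le
        · rw [Real.norm_eq_abs, hRdef]; linarith
        · rw [Real.norm_eq_abs, hRdef]; linarith
      have hqn0 : (0:ℝ) ≤ ‖p‖ := norm_nonneg p
      have hCBp : CB a₁ a₂ α₁ α₂ ‖p‖ ≤ CB a₁ a₂ α₁ α₂ R := CB_mono hα₁ hα₂ hqn0 hpn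
      have hLBp : LB a₁ a₂ α₁ α₂ ‖p‖ ≤ L := by
        rw [hLdef]; exact LB_mono hα₁ hα₂ hqn0 hpn
      have hFp0 : ‖Fv a₁ a₂ α₁ α₂ κ₂ 0 p‖ ≤ CB a₁ a₂ α₁ α₂ ‖p‖ := by
        have h := @normFv_le a₁ a₂ α₁ α₂ κ₂ hα₁ hα₂ hκ₂ p p (mem_closedBall_self zero_le_one) 0
        simpa using h
      have hPb : |a₁ * p.1 - α₁ * p.1 ^ 2 + p.2 ^ 2| ≤ CB a₁ a₂ α₁ α₂ ‖p‖ := by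
        have h := (norm_fst_le (Fv a₁ a₂ α₁ α₂ κ₂ 0 p)).trans hFp0
        simpa [Fv] using h
      have hQb : |a₂ * p.2 - α₂ * p.1 * p.2| ≤ CB a₁ a₂ α₁ α₂ ‖p‖ := by
        have h := (norm_snd_le (Fv a₁ a₂ α₁ α₂ κ₂ 0 p)).trans hFp0
        simpa [Fv] using h
      set v : ℝ := -(a₂ * p.2 - α₂ * p.1 * p.2)/κ₂ with hvdef
      have hκv : κ₂ * |v| = |a₂ * p.2 - α₂ * p.1 * p.2| := by
        rw [hvdef, abs_div, abs_neg, abs_of_pos hκ₂]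
        field_simp
      have hCp : CB a₁ a₂ α₁ α₂ ‖p‖ + κ₂ * |v| ≤ K := by
        rw [hκv, hKdef]
        linarith [hQb.trans hCBp]
      have hCτ' : (CB a₁ a₂ α₁ α₂ ‖p‖ + κ₂ * |v|) * τ ≤ 1/2 :=
        le_trans (mul_le_mul_of_nonneg_right hCp hτpos.le) hKτ
      obtain ⟨w', hw'reach, _, hb2⟩ := step_lemma hα₁ hα₂ hκ₂ κ₁ p v τ hτpos.le hCτ'
      have hCpτ0 : (0:ℝ) ≤ (CB a₁ a₂ α₁ α₂ ‖p‖ + κ₂ * |v|) * τ := by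
        have h1 : (0:ℝ) ≤ κ₂ * |v| := by positivity
        have h2 : (0:ℝ) ≤ CB a₁ a₂ α₁ α₂ ‖p‖ := by
          linarith [CB_one_le (a₁ := a₁) (a₂ := a₂) hα₁ hα₂ hqn0]
        positivity
      have he' : LB a₁ a₂ α₁ α₂ ‖p‖ * ((CB a₁ a₂ α₁ α₂ ‖p‖ + κ₂ * |v|) * τ) * τ
          ≤ L * (K * τ) * τ := by
        apply mul_le_mul_of_nonneg_right _ hτpos.le
        apply mul_le_mul hLBp (mul_le_mul_of_nonneg_right hCp hτpos.le) hCpτ0 hL0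
      have hb2' : ‖w' - (p + τ • Fv a₁ a₂ α₁ α₂ κ₂ v p)‖ ≤ L * (K * τ) * τ :=
        le_trans hb2 he'
      have he : L * (K * τ) * τ ≤ δ*τ/4 := by
        have h1 : L * (K * τ) * τ = (L*K*τ) * τ := by ring
        rw [h1]
        have := mul_le_mul_of_nonneg_right hLKτ hτpos.le
        linarith
      -- components of the frozen step
      have hFv2 : (Fv a₁ a₂ α₁ α₂ κ₂ v p).2 = 0 := by
        show a₂ * p.2 - α₂ * p.1 * p.2 + κ₂ * v = 0
        rw [hvdef]
        field_simp
        ring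
      have hx' : |w'.1 - (p.1 + τ * (a₁ * p.1 - α₁ * p.1 ^ 2 + p.2 ^ 2))| ≤ δ*τ/4 := by
        have h := (norm_fst_le (w' - (p + τ • Fv a₁ a₂ α₁ α₂ κ₂ v p))).trans (hb2'.trans he)
        simpa [Prod.smul_fst, smul_eq_mul, Fv] using h
      have hy' : |w'.2 - p.2| ≤ δ*τ/4 := by
        have h := (norm_snd_le (w' - (p + τ • Fv a₁ a₂ α₁ α₂ κ₂ v p))).trans (hb2'.trans he)
        have h2 : (p + τ • Fv a₁ a₂ α₁ α₂ κ₂ v p).2 = p.2 := by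
          simp [Prod.smul_snd, smul_eq_mul, hFv2]
        rw [Prod.snd_sub, h2] at h
        simpa using h
      -- recenter y
      set tol : ℝ := min (δ*τ/4) (w₀/2) with htoldef
      have htolpos : 0 < tol := by
        rw [htoldef]; exact lt_min (by positivity) (by positivity)
      obtain ⟨q, hqreach, hqx, hqy⟩ := moveV' hα₁ hα₂ hκ₂ κ₁ w' Y tol htolpos
      have htol1 : tol ≤ δ*τ/4 := min_le_left _ _
      have htol2 : tol ≤ w₀/2 := min_le_right _ _
      -- x displacement of the macro step
      have hqx1 : |q.1 - (p.1 + τ * (a₁ * p.1 - α₁ * p.1 ^ 2 + p.2 ^ 2))| ≤ δ*τ/2 := by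
        have htri := abs_sub_le q.1 w'.1 (p.1 + τ * (a₁ * p.1 - α₁ * p.1 ^ 2 + p.2 ^ 2))
        have h1 : |q.1 - w'.1| ≤ tol := by
          rw [abs_sub_comm] at hqx ⊢
          exact hqx
        linarith
      have hkey : |s*q.1 - (s*p.1 + τ * (s * (a₁ * p.1 - α₁ * p.1 ^ 2 + p.2 ^ 2)))| ≤ δ*τ/2 := by
        have h1 : s*q.1 - (s*p.1 + τ * (s * (a₁ * p.1 - α₁ * p.1 ^ 2 + p.2 ^ 2)))
            = s * (q.1 - (p.1 + τ * (a₁ * p.1 - α₁ * p.1 ^ 2 + p.2 ^ 2))) := by ring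
        rw [h1, habs]
        exact hqx1
      have hPp : δ ≤ s * (a₁ * p.1 - α₁ * p.1 ^ 2 + p.2 ^ 2) :=
        hP p hpm (le_trans hpy (by linarith))
      have hPpu : s * (a₁ * p.1 - α₁ * p.1 ^ 2 + p.2 ^ 2) ≤ K := by
        have h1 : s * (a₁ * p.1 - α₁ * p.1 ^ 2 + p.2 ^ 2)
            ≤ |s * (a₁ * p.1 - α₁ * p.1 ^ 2 + p.2 ^ 2)| := le_abs_self _
        rw [habs] at h1
        have := hPb.trans hCBp
        rw [hKdef]
        linarith
      have hkey' := abs_le.1 hkey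
      have hadv : s*p.1 + μ ≤ s*q.1 := by
        have h1 : τ * δ ≤ τ * (s * (a₁ * p.1 - α₁ * p.1 ^ 2 + p.2 ^ 2)) :=
          mul_le_mul_of_nonneg_left hPp hτpos.le
        have hcomm : τ * δ = δ * τ := mul_comm τ δ
        rw [hμdef]
        linarith [hkey'.1]
      have hcap : s*q.1 ≤ G + σ := by
        have h1 : τ * (s * (a₁ * p.1 - α₁ * p.1 ^ 2 + p.2 ^ 2)) ≤ τ * K :=
          mul_le_mul_of_nonneg_left hPpu hτpos.le
        have h2 : δ * τ ≤ K * τ := by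
          apply mul_le_mul_of_nonneg_right _ hτpos.le
          calc δ ≤ s * (a₁ * p.1 - α₁ * p.1 ^ 2 + p.2 ^ 2) := hPp
          _ ≤ K := hPpu
        have h3 : s*q.1 ≤ s*p.1 + τ*K + δ*τ/2 := by linarith [hkey'.2]
        have h4 : τ * K = K * τ := by ring
        linarith
      -- invariants at q
      have hqylow : |q.2 - Y| ≤ w₀/2 := le_trans hqy htol2
      have hqlow : xlow ≤ s*q.1 := by linarith
      have hqm : |q.1 - m| ≤ r := hbox q.1 hqlow hcap
      have hqcount : G ≤ s*q.1 + n * μ := by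
        push_cast at hcount
        have : (n:ℝ) * μ + μ = ((n:ℝ)+1) * μ := by ring
        linarith
      obtain ⟨q', hq'reach, hg1, hg2, hg3⟩ := ih q hqm hqylow hqlow hcap hqcount
      exact ⟨q', Reachable.trans' (Reachable.trans' hw'reach hqreach) hq'reach, hg1, hg2, hg3⟩

end March

section Main

variable {a₁ a₂ α₁ α₂ κ₂ : ℝ}

lemma c1_pos {α₁ a₁ M₀ X : ℝ} (hα₁ : 0 < α₁) (hM₀0 : 0 ≤ M₀) (hM₀a : a₁ ≤ α₁ * M₀)
    (hX : M₀ + 1 < X) : 0 < α₁*(X-1)^2 - a₁*(X-1) := by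
  have hX2 : (0:ℝ) < X - 1 := by linarith
  have hX1 : (0:ℝ) < X - 1 - M₀ := by linarith
  nlinarith [mul_pos (mul_pos hα₁ hX2) hX1, mul_le_mul_of_nonneg_right hM₀a hX2.le]

lemma f2_nonneg {α₁ a₁ M₀ X z : ℝ} (hα₁ : 0 < α₁) (hM₀0 : 0 ≤ M₀) (hM₀a : a₁ ≤ α₁ * M₀)
    (hX : M₀ + 1 < X) (hz : X ≤ z) : 0 ≤ α₁*(z + (X-1)) - a₁ := by
  nlinarith

set_option maxHeartbeats 1600000 in
lemma reach_dense (hα₁ : 0 < α₁) (hα₂ : 0 < α₂) (hκ₂ : 0 < κ₂) (κ₁ : ℝ)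
    (z₀ w : ℝ × ℝ) (hw : max (a₁/α₁) 0 + 1 < w.1) {ε : ℝ} (hε : 0 < ε) :
    ∃ q : ℝ × ℝ, Reachable a₁ a₂ α₁ α₂ κ₁ κ₂ z₀ q ∧ |q.1 - w.1| ≤ ε ∧ |q.2 - w.2| ≤ ε := by
  set M₀ : ℝ := max (a₁/α₁) 0 with hM₀def
  have hM₀0 : 0 ≤ M₀ := le_max_right _ _
  have hM₀a : a₁ ≤ α₁ * M₀ := by
    have h1 : a₁/α₁ ≤ M₀ := le_max_left _ _
    calc a₁ = α₁ * (a₁/α₁) := by field_simp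
    _ ≤ α₁ * M₀ := mul_le_mul_of_nonneg_left h1 hα₁.le
  set X : ℝ := w.1 with hXdef
  have hX : M₀ + 1 < X := hw
  set ε' : ℝ := min ε (1/2) with hε'def
  have hε'pos : 0 < ε' := lt_min hε (by norm_num)
  have hε'ε : ε' ≤ ε := min_le_left _ _
  have hε'h : ε' ≤ 1/2 := min_le_right _ _
  set GR : ℝ := max (X+1) (z₀.1+1) with hGRdef
  have hGR1 : X+1 ≤ GR := le_max_left _ _
  have hGR2 : z₀.1+1 ≤ GR := le_max_right _ _
  set aa : ℝ := min z₀.1 X - 1 with haadef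
  have haa1 : aa ≤ z₀.1 - 1 := by
    have := min_le_left z₀.1 X; rw [haadef]; linarith
  have haa2 : aa ≤ X - 1 := by
    have := min_le_right z₀.1 X; rw [haadef]; linarith
  set mR : ℝ := (aa + (GR+1))/2 with hmRdef
  set rR : ℝ := ((GR+1) - aa)/2 with hrRdef
  have hrR : 0 ≤ rR := by rw [hrRdef]; linarith
  set B : ℝ := |mR| + rR with hBdef
  have hB0 : 0 ≤ B := by rw [hBdef]; positivity
  have hB : ∀ x : ℝ, |x - mR| ≤ rR → |x| ≤ B := by
    intro x hx
    have := abs_sub_le x mR 0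
    simp only [sub_zero] at this
    rw [hBdef]; linarith
  set S : ℝ := α₁*B^2 + |a₁| * B + 1 with hSdef
  have hS : 0 < S := by
    rw [hSdef]
    have h1 : 0 ≤ α₁*B^2 := by positivity
    have h2 : 0 ≤ |a₁| * B := by positivity
    linarith
  set Ysh : ℝ := Real.sqrt S + 1 with hYshdef
  have hsqrtS : 0 ≤ Real.sqrt S := Real.sqrt_nonneg S
  clear_value M₀ X ε' GR aa mR rR B S
  have hPR : ∀ z : ℝ × ℝ, |z.1 - mR| ≤ rR → |z.2 - Ysh| ≤ 1 →
      (1:ℝ) ≤ 1 * (a₁ * z.1 - α₁ * z.1 ^ 2 + z.2 ^ 2) := by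
    intro z hz1 hz2
    have hz1B := hB z.1 hz1
    have hz2l : Real.sqrt S ≤ z.2 := by
      have h := (abs_le.1 hz2).1
      have h2 := hYshdef.le
      have h3 := hYshdef.ge
      linarith
    have hz2sq : S ≤ z.2^2 := by
      have h1 : Real.sqrt S ^ 2 ≤ z.2 ^ 2 := pow_le_pow_left₀ hsqrtS hz2l 2
      rwa [Real.sq_sqrt hS.le] at h1
    have ha1 : -(|a₁| * B) ≤ a₁ * z.1 := by
      have h1 : |a₁ * z.1| ≤ |a₁| * B := by
        rw [abs_mul]; exact mul_le_mul_of_nonneg_left hz1B (abs_nonneg _)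
      linarith [neg_abs_le (a₁ * z.1)]
    have ha2 : α₁ * z.1^2 ≤ α₁ * B^2 := by
      apply mul_le_mul_of_nonneg_left _ hα₁.le
      exact sq_le_sq' (abs_le.1 hz1B).1 (abs_le.1 hz1B).2
    rw [one_mul]
    linarith [hz2sq, ha1, ha2, hSdef.le, hSdef.ge]
  have hboxR : ∀ x : ℝ, aa ≤ 1 * x → 1 * x ≤ GR + 1/4 → |x - mR| ≤ rR := by
    intro x h1 h2
    rw [one_mul] at h1 h2
    rw [abs_le]
    constructor
    · rw [hmRdef, hrRdef]; linarith
    · rw [hmRdef, hrRdef]; linarith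
  obtain ⟨μR, hμR, hmarchR⟩ := march hα₁ hα₂ hκ₂ κ₁ mR rR Ysh 1 1 (1/4) GR aa 1
    hrR one_pos (by norm_num) one_pos (Or.inl rfl) hPR hboxR
  -- Phase 1 : vertical up
  obtain ⟨p₁, hreach₁, hx₁, hy₁⟩ := moveV' hα₁ hα₂ hκ₂ κ₁ z₀ Ysh (1/4) (by norm_num)
  obtain ⟨n₁, hn₁⟩ := exists_nat_ge ((GR - p₁.1)/μR)
  have hx₁' := abs_le.1 hx₁
  have hcount₁ : GR ≤ 1 * p₁.1 + n₁ * μR := by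
    rw [one_mul]
    have := (div_le_iff₀ hμR).1 hn₁
    linarith
  have hpm₁ : |p₁.1 - mR| ≤ rR := by
    rw [abs_le]
    constructor
    · rw [hmRdef, hrRdef]; linarith
    · rw [hmRdef, hrRdef]; linarith
  have hpy₁ : |p₁.2 - Ysh| ≤ 1/2 := le_trans hy₁ (by norm_num)
  have hplow₁ : aa ≤ 1 * p₁.1 := by rw [one_mul]; linarith
  have hpcap₁ : 1 * p₁.1 ≤ GR + 1/4 := by rw [one_mul]; linarith
  obtain ⟨p₂, hreach₂, hP2a, hP2b, hP2y⟩ :=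
    hmarchR n₁ p₁ hpm₁ hpy₁ hplow₁ hpcap₁ hcount₁
  rw [one_mul] at hP2a hP2b
  -- Left phase constants
  set c₁ : ℝ := α₁*(X-1)^2 - a₁*(X-1) with hc₁def
  have hc₁ : 0 < c₁ := by
    rw [hc₁def]
    exact c1_pos hα₁ hM₀0 hM₀a hX
  set ζ : ℝ := min 1 (Real.sqrt (c₁/2)) with hζdef
  have hζpos : 0 < ζ := lt_min one_pos (Real.sqrt_pos.2 (by linarith))
  have hζ1 : ζ ≤ 1 := min_le_left _ _
  have hζsq : ζ^2 ≤ c₁/2 := by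
    have h1 : ζ ≤ Real.sqrt (c₁/2) := min_le_right _ _
    have h2 : ζ^2 ≤ Real.sqrt (c₁/2)^2 := pow_le_pow_left₀ hζpos.le h1 2
    rwa [Real.sq_sqrt (by linarith : (0:ℝ) ≤ c₁/2)] at h2
  set mL : ℝ := (X + (GR+1))/2 with hmLdef
  set rL : ℝ := ((GR+1) - X)/2 with hrLdef
  have hrL : 0 ≤ rL := by rw [hrLdef]; linarith
  clear_value c₁ ζ mL rL
  have hPL : ∀ z : ℝ × ℝ, |z.1 - mL| ≤ rL → |z.2 - 0| ≤ ζ →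
      c₁/2 ≤ (-1) * (a₁ * z.1 - α₁ * z.1 ^ 2 + z.2 ^ 2) := by
    intro z hz1 hz2
    have hz1l : X ≤ z.1 := by
      have := (abs_le.1 hz1).1
      rw [hmLdef, hrLdef] at this
      linarith
    have hz2sq : z.2^2 ≤ c₁/2 := by
      have h1 : |z.2| ≤ ζ := by simpa using hz2
      have h2 : z.2^2 ≤ ζ^2 := sq_le_sq' (abs_le.1 h1).1 (abs_le.1 h1).2
      linarith
    have hf1 : (1:ℝ) ≤ z.1 - (X-1) := by linarith
    have hf2 : (0:ℝ) ≤ α₁*(z.1 + (X-1)) - a₁ := f2_nonneg hα₁ hM₀0 hM₀a hX hz1l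
    have key : 0 ≤ (z.1 - (X-1)) * (α₁*(z.1 + (X-1)) - a₁) :=
      mul_nonneg (by linarith) hf2
    have hexpand : (z.1 - (X-1)) * (α₁*(z.1 + (X-1)) - a₁)
        = α₁*z.1^2 - a₁*z.1 - (α₁*(X-1)^2 - a₁*(X-1)) := by ring
    rw [hexpand] at key
    rw [neg_one_mul]
    linarith [key, hz2sq, hc₁def.le, hc₁def.ge]
  have hboxL : ∀ x : ℝ, -(GR+1) ≤ (-1) * x → (-1) * x ≤ (-X - ε'/2) + ε'/2 → |x - mL| ≤ rL := by
    intro x h1 h2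
    have h1' : x ≤ GR + 1 := by linarith
    have h2' : X ≤ x := by linarith
    rw [abs_le]
    constructor
    · rw [hmLdef, hrLdef]; linarith
    · rw [hmLdef, hrLdef]; linarith
  obtain ⟨μL, hμL, hmarchL⟩ := march hα₁ hα₂ hκ₂ κ₁ mL rL 0 (-1) (c₁/2) (ε'/2)
    (-X - ε'/2) (-(GR+1)) ζ hrL (by linarith) (by linarith) hζpos (Or.inr rfl) hPL hboxL
  -- Phase 3 : vertical down to y ≈ 0
  have htol₃pos : 0 < min (1/4 : ℝ) (ζ/2) := lt_min (by norm_num) (by linarith)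
  obtain ⟨p₃, hreach₃, hx₃, hy₃⟩ := moveV' hα₁ hα₂ hκ₂ κ₁ p₂ 0 _ htol₃pos
  have htol₃a : min (1/4 : ℝ) (ζ/2) ≤ 1/4 := min_le_left _ _
  have htol₃b : min (1/4 : ℝ) (ζ/2) ≤ ζ/2 := min_le_right _ _
  have hx₃' := abs_le.1 hx₃
  have hpm₃ : |p₃.1 - mL| ≤ rL := by
    rw [abs_le]
    constructor
    · rw [hmLdef, hrLdef]; linarith
    · rw [hmLdef, hrLdef]; linarith
  have hpy₃ : |p₃.2 - 0| ≤ ζ/2 := le_trans hy₃ htol₃b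
  have hplow₃ : -(GR+1) ≤ (-1) * p₃.1 := by linarith [hx₃'.1, hx₃'.2]
  have hpcap₃ : (-1) * p₃.1 ≤ (-X - ε'/2) + ε'/2 := by linarith [hx₃'.1]
  obtain ⟨n₂, hn₂⟩ := exists_nat_ge (((-X - ε'/2) - (-1) * p₃.1)/μL)
  have hcount₃ : (-X - ε'/2) ≤ (-1) * p₃.1 + n₂ * μL := by
    have := (div_le_iff₀ hμL).1 hn₂
    linarith
  obtain ⟨p₄, hreach₄, hP4a, hP4b, hP4y⟩ :=
    hmarchL n₂ p₃ hpm₃ hpy₃ hplow₃ hpcap₃ hcount₃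
  have hp4x : X ≤ p₄.1 ∧ p₄.1 ≤ X + ε'/2 := by
    constructor <;> linarith [hP4a, hP4b]
  -- Phase 5 : vertical to target y
  obtain ⟨q, hreach₅, hx₅, hy₅⟩ := moveV' hα₁ hα₂ hκ₂ κ₁ p₄ w.2 (ε'/2) (by linarith)
  have hx₅' := abs_le.1 hx₅
  refine ⟨q, ?_, ?_, ?_⟩
  · exact Reachable.trans' (Reachable.trans' (Reachable.trans' (Reachable.trans'
      hreach₁ hreach₂) hreach₃) hreach₄) hreach₅
  · rw [abs_le]
    constructor
    · linarith [hp4x.1, hx₅'.1]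
    · linarith [hp4x.2, hx₅'.2]
  · linarith [hy₅]

end Main

end S13

/-- any two accessibility sets have closures containing a common
nonempty open set. -/
theorem statement13 (a₁ a₂ α₁ α₂ κ₁ κ₂ : ℝ) (hα₁ : 0 < α₁) (hα : α₁ < α₂)
    (hκ₁ : 0 ≤ κ₁) (hκ₂ : 0 < κ₂) (z₀ w₀ : ℝ × ℝ) :
    ∃ U : Set (ℝ × ℝ), U.Nonempty ∧ IsOpen U ∧
      U ⊆ closure {w : ℝ × ℝ | Reachable a₁ a₂ α₁ α₂ κ₁ κ₂ z₀ w}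
        ∩ closure {w : ℝ × ℝ | Reachable a₁ a₂ α₁ α₂ κ₁ κ₂ w₀ w} := by
  have hα₂ : 0 < α₂ := hα₁.trans hα
  refine ⟨{p : ℝ × ℝ | max (a₁/α₁) 0 + 1 < p.1},
    ⟨(max (a₁/α₁) 0 + 2, 0), by simp only [Set.mem_setOf_eq]; norm_num⟩,
    isOpen_lt continuous_const continuous_fst, ?_⟩
  intro w hw
  simp only [Set.mem_setOf_eq] at hw
  have key : ∀ z : ℝ × ℝ, w ∈ closure {q : ℝ × ℝ | Reachable a₁ a₂ α₁ α₂ κ₁ κ₂ z q} := by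
    intro z
    rw [Metric.mem_closure_iff]
    intro ε hε
    obtain ⟨q, hq, h1, h2⟩ :=
      S13.reach_dense hα₁ hα₂ hκ₂ κ₁ z w hw (show (0:ℝ) < ε/2 by linarith)
    refine ⟨q, hq, ?_⟩
    rw [Prod.dist_eq]
    apply max_lt
    · rw [Real.dist_eq, abs_sub_comm]; linarith
    · rw [Real.dist_eq, abs_sub_comm]; linarith
  exact ⟨key z₀, key w₀⟩
end

section
/- Let a₁, a₂ ∈ ℝ and α₁ > α₂ > 0, and let ξ > 0 satisfy 1/ξ² < α₁ − α₂. Then there exists M > 0 such that U_{ξ,M} is invariant for the planar ODE: for every b ∈ (0, ∞] and every differentiable curve z = (x, y) : [0, b) → ℝ² satisfying x′(t) = a₁x(t) − α₁x(t)² + y(t)² and y′(t) = a₂y(t) − α₂x(t)y(t) for all t ∈ [0, b) with z(0) ∈ U_{ξ,M}, one has z(t) ∈ U_{ξ,M} for all t ∈ [0, b). -/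
/-- The wedge region `U_{ξ,M} = {(x,y) : x < −M and ξ|y| < −x}`. -/
def Uxi (ξ M : ℝ) : Set (ℝ × ℝ) := {p : ℝ × ℝ | p.1 < -M ∧ ξ * |p.2| < -p.1}

/-- If `f ≤ 0` on `[0,τ)`, `f τ = 0` and `f` has a negative derivative at `τ > 0`,
we get a contradiction. -/
lemma no_touch_aux {f : ℝ → ℝ} {τ d : ℝ} (hτ : 0 < τ) (hf : HasDerivAt f d τ)
    (hneg : ∀ s, 0 ≤ s → s < τ → f s ≤ 0) (h0 : f τ = 0) (hd : d < 0) : False := by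
  have hsub : Set.Ico 0 τ ⊆ {τ}ᶜ := fun s hs => by
    simp only [Set.mem_compl_iff, Set.mem_singleton_iff]
    exact ne_of_lt hs.2
  have hne : (nhdsWithin τ (Set.Ico 0 τ)).NeBot := by
    rw [← mem_closure_iff_nhdsWithin_neBot, closure_Ico (ne_of_lt hτ)]
    exact ⟨le_of_lt hτ, le_refl τ⟩
  have hslope : Filter.Tendsto (slope f τ) (nhdsWithin τ (Set.Ico 0 τ)) (nhds d) :=
    (hasDerivAt_iff_tendsto_slope.mp hf).mono_left (nhdsWithin_mono τ hsub)
  have hev : ∀ᶠ s in nhdsWithin τ (Set.Ico 0 τ), 0 ≤ slope f τ s := by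
    filter_upwards [self_mem_nhdsWithin] with s hs
    have h1 : f s ≤ 0 := hneg s hs.1 hs.2
    have h2 : s - τ < 0 := sub_neg.mpr hs.2
    rw [slope_def_field]
    have : f s - f τ ≤ 0 := by rw [h0]; simpa using h1
    exact div_nonneg_of_nonpos this (le_of_lt h2)
  exact absurd (ge_of_tendsto hslope hev) (not_le.mpr hd)

/-- if `α₁ > α₂ > 0` and `1/ξ² < α₁ − α₂`, then for some `M > 0` the region
`U_{ξ,M}` is invariant under the flow of `x' = a₁x − α₁x² + y²`, `y' = a₂y − α₂xy`,
for solutions defined on `[0,b)` with `b ∈ (0,∞]`. -/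
theorem statement14 (a₁ a₂ α₁ α₂ ξ : ℝ) (hα₂ : 0 < α₂) (hα : α₂ < α₁)
    (hξ : 0 < ξ) (hξ' : 1 / ξ ^ 2 < α₁ - α₂) :
    ∃ M > (0:ℝ), ∀ b : EReal, 0 < b → ∀ z : ℝ → ℝ × ℝ,
      (∀ t : ℝ, 0 ≤ t → (t : EReal) < b →
        HasDerivAt z
          (a₁ * (z t).1 - α₁ * (z t).1 ^ 2 + (z t).2 ^ 2,
            a₂ * (z t).2 - α₂ * (z t).1 * (z t).2) t) →
      z 0 ∈ Uxi ξ M → ∀ t : ℝ, 0 ≤ t → (t : EReal) < b → z t ∈ Uxi ξ M := by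
  have hξ2 : (0:ℝ) < ξ ^ 2 := by positivity
  obtain ⟨c, hc⟩ : ∃ c : ℝ, c = α₁ - α₂ - 1 / ξ ^ 2 := ⟨_, rfl⟩
  have hc0 : 0 < c := by rw [hc]; linarith
  obtain ⟨M, hMdef⟩ : ∃ M : ℝ, M = (1 + |a₁| + |a₁ - a₂|) / c := ⟨_, rfl⟩
  have hM0 : 0 < M := by
    rw [hMdef]
    apply div_pos _ hc0
    positivity
  have hMc : M * c = 1 + |a₁| + |a₁ - a₂| := by
    rw [hMdef]; exact div_mul_cancel₀ _ (ne_of_gt hc0)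
  refine ⟨M, hM0, ?_⟩
  intro b hb z hz hz0 t ht htb
  by_contra hzt
  -- derivative and continuity on [0, t]
  have hderiv : ∀ s ∈ Set.Icc 0 t, HasDerivAt z
      (a₁ * (z s).1 - α₁ * (z s).1 ^ 2 + (z s).2 ^ 2,
        a₂ * (z s).2 - α₂ * (z s).1 * (z s).2) s := by
    intro s hs
    exact hz s hs.1 (lt_of_le_of_lt (EReal.coe_le_coe_iff.mpr hs.2) htb)
  have hcont : ContinuousOn z (Set.Icc 0 t) := fun s hs =>
    (hderiv s hs).continuousAt.continuousWithinAt
  -- the set of "bad" times and the first bad time τ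
  set A : Set ℝ := Set.Icc 0 t ∩ z ⁻¹' (Uxi ξ M)ᶜ with hA
  have hUopen : IsOpen (Uxi ξ M) := by
    have : Uxi ξ M = {p : ℝ × ℝ | p.1 < -M} ∩ {p : ℝ × ℝ | ξ * |p.2| < -p.1} := rfl
    rw [this]
    exact (isOpen_lt continuous_fst continuous_const).inter
      (isOpen_lt (continuous_const.mul (continuous_snd.abs)) continuous_fst.neg)
  have hAclosed : IsClosed A :=
    hcont.preimage_isClosed_of_isClosed isClosed_Icc hUopen.isClosed_compl
  have hAne : A.Nonempty := ⟨t, ⟨ht, le_refl t⟩, hzt⟩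
  have hAbdd : BddBelow A := ⟨0, fun s hs => hs.1.1⟩
  obtain ⟨τ, hτdef⟩ : ∃ τ : ℝ, τ = sInf A := ⟨_, rfl⟩
  have hτA : τ ∈ A := hτdef ▸ hAclosed.csInf_mem hAne hAbdd
  have hτIcc : τ ∈ Set.Icc 0 t := hτA.1
  have hzτ : z τ ∉ Uxi ξ M := hτA.2
  have hτ0 : 0 < τ := by
    rcases lt_or_eq_of_le hτIcc.1 with h | h
    · exact h
    · exact absurd (h ▸ hz0) hzτ
  have hbefore : ∀ s, 0 ≤ s → s < τ → z s ∈ Uxi ξ M := by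
    intro s hs0 hsτ
    by_contra hbad
    have : sInf A ≤ s := csInf_le hAbdd ⟨⟨hs0, le_trans (le_of_lt hsτ) hτIcc.2⟩, hbad⟩
    rw [← hτdef] at this
    exact absurd this (not_le.mpr hsτ)
  -- limits from the left give closure conditions at τ
  have hne : (nhdsWithin τ (Set.Ico 0 τ)).NeBot := by
    rw [← mem_closure_iff_nhdsWithin_neBot, closure_Ico (ne_of_lt hτ0)]
    exact ⟨le_of_lt hτ0, le_refl τ⟩
  have hIcosub : Set.Ico 0 τ ⊆ Set.Icc 0 t := fun s hs =>
    ⟨hs.1, le_trans (le_of_lt hs.2) hτIcc.2⟩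
  have hcontτ : ∀ g : ℝ × ℝ → ℝ, Continuous g →
      Filter.Tendsto (fun s => g (z s)) (nhdsWithin τ (Set.Ico 0 τ)) (nhds (g (z τ))) := by
    intro g hg
    exact (hg.continuousAt.comp_continuousWithinAt (hcont τ hτIcc)).tendsto.mono_left
      (nhdsWithin_mono τ hIcosub)
  have hxτ : (z τ).1 ≤ -M := by
    refine le_of_tendsto (hcontτ (fun p => p.1) continuous_fst) ?_
    filter_upwards [self_mem_nhdsWithin] with s hs
    exact le_of_lt (hbefore s hs.1 hs.2).1
  have hyτ : ξ * |(z τ).2| ≤ -(z τ).1 := by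
    have := hcontτ (fun p => ξ * |p.2| + p.1)
      ((continuous_const.mul continuous_snd.abs).add continuous_fst)
    have h0 : ξ * |(z τ).2| + (z τ).1 ≤ 0 := by
      refine le_of_tendsto this ?_
      filter_upwards [self_mem_nhdsWithin] with s hs
      have := (hbefore s hs.1 hs.2).2
      linarith
    linarith
  -- notation for components and their derivatives at τ
  have hderτ := hderiv τ hτIcc
  set X : ℝ := (z τ).1 with hX
  set Y : ℝ := (z τ).2 with hY
  have hxd : HasDerivAt (fun s => (z s).1) (a₁ * X - α₁ * X ^ 2 + Y ^ 2) τ := hderτ.fst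
  have hyd : HasDerivAt (fun s => (z s).2) (a₂ * Y - α₂ * X * Y) τ := hderτ.snd
  -- case analysis on which boundary piece z τ lies on
  have hboundary : X = -M ∨ ξ * |Y| = -X := by
    rcases eq_or_lt_of_le hxτ with h | h
    · exact Or.inl h
    · rcases eq_or_lt_of_le hyτ with h' | h'
      · exact Or.inr h'
      · exact absurd ⟨h, h'⟩ hzτ
  rcases hboundary with hcase | hcase
  · -- case x(τ) = -M
    have hY2 : Y ^ 2 ≤ M ^ 2 / ξ ^ 2 := by
      have h1 : ξ * |Y| ≤ M := by rw [hcase] at hyτ; linarith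
      have h2 : |Y| ≤ M / ξ := by
        rw [le_div_iff₀ hξ]; linarith [h1, mul_comm ξ |Y|]
      have h3 : Y ^ 2 ≤ (M / ξ) ^ 2 := by
        rw [← sq_abs Y]
        exact pow_le_pow_left₀ (abs_nonneg Y) h2 2
      calc Y ^ 2 ≤ (M / ξ) ^ 2 := h3
        _ = M ^ 2 / ξ ^ 2 := by ring
    have hd : a₁ * X - α₁ * X ^ 2 + Y ^ 2 < 0 := by
      rw [hcase]
      have key : 1 ≤ a₁ + M * c := by
        rw [hMc]; have := abs_nonneg (a₁ - a₂); have := neg_abs_le a₁; linarith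
      have hcle : c ≤ α₁ - 1 / ξ ^ 2 := by rw [hc]; linarith
      have h2 : M * c ≤ M * (α₁ - 1 / ξ ^ 2) := mul_le_mul_of_nonneg_left hcle (le_of_lt hM0)
      have h3 : 1 ≤ a₁ + M * (α₁ - 1 / ξ ^ 2) := by linarith
      have h4 : M * 1 ≤ M * (a₁ + M * (α₁ - 1 / ξ ^ 2)) := mul_le_mul_of_nonneg_left h3 (le_of_lt hM0)
      have h5 : M * (a₁ + M * (α₁ - 1 / ξ ^ 2)) = M * a₁ + M ^ 2 * α₁ - M ^ 2 / ξ ^ 2 := by ring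
      rw [h5] at h4
      nlinarith [h4, hY2, hM0]
    refine no_touch_aux hτ0 (f := fun s => (z s).1 + M)
      (hxd.add_const M) ?_ (by show (z τ).1 + M = 0; rw [← hX, hcase]; ring) hd
    · intro s hs0 hsτ
      show (z s).1 + M ≤ 0
      have := (hbefore s hs0 hsτ).1
      linarith
  · -- case ξ|y(τ)| = -x(τ)
    have hXneg : X < 0 := lt_of_le_of_lt hxτ (neg_neg_of_pos hM0)
    have hbracket : 1 ≤ (a₁ - a₂) - c * X := by
      have h1 : c * M ≤ c * (-X) := mul_le_mul_of_nonneg_left (by linarith) (le_of_lt hc0)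
      have h2 : 1 + |a₁| + |a₁ - a₂| ≤ -(c * X) := by
        rw [mul_comm] at hMc; linarith
      have := neg_abs_le (a₁ - a₂)
      have := abs_nonneg a₁
      linarith
    rcases le_or_gt 0 Y with hY0 | hY0
    · -- y(τ) ≥ 0 : boundary ξ y = -x
      have hYX : ξ * Y = -X := by rwa [abs_of_nonneg hY0] at hcase
      have hd : ξ * (a₂ * Y - α₂ * X * Y) + (a₁ * X - α₁ * X ^ 2 + Y ^ 2) < 0 := by
        have hsq : ξ ^ 2 * Y ^ 2 = X ^ 2 := by
          calc ξ ^ 2 * Y ^ 2 = (ξ * Y) ^ 2 := by ring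
            _ = (-X) ^ 2 := by rw [hYX]
            _ = X ^ 2 := by ring
        have hY2 : Y ^ 2 = X ^ 2 * (1 / ξ ^ 2) := by
          rw [mul_one_div, eq_div_iff (ne_of_gt hξ2)]; linarith [hsq]
        have hexp : ξ * (a₂ * Y - α₂ * X * Y) + (a₁ * X - α₁ * X ^ 2 + Y ^ 2)
            = X * ((a₁ - a₂) - c * X) := by
          have h1 : ξ * (a₂ * Y) = a₂ * (ξ * Y) := by ring
          have h2 : ξ * (α₂ * X * Y) = α₂ * X * (ξ * Y) := by ring
          simp only [hc]
          rw [mul_sub, h1, h2, hYX, hY2]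
          ring
        rw [hexp]
        have := mul_le_mul_of_nonpos_left hbracket (le_of_lt hXneg)
        calc X * ((a₁ - a₂) - c * X) ≤ X * 1 := this
          _ < 0 := by linarith
      refine no_touch_aux hτ0 (f := fun s => ξ * (z s).2 + (z s).1)
        ((hyd.const_mul ξ).add hxd) ?_
        (by show ξ * (z τ).2 + (z τ).1 = 0; rw [← hX, ← hY, hYX]; ring) hd
      · intro s hs0 hsτ
        show ξ * (z s).2 + (z s).1 ≤ 0
        obtain ⟨h1, h2⟩ := hbefore s hs0 hsτ
        have : ξ * (z s).2 ≤ ξ * |(z s).2| :=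
          mul_le_mul_of_nonneg_left (le_abs_self _) (le_of_lt hξ)
        linarith
    · -- y(τ) < 0 : boundary -ξ y = -x, i.e. ξ y = x
      have hYX : ξ * Y = X := by
        rw [abs_of_neg hY0] at hcase
        have : ξ * -Y = -X := hcase
        linarith
      have hd : -(ξ * (a₂ * Y - α₂ * X * Y)) + (a₁ * X - α₁ * X ^ 2 + Y ^ 2) < 0 := by
        have hsq : ξ ^ 2 * Y ^ 2 = X ^ 2 := by
          calc ξ ^ 2 * Y ^ 2 = (ξ * Y) ^ 2 := by ring
            _ = X ^ 2 := by rw [hYX]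
        have hY2 : Y ^ 2 = X ^ 2 * (1 / ξ ^ 2) := by
          rw [mul_one_div, eq_div_iff (ne_of_gt hξ2)]; linarith [hsq]
        have hexp : -(ξ * (a₂ * Y - α₂ * X * Y)) + (a₁ * X - α₁ * X ^ 2 + Y ^ 2)
            = X * ((a₁ - a₂) - c * X) := by
          have h1 : ξ * (a₂ * Y) = a₂ * (ξ * Y) := by ring
          have h2 : ξ * (α₂ * X * Y) = α₂ * X * (ξ * Y) := by ring
          simp only [hc]
          rw [mul_sub, h1, h2, hYX, hY2]
          ring
        rw [hexp]
        have := mul_le_mul_of_nonpos_left hbracket (le_of_lt hXneg)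
        calc X * ((a₁ - a₂) - c * X) ≤ X * 1 := this
          _ < 0 := by linarith
      refine no_touch_aux hτ0 (f := fun s => -(ξ * (z s).2) + (z s).1)
        (((hyd.const_mul ξ).neg).add hxd) ?_
        (by show -(ξ * (z τ).2) + (z τ).1 = 0; rw [← hX, ← hY, hYX]; ring) hd
      · intro s hs0 hsτ
        show -(ξ * (z s).2) + (z s).1 ≤ 0
        obtain ⟨h1, h2⟩ := hbefore s hs0 hsτ
        have : ξ * -(z s).2 ≤ ξ * |(z s).2| :=
          mul_le_mul_of_nonneg_left (neg_le_abs _) (le_of_lt hξ)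
        linarith
end

section
/- Let a₁, a₂ ∈ ℝ and α₁ > α₂ > 0, and let ξ > 0 satisfy 1/ξ² < α₁ − α₂. Define ψ₁(x,y) = −x, ψ₂(x,y) = ξy − x, ψ₃(x,y) = −ξy − x. Then there exist M > 0 and C > 0 such that for all (x,y) ∈ U_{ξ,M}: (L⁰ψⱼ)(x,y) > 0 for j = 1, 2, 3, and moreover (L⁰ψ₁)(x,y) ≥ C·(ψ₁(x,y))². -/
/-- The first-order operator `L⁰` associated with the deterministic dynamics. -/
noncomputable def Lop0 (a₁ a₂ α₁ α₂ : ℝ) (φ : ℝ × ℝ → ℝ) (p : ℝ × ℝ) : ℝ :=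
  (a₁ * p.1 - α₁ * p.1 ^ 2 + p.2 ^ 2) * deriv (fun t => φ (t, p.2)) p.1
    + (a₂ * p.2 - α₂ * p.1 * p.2) * deriv (fun t => φ (p.1, t)) p.2

set_option maxHeartbeats 1000000 in
/-- for some `M, C > 0`, on `U_{ξ,M}` one has `L⁰ψⱼ > 0` for
`ψ₁ = −x`, `ψ₂ = ξy − x`, `ψ₃ = −ξy − x`, and moreover `L⁰ψ₁ ≥ C·ψ₁²`. -/
theorem statement15 (a₁ a₂ α₁ α₂ ξ : ℝ) (hα₂ : 0 < α₂) (hα : α₂ < α₁)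
    (hξ : 0 < ξ) (hξ' : 1 / ξ ^ 2 < α₁ - α₂) :
    ∃ M > (0:ℝ), ∃ C > (0:ℝ), ∀ p ∈ Uxi ξ M,
      0 < Lop0 a₁ a₂ α₁ α₂ (fun q => -q.1) p ∧
      0 < Lop0 a₁ a₂ α₁ α₂ (fun q => ξ * q.2 - q.1) p ∧
      0 < Lop0 a₁ a₂ α₁ α₂ (fun q => -ξ * q.2 - q.1) p ∧
      C * (-p.1) ^ 2 ≤ Lop0 a₁ a₂ α₁ α₂ (fun q => -q.1) p := by
  obtain ⟨u, hupos, huξ, hξu⟩ : ∃ u : ℝ, 0 < u ∧ u * ξ ^ 2 = 1 ∧ u < α₁ - α₂ :=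
    ⟨1 / ξ ^ 2, by positivity, by field_simp, hξ'⟩
  obtain ⟨δ, hδ, hδ_def⟩ : ∃ δ : ℝ, 0 < δ ∧ δ = α₁ - α₂ - u :=
    ⟨α₁ - α₂ - u, by linarith, rfl⟩
  have hMpos : 0 < (2 * (|a₁| + |a₂|) + δ) / δ := by positivity
  refine ⟨(2 * (|a₁| + |a₂|) + δ) / δ, hMpos, δ / 2, by positivity, ?_⟩
  rintro ⟨x, y⟩ ⟨hx, hy⟩
  simp only [Uxi, Set.mem_setOf_eq] at hx hy ⊢
  have hδM : δ * ((2 * (|a₁| + |a₂|) + δ) / δ) = 2 * (|a₁| + |a₂|) + δ := by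
    field_simp
  have hxM : 2 * (|a₁| + |a₂|) + δ < δ * (-x) := by
    have h1 : (2 * (|a₁| + |a₂|) + δ) / δ < -x := by linarith
    calc 2 * (|a₁| + |a₂|) + δ = δ * ((2 * (|a₁| + |a₂|) + δ) / δ) := hδM.symm
      _ < δ * (-x) := mul_lt_mul_of_pos_left h1 hδ
  have hx0 : x < 0 := by linarith
  have hxpos : 0 < -x := by linarith
  have hsabs : |ξ * y| < -x := by
    rw [abs_mul, abs_of_pos hξ]; exact hy
  -- y² bound
  have hy2 : ξ ^ 2 * y ^ 2 < x ^ 2 := by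
    have h : |ξ * y| ^ 2 < (-x) ^ 2 := by
      exact pow_lt_pow_left₀ hsabs (abs_nonneg _) (by norm_num)
    have h2 : |ξ * y| ^ 2 = ξ ^ 2 * y ^ 2 := by
      rw [sq_abs, mul_pow]
    nlinarith
  have hy2u : y ^ 2 < x ^ 2 * u := by
    have := mul_lt_mul_of_pos_right hy2 hupos
    calc y ^ 2 = ξ ^ 2 * y ^ 2 * u := by
          rw [mul_comm (ξ^2), mul_assoc, mul_comm (ξ^2), huξ, mul_one]
      _ < x ^ 2 * u := this
  -- abs bounds on linear terms
  have ha1 : a₁ * x ≤ |a₁| * (-x) := by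
    calc a₁ * x ≤ |a₁ * x| := le_abs_self _
      _ = |a₁| * (-x) := by rw [abs_mul, abs_of_neg hx0]
  have ha2ab : |a₂ * (ξ * y)| ≤ |a₂| * (-x) := by
    rw [abs_mul]
    exact mul_le_mul_of_nonneg_left hsabs.le (abs_nonneg a₂)
  have ha2L : -(|a₂| * (-x)) ≤ a₂ * (ξ * y) := by
    have := neg_abs_le (a₂ * (ξ * y)); linarith
  have ha2R : a₂ * (ξ * y) ≤ |a₂| * (-x) := (le_abs_self _).trans ha2ab
  have hxyab : |α₂ * x * (ξ * y)| ≤ α₂ * x ^ 2 := by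
    rw [abs_mul, abs_mul, abs_of_pos hα₂, abs_of_neg hx0]
    have h := mul_le_mul_of_nonneg_left hsabs.le
      (mul_nonneg hα₂.le hxpos.le)
    nlinarith
  have hxyL : -(α₂ * x ^ 2) ≤ α₂ * x * (ξ * y) := by
    have := neg_abs_le (α₂ * x * (ξ * y)); linarith
  have hxyR : α₂ * x * (ξ * y) ≤ α₂ * x ^ 2 := (le_abs_self _).trans hxyab
  have habs : 0 ≤ |a₁| + |a₂| := by positivity
  have hmulM : (2 * (|a₁| + |a₂|) + δ) * (-x) < δ * (-x) * (-x) :=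
    mul_lt_mul_of_pos_right hxM hxpos
  have hmulM' : (2 * (|a₁| + |a₂|) + δ) * (-x) < δ * x ^ 2 := by
    have h : δ * (-x) * (-x) = δ * x ^ 2 := by ring
    linarith only [hmulM, h]
  have hα₂x : 0 ≤ α₂ * x ^ 2 := by positivity
  have hax : 0 ≤ (|a₁| + |a₂|) * (-x) := mul_nonneg habs hxpos.le
  have ha1x : |a₁| * (-x) ≤ (|a₁| + |a₂|) * (-x) := by
    nlinarith [abs_nonneg a₂]
  have ha2x : |a₂| * (-x) ≤ (|a₁| + |a₂|) * (-x) := by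
    nlinarith [abs_nonneg a₁]
  have hδx : 0 < δ * (-x) := mul_pos hδ hxpos
  have hα₁ : α₁ * x ^ 2 = δ * x ^ 2 + α₂ * x ^ 2 + u * x ^ 2 := by
    rw [hδ_def]; ring
  -- compute the operator values
  have d1 : deriv (fun t : ℝ => -t) x = -1 := by
    simpa using (hasDerivAt_id x).neg.deriv
  have L1 : Lop0 a₁ a₂ α₁ α₂ (fun q => -q.1) (x, y)
      = α₁ * x ^ 2 - a₁ * x - y ^ 2 := by
    simp only [Lop0, d1]
    have : deriv (fun _ : ℝ => -x) y = 0 := by simp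
    rw [this]; ring
  have L2 : Lop0 a₁ a₂ α₁ α₂ (fun q => ξ * q.2 - q.1) (x, y)
      = α₁ * x ^ 2 - a₁ * x - y ^ 2 + a₂ * (ξ * y) - α₂ * x * (ξ * y) := by
    simp only [Lop0]
    have e1 : deriv (fun t : ℝ => ξ * y - t) x = -1 := by
      simpa using ((hasDerivAt_id x).const_sub (ξ * y)).deriv
    have e2 : deriv (fun t : ℝ => ξ * t - x) y = ξ := by
      simpa using (((hasDerivAt_id y).const_mul ξ).sub_const x).deriv
    rw [e1, e2]; ring
  have L3 : Lop0 a₁ a₂ α₁ α₂ (fun q => -ξ * q.2 - q.1) (x, y)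
      = α₁ * x ^ 2 - a₁ * x - y ^ 2 - a₂ * (ξ * y) + α₂ * x * (ξ * y) := by
    simp only [Lop0]
    have e1 : deriv (fun t : ℝ => -ξ * y - t) x = -1 := by
      simpa using ((hasDerivAt_id x).const_sub (-ξ * y)).deriv
    have e2 : deriv (fun t : ℝ => -ξ * t - x) y = -ξ := by
      simpa using (((hasDerivAt_id y).const_mul (-ξ)).sub_const x).deriv
    rw [e1, e2]; ring
  have hux : u * x ^ 2 = x ^ 2 * u := by ring
  have key : δ / 2 * (-x) ^ 2 ≤ α₁ * x ^ 2 - a₁ * x - y ^ 2 := by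
    have hsq : (-x) ^ 2 = x ^ 2 := by ring
    rw [hsq, hα₁]
    linarith only [hy2u, ha1, ha1x, hmulM', hδx, hα₂x, hux]
  refine ⟨?_, ?_, ?_, ?_⟩
  · rw [L1]
    have : 0 < δ / 2 * (-x) ^ 2 := by positivity
    linarith only [key, this]
  · rw [L2, hα₁]
    linarith only [hy2u, ha1, ha1x, ha2L, ha2x, hxyR, hmulM', hδx, hα₂x, hax, hux]
  · rw [L3, hα₁]
    linarith only [hy2u, ha1, ha1x, ha2R, ha2x, hxyL, hmulM', hδx, hα₂x, hax, hux]
  · rw [L1]; exact key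
end

section
/- Let a₁, a₂ ∈ ℝ and α₁ > α₂ > 0, and let ξ > 0 satisfy 1/ξ² < α₁ − α₂. Then there exist M > 0 and C > 0 such that: (i) U_{ξ,M} is invariant for the planar ODE x′ = a₁x − α₁x² + y², y′ = a₂y − α₂xy, and (ii) every differentiable curve z = (x,y) : [0, T) → ℝ² solving this ODE with z(0) = (x₀, y₀) ∈ U_{ξ,M} has T ≤ 1/(C|x₀|); that is, solutions starting in U_{ξ,M} cannot be continued beyond time 1/(C|x₀|), so they reach infinity in finite time. -/
open Set Filter Topology

lemma isOpen_Uxi (ξ M : ℝ) : IsOpen (Uxi ξ M) := by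
  have h1 : IsOpen {p : ℝ × ℝ | p.1 < -M} :=
    isOpen_lt continuous_fst continuous_const
  have h2 : IsOpen {p : ℝ × ℝ | ξ * |p.2| < -p.1} :=
    isOpen_lt (by fun_prop) (by fun_prop)
  exact h1.inter h2

lemma slope_contra {g : ℝ → ℝ} {t₁ d : ℝ} (hd : HasDerivAt g d t₁)
    (h0 : g t₁ = 0) (hdpos : 0 < d) (ht₁ : 0 < t₁)
    (hpos : ∀ s, 0 ≤ s → s < t₁ → 0 < g s) : False := by
  have htend : Tendsto (slope g t₁) (𝓝[<] t₁) (𝓝 d) :=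
    ((hasDerivAt_iff_tendsto_slope.1 hd).mono_left
      (nhdsWithin_mono _ (fun s hs => ne_of_lt hs)))
  have h1 : ∀ᶠ s in 𝓝[<] t₁, 0 < slope g t₁ s := htend.eventually (eventually_gt_nhds hdpos)
  have h2 : Ioo 0 t₁ ∈ 𝓝[<] t₁ := Ioo_mem_nhdsLT_of_mem ⟨ht₁, le_rfl⟩
  obtain ⟨s, hs1, hs2⟩ := (h1.and (eventually_mem_set.2 h2)).exists
  have hgs : 0 < g s := hpos s hs2.1.le hs2.2
  have hlt : slope g t₁ s < 0 := by
    rw [slope_def_field, h0]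
    apply div_neg_of_pos_of_neg
    · simpa using hgs
    · linarith [hs2.2]
  linarith

lemma invariance_aux (a₁ a₂ α₁ α₂ ξ M : ℝ) (hξ : 0 < ξ) (hM : 0 < M)
    (hbd1 : 0 < a₁ * M * ξ ^ 2 + α₁ * M ^ 2 * ξ ^ 2 - M ^ 2)
    (hbd2 : ∀ u : ℝ, M ≤ u →
      0 < (a₁ - a₂) * u * ξ ^ 2 + (α₁ - α₂) * u ^ 2 * ξ ^ 2 - u ^ 2)
    (z : ℝ → ℝ × ℝ) (t : ℝ) (ht : 0 ≤ t)
    (hz : ∀ s : ℝ, 0 ≤ s → s ≤ t →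
      HasDerivAt z
        (a₁ * (z s).1 - α₁ * (z s).1 ^ 2 + (z s).2 ^ 2,
          a₂ * (z s).2 - α₂ * (z s).1 * (z s).2) s)
    (h0 : z 0 ∈ Uxi ξ M) : z t ∈ Uxi ξ M := by
  by_contra hcon
  have hcont : ContinuousOn z (Icc 0 t) := fun s hs =>
    (hz s hs.1 hs.2).continuousAt.continuousWithinAt
  set S : Set ℝ := Icc 0 t ∩ z ⁻¹' (Uxi ξ M)ᶜ with hS
  have hSclosed : IsClosed S := hcont.preimage_isClosed_of_isClosed isClosed_Icc
    (isOpen_Uxi ξ M).isClosed_compl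
  have hSne : S.Nonempty := ⟨t, ⟨ht, le_rfl⟩, hcon⟩
  have hSbdd : BddBelow S := ⟨0, fun s hs => hs.1.1⟩
  set t₁ := sInf S with ht₁def
  have ht₁S : t₁ ∈ S := hSclosed.csInf_mem hSne hSbdd
  have ht₁Icc : t₁ ∈ Icc 0 t := ht₁S.1
  have ht₁U : z t₁ ∉ Uxi ξ M := ht₁S.2
  have ht₁pos : 0 < t₁ := by
    rcases lt_or_eq_of_le ht₁Icc.1 with h | h
    · exact h
    · exact absurd h0 (h ▸ ht₁U)
  have hprev : ∀ s, 0 ≤ s → s < t₁ → z s ∈ Uxi ξ M := by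
    intro s hs0 hst₁
    by_contra hsU
    exact absurd (csInf_le hSbdd ⟨⟨hs0, hst₁.le.trans ht₁Icc.2⟩, hsU⟩) (not_le.2 hst₁)
  set x : ℝ → ℝ := fun s => (z s).1 with hxdef
  set y : ℝ → ℝ := fun s => (z s).2 with hydef
  have hder := hz t₁ ht₁Icc.1 ht₁Icc.2
  have hdx : HasDerivAt x (a₁ * x t₁ - α₁ * x t₁ ^ 2 + y t₁ ^ 2) t₁ := hder.fst
  have hdy : HasDerivAt y (a₂ * y t₁ - α₂ * x t₁ * y t₁) t₁ := hder.snd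
  have hxc : ContinuousAt x t₁ := hdx.continuousAt
  have hyc : ContinuousAt y t₁ := hdy.continuousAt
  have hIoo : Ioo 0 t₁ ∈ 𝓝[<] t₁ := Ioo_mem_nhdsLT_of_mem ⟨ht₁pos, le_rfl⟩
  have hx1 : x t₁ ≤ -M := by
    refine le_of_tendsto (hxc.continuousWithinAt.tendsto (s := Iio t₁)) ?_
    filter_upwards [hIoo] with s hs
    exact (hprev s hs.1.le hs.2).1.le
  have hy1 : ξ * |y t₁| ≤ -x t₁ := by
    have hc : ContinuousAt (fun s => -x s - ξ * |y s|) t₁ :=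
      hxc.neg.sub (continuousAt_const.mul hyc.abs)
    have h : (0:ℝ) ≤ -x t₁ - ξ * |y t₁| := by
      refine ge_of_tendsto (hc.continuousWithinAt.tendsto (s := Iio t₁)) ?_
      filter_upwards [hIoo] with s hs
      have := (hprev s hs.1.le hs.2).2
      linarith
    linarith
  have hξ2 : (0:ℝ) < ξ ^ 2 := by positivity
  by_cases hxeq : x t₁ = -M
  · -- boundary x = -M
    have hysq : ξ ^ 2 * y t₁ ^ 2 ≤ M ^ 2 := by
      have h1 : 0 ≤ ξ * |y t₁| := by positivity
      have h2 : ξ * |y t₁| ≤ M := by rw [hxeq] at hy1; linarith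
      nlinarith [sq_abs (y t₁)]
    refine slope_contra (g := fun s => -x s - M)
      (d := -(a₁ * x t₁ - α₁ * x t₁ ^ 2 + y t₁ ^ 2)) ((hdx.neg).sub_const M)
      (by simp [hxeq]) ?_ ht₁pos ?_
    · rw [hxeq]; nlinarith [hbd1, hysq, hξ2]
    · intro s hs0 hst₁
      have := (hprev s hs0 hst₁).1
      simp only [sub_pos]
      linarith
  · have hxlt : x t₁ < -M := lt_of_le_of_ne hx1 hxeq
    have hyB : ξ * |y t₁| = -x t₁ := by
      refine le_antisymm hy1 ?_
      by_contra h
      push_neg at h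
      exact ht₁U ⟨hxlt, h⟩
    have hMu : M ≤ -x t₁ := by linarith
    have hkey := hbd2 (-x t₁) hMu
    rcases le_or_gt 0 (y t₁) with hy0 | hy0
    · -- boundary ξ y = -x, y ≥ 0
      have hyeq : ξ * y t₁ = -x t₁ := by rwa [abs_of_nonneg hy0] at hyB
      have hy' : y t₁ = -x t₁ / ξ := by field_simp; linarith [hyeq]
      refine slope_contra (g := fun s => -x s - ξ * y s)
        (d := -(a₁ * x t₁ - α₁ * x t₁ ^ 2 + y t₁ ^ 2)
          - ξ * (a₂ * y t₁ - α₂ * x t₁ * y t₁)) ((hdx.neg).sub (hdy.const_mul ξ))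
        (by linarith) ?_ ht₁pos ?_
      · rw [hy']
        have key : (-(a₁ * x t₁ - α₁ * x t₁ ^ 2 + (-x t₁/ξ) ^ 2)
            - ξ * (a₂ * (-x t₁/ξ) - α₂ * x t₁ * (-x t₁/ξ))) * ξ ^ 2
            = (a₁ - a₂) * -x t₁ * ξ ^ 2 + (α₁ - α₂) * (-x t₁) ^ 2 * ξ ^ 2 - (-x t₁) ^ 2 := by
          field_simp
          ring
        nlinarith [hkey, hξ2, key]
      · intro s hs0 hst₁
        have h2 := (hprev s hs0 hst₁).2
        have h3 : ξ * y s ≤ ξ * |y s| := mul_le_mul_of_nonneg_left (le_abs_self _) hξ.le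
        simp only [sub_pos]
        linarith
    · -- boundary ξ y = x, y < 0
      have hyeq : ξ * y t₁ = x t₁ := by
        rw [abs_of_neg hy0] at hyB; linarith [hyB]
      have hy' : y t₁ = x t₁ / ξ := by field_simp; linarith [hyeq]
      refine slope_contra (g := fun s => -x s + ξ * y s)
        (d := -(a₁ * x t₁ - α₁ * x t₁ ^ 2 + y t₁ ^ 2)
          + ξ * (a₂ * y t₁ - α₂ * x t₁ * y t₁)) ((hdx.neg).add (hdy.const_mul ξ))
        (by linarith) ?_ ht₁pos ?_
      · rw [hy']
        have key : (-(a₁ * x t₁ - α₁ * x t₁ ^ 2 + (x t₁/ξ) ^ 2)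
            + ξ * (a₂ * (x t₁/ξ) - α₂ * x t₁ * (x t₁/ξ))) * ξ ^ 2
            = (a₁ - a₂) * -x t₁ * ξ ^ 2 + (α₁ - α₂) * (-x t₁) ^ 2 * ξ ^ 2 - (-x t₁) ^ 2 := by
          field_simp
          ring
        nlinarith [hkey, hξ2, key]
      · intro s hs0 hst₁
        have h2 := (hprev s hs0 hst₁).2
        have h3 : -(ξ * y s) ≤ ξ * |y s| := by
          have := neg_abs_le (y s)
          nlinarith
        show 0 < -x s + ξ * y s
        linarith

set_option maxHeartbeats 2000000 in
/-- for some `M, C > 0`, the region `U_{ξ,M}` is invariant for the ODE, and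
every solution on `[0,T)` starting at `(x₀,y₀) ∈ U_{ξ,M}` satisfies `T ≤ 1/(C|x₀|)`:
solutions starting in `U_{ξ,M}` reach infinity in finite time. -/
theorem statement16 (a₁ a₂ α₁ α₂ ξ : ℝ) (hα₂ : 0 < α₂) (hα : α₂ < α₁)
    (hξ : 0 < ξ) (hξ' : 1 / ξ ^ 2 < α₁ - α₂) :
    ∃ M > (0:ℝ), ∃ C > (0:ℝ),
      (∀ b : EReal, 0 < b → ∀ z : ℝ → ℝ × ℝ,
        (∀ t : ℝ, 0 ≤ t → (t : EReal) < b →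
          HasDerivAt z
            (a₁ * (z t).1 - α₁ * (z t).1 ^ 2 + (z t).2 ^ 2,
              a₂ * (z t).2 - α₂ * (z t).1 * (z t).2) t) →
        z 0 ∈ Uxi ξ M → ∀ t : ℝ, 0 ≤ t → (t : EReal) < b → z t ∈ Uxi ξ M) ∧
      ∀ T : ℝ, ∀ z : ℝ → ℝ × ℝ,
        (∀ t : ℝ, 0 ≤ t → t < T →
          HasDerivAt z
            (a₁ * (z t).1 - α₁ * (z t).1 ^ 2 + (z t).2 ^ 2,
              a₂ * (z t).2 - α₂ * (z t).1 * (z t).2) t) →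
        z 0 ∈ Uxi ξ M → T ≤ 1 / (C * |(z 0).1|) := by
  have hξ2 : (0:ℝ) < ξ ^ 2 := by positivity
  set ε := α₁ - α₂ - 1 / ξ ^ 2 with hεdef
  have hε : 0 < ε := by rw [hεdef]; linarith
  set M := (|a₁| + |a₂| + 1) / ε with hMdef
  have hM : 0 < M := div_pos (by positivity) hε
  have hεM : ε * M = |a₁| + |a₂| + 1 := by rw [hMdef]; field_simp
  have hbd1 : 0 < a₁ * M * ξ ^ 2 + α₁ * M ^ 2 * ξ ^ 2 - M ^ 2 := by
    have key : a₁ * M * ξ ^ 2 + α₁ * M ^ 2 * ξ ^ 2 - M ^ 2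
        = (M * ξ ^ 2) * (a₁ + ε * M + α₂ * M) := by
      rw [hεdef]; field_simp; ring
    rw [key, hεM]
    refine mul_pos (by positivity) ?_
    nlinarith [neg_abs_le a₁, abs_nonneg a₂, mul_pos hα₂ hM]
  have hbd2 : ∀ u : ℝ, M ≤ u →
      0 < (a₁ - a₂) * u * ξ ^ 2 + (α₁ - α₂) * u ^ 2 * ξ ^ 2 - u ^ 2 := by
    intro u hu
    have hu0 : 0 < u := lt_of_lt_of_le hM hu
    have key : (a₁ - a₂) * u * ξ ^ 2 + (α₁ - α₂) * u ^ 2 * ξ ^ 2 - u ^ 2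
        = (u * ξ ^ 2) * ((a₁ - a₂) + ε * u) := by
      rw [hεdef]; field_simp; ring
    rw [key]
    refine mul_pos (by positivity) ?_
    have h1 : ε * M ≤ ε * u := mul_le_mul_of_nonneg_left hu hε.le
    rw [hεM] at h1
    nlinarith [le_abs_self a₂, neg_abs_le a₁]
  refine ⟨M, hM, α₂, hα₂, ?_, ?_⟩
  · intro b hb z hz h0 t ht0 htb
    exact invariance_aux a₁ a₂ α₁ α₂ ξ M hξ hM hbd1 hbd2 z t ht0
      (fun s hs0 hst => hz s hs0 (lt_of_le_of_lt (EReal.coe_le_coe_iff.2 hst) htb)) h0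
  · intro T z hz h0
    set x₀ := (z 0).1 with hx₀def
    have hx₀M : x₀ < -M := h0.1
    have hx₀neg : x₀ < 0 := by linarith
    have habs : |x₀| = -x₀ := abs_of_neg hx₀neg
    have habs0 : 0 < |x₀| := by rw [habs]; linarith
    set r := 1 / (α₂ * |x₀|) with hrdef
    have hr : 0 < r := by rw [hrdef]; positivity
    by_contra hcon
    push_neg at hcon
    have hU : ∀ s, 0 ≤ s → s < T → z s ∈ Uxi ξ M := fun s hs0 hsT =>
      invariance_aux a₁ a₂ α₁ α₂ ξ M hξ hM hbd1 hbd2 z s hs0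
        (fun u hu0 hus => hz u hu0 (lt_of_le_of_lt hus hsT)) h0
    set h : ℝ → ℝ := fun s => α₂ * s - ((z s).1)⁻¹ with hhdef
    have hd : ∀ s ∈ Icc 0 r, HasDerivAt h
        (α₂ - (-(a₁ * (z s).1 - α₁ * (z s).1 ^ 2 + (z s).2 ^ 2) / (z s).1 ^ 2)) s := by
      intro s hs
      have hsT : s < T := lt_of_le_of_lt hs.2 hcon
      have hzU := hU s hs.1 hsT
      have hxne : (z s).1 ≠ 0 := by
        intro hc
        have := hzU.1
        rw [hc] at this
        linarith
      have hds := hz s hs.1 hsT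
      have h1 : HasDerivAt (fun u : ℝ => α₂ * u) α₂ s := by
        simpa using (hasDerivAt_id s).const_mul α₂
      have hdx : HasDerivAt (fun u => (z u).1)
          (a₁ * (z s).1 - α₁ * (z s).1 ^ 2 + (z s).2 ^ 2) s := hds.fst
      exact h1.sub (hdx.inv hxne)
    have hanti : AntitoneOn h (Icc 0 r) := by
      apply antitoneOn_of_deriv_nonpos (convex_Icc 0 r)
      · exact fun s hs => (hd s hs).continuousAt.continuousWithinAt
      · intro s hs
        rw [interior_Icc] at hs
        exact (hd s (Ioo_subset_Icc_self hs)).differentiableAt.differentiableWithinAt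
      · intro s hs
        rw [interior_Icc] at hs
        have hs' := Ioo_subset_Icc_self hs
        rw [(hd s hs').deriv]
        set xs := (z s).1 with hxs
        set ys := (z s).2 with hys
        have hzU := hU s hs'.1 (lt_of_le_of_lt hs'.2 hcon)
        have hx : xs < -M := hzU.1
        have hy : ξ * |ys| < -xs := hzU.2
        have hysq : ξ ^ 2 * ys ^ 2 < xs ^ 2 := by
          have h1 : 0 ≤ ξ * |ys| := by positivity
          nlinarith [sq_abs ys]
        have hx2 : 0 < xs ^ 2 := by nlinarith
        have hXb : a₁ * xs - α₁ * xs ^ 2 + ys ^ 2 + α₂ * xs ^ 2 ≤ 0 := by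
          have h1 : ε * M ≤ ε * (-xs) := mul_le_mul_of_nonneg_left (by linarith) hε.le
          rw [hεM] at h1
          have h2 : 0 < a₁ - ε * xs := by nlinarith [neg_abs_le a₁, abs_nonneg a₂]
          have h3 : xs * (a₁ - ε * xs) < 0 := mul_neg_of_neg_of_pos (by linarith) h2
          have key : (a₁ * xs - α₁ * xs ^ 2 + ys ^ 2 + α₂ * xs ^ 2) * ξ ^ 2
              = xs * (a₁ - ε * xs) * ξ ^ 2 + (ξ ^ 2 * ys ^ 2 - xs ^ 2) := by
            rw [hεdef]; field_simp; ring
          nlinarith [key, hysq, mul_neg_of_neg_of_pos h3 hξ2]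
        have hq : α₂ ≤ -(a₁ * xs - α₁ * xs ^ 2 + ys ^ 2) / xs ^ 2 := by
          rw [le_div_iff₀ hx2]
          linarith
        linarith
    have hfin : h r ≤ h 0 := hanti ⟨le_rfl, hr.le⟩ ⟨hr.le, le_rfl⟩ hr.le
    have hxr : (z r).1 < -M := (hU r hr.le (by linarith)).1
    have hinv : ((z r).1)⁻¹ < 0 := inv_lt_zero.2 (by linarith)
    have hq : α₂ * r = |x₀|⁻¹ := by rw [hrdef]; field_simp
    have hx0inv : -x₀⁻¹ = |x₀|⁻¹ := by rw [habs, ← inv_neg]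
    have hh0 : h 0 = -x₀⁻¹ := by simp [hhdef, hx₀def]
    have hhr : h r = α₂ * r - ((z r).1)⁻¹ := rfl
    rw [hhr, hh0, hq, hx0inv] at hfin
    linarith
end

section
/- Let a₁, a₂ ∈ ℝ, α₁ > α₂ > 0, κ₁ ≥ 0 and κ₂ > 0. For every ξ > 0 with (α₁ − α₂)/2 < 1/ξ² < α₁ − α₂ there exist constants M > 0 and C > 0 such that, with g : ℝ² → ℝ defined by g(x,y) = exp(1/(x+M))·f(ξy/x) for x < −M and g(x,y) = 0 for x ≥ −M, where f(t) = exp(−1/(1−t²)) for t ∈ [−1,1] and f(t) = 0 otherwise, one has (Lg)(z) ≥ C·g(z) for all z ∈ ℝ², and g is strictly positive on U_{ξ,M}. Moreover, if a₁ ≥ a₂, then M can be chosen independently of ξ (i.e., there is a single M > 0 that works for all such ξ, with C allowed to depend on ξ). -/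
noncomputable def Lop (a₁ a₂ α₁ α₂ κ₁ κ₂ : ℝ) (Φ : ℝ × ℝ → ℝ) (p : ℝ × ℝ) : ℝ :=
  (a₁ * p.1 - α₁ * p.1 ^ 2 + p.2 ^ 2) * deriv (fun t => Φ (t, p.2)) p.1
    + (a₂ * p.2 - α₂ * p.1 * p.2) * deriv (fun t => Φ (p.1, t)) p.2
    + κ₁ * deriv (deriv (fun t => Φ (t, p.2))) p.1
    + κ₂ * deriv (deriv (fun t => Φ (p.1, t))) p.2

/-- `φ` is a Lyapunov function for the operator `L` (with the given parameters) on `U`: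
(I) `φ` is `C^∞` on `U`; (II) `φ z → ∞` as `|z| → ∞`, `z ∈ U`;
(III) there are `C, D > 0` with `Lφ ≤ -C•φ + D` on `U`. -/
def IsLyapunovOn (a₁ a₂ α₁ α₂ κ₁ κ₂ : ℝ) (φ : ℝ × ℝ → ℝ) (U : Set (ℝ × ℝ)) : Prop :=
  ContDiffOn ℝ (⊤ : ℕ∞) φ U ∧
    (∀ M : ℝ, ∃ R : ℝ, ∀ z ∈ U, R < ‖z‖ → M < φ z) ∧
    (∃ C > (0:ℝ), ∃ D > (0:ℝ), ∀ z ∈ U, Lop a₁ a₂ α₁ α₂ κ₁ κ₂ φ z ≤ -C * φ z + D)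
/-- The bump function `f(t) = exp(−1/(1−t²))` on `(−1,1)` (which is its value on `[−1,1]`
in the limiting sense) and `0` otherwise. -/
noncomputable def fcut (t : ℝ) : ℝ :=
  if t ∈ Set.Ioo (-1:ℝ) 1 then Real.exp (-1 / (1 - t ^ 2)) else 0

/-- `g(x,y) = exp(1/(x+M))·f(ξy/x)` for `x < −M`, and `0` for `x ≥ −M`. -/
noncomputable def gfun (ξ M : ℝ) (p : ℝ × ℝ) : ℝ :=
  if p.1 < -M then Real.exp (1 / (p.1 + M)) * fcut (ξ * p.2 / p.1) else 0


open Real Set Filter Topology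


noncomputable def php (v : ℝ) : ℝ := v⁻¹^2 * expNegInvGlue v
noncomputable def phpp (v : ℝ) : ℝ := (v⁻¹^4 - 2*v⁻¹^3) * expNegInvGlue v

lemma hasDerivAt_phi (v : ℝ) : HasDerivAt expNegInvGlue (php v) v := by
  have h := expNegInvGlue.hasDerivAt_polynomial_eval_inv_mul 1 v
  simp at h
  convert h using 1
  simp [php, inv_pow]

lemma hasDerivAt_php (v : ℝ) : HasDerivAt php (phpp v) v := by
  have h := expNegInvGlue.hasDerivAt_polynomial_eval_inv_mul (Polynomial.X^2) v
  simp [Polynomial.derivative_pow] at h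
  convert h using 1
  · funext x; simp [php, inv_pow]
  · simp only [phpp, inv_pow]; ring

noncomputable def Gg (ξ M : ℝ) (p : ℝ × ℝ) : ℝ :=
  expNegInvGlue (-(p.1+M)) * expNegInvGlue (1 - (ξ*p.2/p.1)^2)

noncomputable def gx (ξ M x y : ℝ) : ℝ :=
  -php (-(x+M)) * expNegInvGlue (1-(ξ*y/x)^2)
    + expNegInvGlue (-(x+M)) * php (1-(ξ*y/x)^2) * (2*(ξ*y)^2/x^3)

noncomputable def gxx (ξ M x y : ℝ) : ℝ :=
  phpp (-(x+M)) * expNegInvGlue (1-(ξ*y/x)^2)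
    - 2 * php (-(x+M)) * php (1-(ξ*y/x)^2) * (2*(ξ*y)^2/x^3)
    + expNegInvGlue (-(x+M)) * phpp (1-(ξ*y/x)^2) * (2*(ξ*y)^2/x^3)^2
    + expNegInvGlue (-(x+M)) * php (1-(ξ*y/x)^2) * (-6*(ξ*y)^2/x^4)

noncomputable def gy (ξ M x y : ℝ) : ℝ :=
  expNegInvGlue (-(x+M)) * php (1-(ξ*y/x)^2) * (-2*ξ^2*y/x^2)

noncomputable def gyy (ξ M x y : ℝ) : ℝ :=
  expNegInvGlue (-(x+M)) * phpp (1-(ξ*y/x)^2) * (-2*ξ^2*y/x^2)^2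
    + expNegInvGlue (-(x+M)) * php (1-(ξ*y/x)^2) * (-2*ξ^2/x^2)

lemma hasDerivAt_E (M x : ℝ) :
    HasDerivAt (fun s : ℝ => expNegInvGlue (-(s+M))) (-php (-(x+M))) x := by
  have hi : HasDerivAt (fun s : ℝ => -(s+M)) (-1) x := ((hasDerivAt_id x).add_const M).neg
  simpa [Function.comp_def] using (hasDerivAt_phi (-(x+M))).comp x hi

lemma hasDerivAt_E' (M x : ℝ) :
    HasDerivAt (fun s : ℝ => php (-(s+M))) (-phpp (-(x+M))) x := by
  have hi : HasDerivAt (fun s : ℝ => -(s+M)) (-1) x := ((hasDerivAt_id x).add_const M).neg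
  simpa [Function.comp_def] using (hasDerivAt_php (-(x+M))).comp x hi

lemma hasDerivAt_wx (ξ y x : ℝ) (hx : x ≠ 0) :
    HasDerivAt (fun s : ℝ => 1-(ξ*y/s)^2) (2*(ξ*y)^2/x^3) x := by
  have h1 : HasDerivAt (fun s : ℝ => (ξ*y/s)^2) (2*(ξ*y/x)^1 * ((ξ*y) * -(x^2)⁻¹)) x := by
    have h0 : HasDerivAt (fun s : ℝ => ξ*y/s) ((ξ*y) * -(x^2)⁻¹) x := by
      simpa [div_eq_mul_inv] using (hasDerivAt_inv hx).const_mul (ξ*y)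
    exact h0.pow 2
  have := h1.const_sub 1
  refine this.congr_deriv ?_
  field_simp

lemma hasDerivAt_Fx (ξ M y x : ℝ) (hx : x ≠ 0) :
    HasDerivAt (fun s : ℝ => expNegInvGlue (1-(ξ*y/s)^2))
      (php (1-(ξ*y/x)^2) * (2*(ξ*y)^2/x^3)) x :=
  (hasDerivAt_phi _).comp x (hasDerivAt_wx ξ y x hx)

lemma hasDerivAt_Fx' (ξ M y x : ℝ) (hx : x ≠ 0) :
    HasDerivAt (fun s : ℝ => php (1-(ξ*y/s)^2))
      (phpp (1-(ξ*y/x)^2) * (2*(ξ*y)^2/x^3)) x :=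
  (hasDerivAt_php _).comp x (hasDerivAt_wx ξ y x hx)

lemma hasDerivAt_c (ξ y x : ℝ) (hx : x ≠ 0) :
    HasDerivAt (fun s : ℝ => 2*(ξ*y)^2/s^3) (-6*(ξ*y)^2/x^4) x := by
  have h0 : HasDerivAt (fun s : ℝ => s^3) (3*x^2) x := by
    simpa using hasDerivAt_pow 3 x
  have h1 := (h0.inv (pow_ne_zero 3 hx)).const_mul (2*(ξ*y)^2)
  refine h1.congr_deriv ?_
  field_simp
  ring

lemma hasDerivAt_gx (ξ M x y : ℝ) (hx : x ≠ 0) :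
    HasDerivAt (fun s => Gg ξ M (s,y)) (gx ξ M x y) x := by
  have h := (hasDerivAt_E M x).mul (hasDerivAt_Fx ξ M y x hx)
  refine h.congr_deriv ?_
  simp only [gx]; ring

lemma hasDerivAt_gxx (ξ M x y : ℝ) (hx : x ≠ 0) :
    HasDerivAt (fun s => gx ξ M s y) (gxx ξ M x y) x := by
  have h1 := ((hasDerivAt_E' M x).neg.mul (hasDerivAt_Fx ξ M y x hx))
  have h2 := ((hasDerivAt_E M x).mul (hasDerivAt_Fx' ξ M y x hx)).mul (hasDerivAt_c ξ y x hx)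
  have h := h1.add h2
  refine h.congr_deriv ?_
  simp only [gxx, Pi.mul_apply, Pi.neg_apply]; ring

lemma hasDerivAt_wy (ξ x y : ℝ) :
    HasDerivAt (fun t : ℝ => 1-(ξ*t/x)^2) (-2*ξ^2*y/x^2) y := by
  have h0 : HasDerivAt (fun t : ℝ => ξ*t/x) (ξ/x) y := by
    simpa using ((hasDerivAt_id y).const_mul ξ).div_const x
  have h1 := (h0.pow 2).const_sub 1
  refine h1.congr_deriv ?_
  field_simp
  ring

lemma hasDerivAt_gy (ξ M x y : ℝ) :
    HasDerivAt (fun t => Gg ξ M (x,t)) (gy ξ M x y) y := by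
  have h := ((hasDerivAt_phi _).comp y (hasDerivAt_wy ξ x y)).const_mul
    (expNegInvGlue (-(x+M)))
  refine h.congr_deriv ?_
  simp only [gy]; ring

lemma hasDerivAt_gyy (ξ M x y : ℝ) :
    HasDerivAt (fun t => gy ξ M x t) (gyy ξ M x y) y := by
  have h := (((hasDerivAt_php _).comp y (hasDerivAt_wy ξ x y)).const_mul
    (expNegInvGlue (-(x+M)))).mul ((((hasDerivAt_id y).const_mul (-2*ξ^2)).div_const (x^2)))
  refine h.congr_deriv ?_
  simp only [gyy, Function.comp, id]; ring


noncomputable def Sig (a₁ a₂ α₁ α₂ κ₁ κ₂ ξ x t v w : ℝ) : ℝ :=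
  2*t^2*(a₁-a₂+(-x)*(α₁-α₂-t^2/ξ^2))/w^2
  + ((α₁-t^2/ξ^2)*x^2 - a₁*x)/v^2
  + κ₁*(1/v^4 - 2/v^3)
  + 4*κ₁*t^2/(v^2*w^2*(-x))
  + (1/w^4 - 2/w^3)*(4*κ₁*t^4+4*κ₂*ξ^2*t^2)/x^2
  - (6*κ₁*t^2+2*κ₂*ξ^2)/(w^2*x^2)

set_option maxHeartbeats 1000000 in
lemma bridge_alg (a₁ a₂ α₁ α₂ κ₁ κ₂ ξ x t v w E F y : ℝ) (hξ : ξ ≠ 0) (hx : x ≠ 0)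
    (hv : v ≠ 0) (hw : w ≠ 0) (hy : y = t*x/ξ) :
    (a₁*x - α₁*x^2 + y^2) * (-(v⁻¹^2*E) * F + E * (w⁻¹^2*F) * (2*(ξ*y)^2/x^3))
    + (a₂*y - α₂*x*y) * (E * (w⁻¹^2*F) * (-2*ξ^2*y/x^2))
    + κ₁ * ((v⁻¹^4-2*v⁻¹^3)*E * F - 2*(v⁻¹^2*E)*(w⁻¹^2*F)*(2*(ξ*y)^2/x^3)
        + E*((w⁻¹^4-2*w⁻¹^3)*F)*(2*(ξ*y)^2/x^3)^2 + E*(w⁻¹^2*F)*(-6*(ξ*y)^2/x^4))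
    + κ₂ * (E*((w⁻¹^4-2*w⁻¹^3)*F)*(-2*ξ^2*y/x^2)^2 + E*(w⁻¹^2*F)*(-2*ξ^2/x^2))
    = E*F*Sig a₁ a₂ α₁ α₂ κ₁ κ₂ ξ x t v w := by
  subst hy
  simp only [Sig]
  field_simp
  ring

set_option maxHeartbeats 1600000 in
lemma core (a₁ a₂ α₁ α₂ κ₁ κ₂ ξ M x t : ℝ)
    (hα₂ : 0 < α₂) (hα : α₂ < α₁) (hκ₁ : 0 ≤ κ₁) (hκ₂ : 0 < κ₂) (hξ : 0 < ξ)
    (hβ1 : (α₁-α₂)/2 < 1/ξ^2) (hβ2 : 1/ξ^2 < α₁-α₂)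
    (hM1 : 1 ≤ M)
    (hM2 : 2*|a₁| ≤ α₂*M)
    (hM3 : 16*κ₁ ≤ α₂*M^2)
    (hM4 : 8*(14*κ₁+20*κ₂/(α₁-α₂)) ≤
      α₂*(min (1/2) (κ₂/((α₁-α₂)*(14*κ₁+20*κ₂/(α₁-α₂)))))^3*M^2)
    (hA : 0 ≤ a₁ - a₂ + (α₁ - α₂ - 1/ξ^2)*M)
    (hx : x < -M) (ht : t^2 < 1) :
    α₂/8 ≤ Sig a₁ a₂ α₁ α₂ κ₁ κ₂ ξ x t (-(x+M)) (1-t^2) := by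
  have hαd : 0 < α₁ - α₂ := by linarith
  have hξ2 : 0 < ξ^2 := by positivity
  have hβpos : 0 < 1/ξ^2 := by positivity
  have hK : 0 < 14*κ₁+20*κ₂/(α₁-α₂) := by
    have h20 : 0 < 20*κ₂/(α₁-α₂) := by positivity
    clear * - h20 hκ₁; linarith
  obtain ⟨γ, hγ_def⟩ : ∃ g, g = κ₂/(α₁-α₂) := ⟨_, rfl⟩
  have hγ : 0 < γ := by rw [hγ_def]; positivity
  obtain ⟨K, hK_def⟩ : ∃ K, K = 14*κ₁+20*κ₂/(α₁-α₂) := ⟨_, rfl⟩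
  rw [← hK_def] at hM4 hK
  have hK_def' : K = 14*κ₁+20*γ := by rw [hγ_def, hK_def]; ring
  obtain ⟨w₀, hw₀_def⟩ : ∃ w₀, w₀ = min (1/2) (κ₂/((α₁-α₂)*K)) := ⟨_, rfl⟩
  rw [← hw₀_def] at hM4
  have hw₀ : 0 < w₀ := by
    rw [hw₀_def]; exact lt_min (by norm_num) (by positivity)
  have hw₀le : w₀ ≤ 1/2 := hw₀_def ▸ min_le_left _ _
  have hw₀le2 : w₀ ≤ κ₂/((α₁-α₂)*K) := hw₀_def ▸ min_le_right _ _
  obtain ⟨v, hv_def⟩ : ∃ v, v = -(x+M) := ⟨_, rfl⟩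
  obtain ⟨w, hw_def⟩ : ∃ w, w = 1 - t^2 := ⟨_, rfl⟩
  rw [show Sig a₁ a₂ α₁ α₂ κ₁ κ₂ ξ x t (-(x+M)) (1-t^2)
      = Sig a₁ a₂ α₁ α₂ κ₁ κ₂ ξ x t v w by rw [hv_def, hw_def]]
  have hv : 0 < v := by rw [hv_def]; linarith
  have hw : 0 < w := by rw [hw_def]; linarith
  have hwt : t^2 = 1 - w := by rw [hw_def]; ring
  have hw1 : w ≤ 1 := by clear * - hwt; nlinarith [sq_nonneg t]
  have hmx : 0 < -x := by linarith
  have hX : M ≤ -x := by linarith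
  have hx2 : M^2 ≤ x^2 := by clear * - hX hM1; nlinarith
  have hxpos : 0 < x^2 := by clear * - hmx; nlinarith
  have ht0 : 0 ≤ t^2 := sq_nonneg t
  have hkx1 : γ ≤ κ₂*ξ^2 := by
    rw [hγ_def, div_le_iff₀ hαd]
    have h : 1 ≤ ξ^2 * (α₁-α₂) := by
      have h2 := (div_lt_iff₀ hξ2).mp hβ2
      clear * - h2; linarith
    clear * - h hκ₂
    nlinarith [mul_le_mul_of_nonneg_left h hκ₂.le]
  have hkx2 : κ₂*ξ^2 ≤ 2*γ := by
    rw [hγ_def, show (2:ℝ)*(κ₂/(α₁-α₂)) = 2*κ₂/(α₁-α₂) by ring, le_div_iff₀ hαd]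
    have h2 := (lt_div_iff₀ hξ2).mp hβ1
    have h : ξ^2 * (α₁-α₂) ≤ 2 := by clear * - h2; linarith
    clear * - h hκ₂
    nlinarith [mul_le_mul_of_nonneg_left h hκ₂.le]
  have htξ : t^2/ξ^2 ≤ 1/ξ^2 := by
    apply div_le_div_of_nonneg_right ht.le hξ2.le
  have hδ : 0 < α₁ - α₂ - 1/ξ^2 := by linarith
  -- Term 1 : nonnegative
  have h1 : 0 ≤ 2*t^2*(a₁-a₂+(-x)*(α₁-α₂-t^2/ξ^2))/w^2 := by
    have hin : 0 ≤ a₁-a₂+(-x)*(α₁-α₂-t^2/ξ^2) := by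
      have hmm : M*(α₁-α₂-1/ξ^2) ≤ (-x)*(α₁-α₂-t^2/ξ^2) :=
        mul_le_mul hX (by linarith) hδ.le (by linarith)
      clear * - hmm hA; nlinarith
    exact div_nonneg (by positivity) (by positivity)
  -- Term 2 : at least (α₂/2)·(x²/v²)
  have h2 : α₂/2 * (x^2/v^2) ≤ ((α₁-t^2/ξ^2)*x^2 - a₁*x)/v^2 := by
    rw [show α₂/2 * (x^2/v^2) = (α₂/2*x^2)/v^2 by ring]
    apply div_le_div_of_nonneg_right ?_ (by positivity)
    have hcoef : α₂ ≤ α₁ - t^2/ξ^2 := by linarith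
    have e0 : α₂*x^2 ≤ (α₁-t^2/ξ^2)*x^2 :=
      mul_le_mul_of_nonneg_right hcoef hxpos.le
    have e1 : a₁*x ≤ |a₁| * (-x) := by
      have := neg_abs_le a₁
      clear * - this hmx
      nlinarith [mul_nonneg (by linarith : (0:ℝ) ≤ a₁ + |a₁|) hmx.le]
    have e15 : α₂*M ≤ α₂*(-x) := mul_le_mul_of_nonneg_left hX hα₂.le
    have e2 : |a₁| * (-x) ≤ (α₂/2*(-x))*(-x) := by
      have e3 : |a₁| ≤ α₂/2*(-x) := by clear * - hM2 e15; linarith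
      exact mul_le_mul_of_nonneg_right e3 hmx.le
    have e4 : (α₂/2*(-x))*(-x) = α₂/2*x^2 := by ring
    clear * - e0 e1 e2 e4; linarith
  have h2b : (1:ℝ) ≤ x^2/v^2 := by
    rw [le_div_iff₀ (by positivity)]
    have hvx : v ≤ -x := by rw [hv_def]; linarith
    clear * - hvx hv; nlinarith
  -- Term 3 : ≥ -(α₂/4)(x²/v²)
  have h3 : -(α₂/4*(x^2/v^2)) ≤ κ₁*(1/v^4 - 2/v^3) := by
    have key : 0 ≤ κ₁*(1-2*v) + α₂/4*x^2*v^2 := by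
      rcases le_or_gt v (1/2) with hvc | hvc
      · have e1 : 0 ≤ κ₁*(1-2*v) := mul_nonneg hκ₁ (by linarith)
        have e2 : 0 ≤ α₂/4*x^2*v^2 := by positivity
        clear * - e1 e2; linarith
      · have e1 : α₂*M^2*v ≤ α₂*x^2*v :=
          mul_le_mul_of_nonneg_right (by clear * - hx2 hα₂; nlinarith) hv.le
        have e2 : 16*κ₁*v ≤ α₂*M^2*v := mul_le_mul_of_nonneg_right hM3 hv.le
        have e3 : 0 ≤ κ₁*v := mul_nonneg hκ₁ hv.le
        have e4 : 0 ≤ α₂*x^2 := by positivity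
        have e5 : α₂*x^2*(v*(2*v-1)) ≥ 0 :=
          mul_nonneg e4 (by clear * - hvc hv; nlinarith)
        clear * - e1 e2 e3 e5 hκ₁ hvc
        nlinarith
    have heq : κ₁*(1/v^4 - 2/v^3) + α₂/4*(x^2/v^2)
        = (κ₁*(1-2*v) + α₂/4*x^2*v^2)/v^4 := by
      field_simp
    have hd := div_nonneg key (by positivity : (0:ℝ) ≤ v^4)
    clear * - heq hd; linarith [heq ▸ hd]
  -- Term 4 : nonnegative
  have h4 : 0 ≤ 4*κ₁*t^2/(v^2*w^2*(-x)) := by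
    apply div_nonneg (by positivity)
    exact (mul_pos (mul_pos (pow_pos hv 2) (pow_pos hw 2)) hmx).le
  -- Terms 5+6
  have h56 : -(α₂/8) ≤ (1/w^4 - 2/w^3)*(4*κ₁*t^4+4*κ₂*ξ^2*t^2)/x^2
      - (6*κ₁*t^2+2*κ₂*ξ^2)/(w^2*x^2) := by
    obtain ⟨A, hA_def⟩ : ∃ A, A = 4*κ₁*t^4+4*κ₂*ξ^2*t^2 := ⟨_, rfl⟩
    obtain ⟨B, hB_def⟩ : ∃ B, B = 6*κ₁*t^2+2*κ₂*ξ^2 := ⟨_, rfl⟩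
    have hApos : 0 ≤ A := by rw [hA_def]; positivity
    have hBpos : 0 ≤ B := by
      rw [hB_def]
      have e1 : 0 ≤ κ₁*t^2 := mul_nonneg hκ₁ ht0
      have e2 : 0 < κ₂*ξ^2 := mul_pos hκ₂ hξ2
      clear * - e1 e2; nlinarith
    have heq : (1/w^4 - 2/w^3)*A/x^2 - B/(w^2*x^2)
        = (A - 2*A*w - B*w^2)/(w^4*x^2) := by
      have hw' := hw.ne'
      have hx' : x ≠ 0 := by clear * - hmx; intro h; rw [h] at hmx; simp at hmx
      field_simp
    rw [← hA_def, ← hB_def, heq]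
    have ht4 : t^4 ≤ t^2 := by clear * - ht0 ht; nlinarith
    have hAup : A ≤ 4*κ₁ + 8*γ := by
      rw [hA_def]
      have e1 : κ₁*t^4 ≤ κ₁*1 := by
        apply mul_le_mul_of_nonneg_left ?_ hκ₁
        clear * - ht4 ht; nlinarith
      have e2 : κ₂*ξ^2*t^2 ≤ κ₂*ξ^2*1 :=
        mul_le_mul_of_nonneg_left ht.le (mul_pos hκ₂ hξ2).le
      clear * - e1 e2 hkx2; nlinarith
    have hBup : B ≤ 6*κ₁ + 4*γ := by
      rw [hB_def]
      have e1 : κ₁*t^2 ≤ κ₁*1 := mul_le_mul_of_nonneg_left ht.le hκ₁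
      clear * - e1 hkx2; nlinarith
    have hKain : 2*A + B ≤ K := by
      rw [hK_def']; clear * - hAup hBup; linarith
    rcases le_or_gt w w₀ with hc | hc
    · -- small w : numerator is nonnegative
      have hnum : 0 ≤ A - 2*A*w - B*w^2 := by
        have hAlow : 2*γ ≤ A := by
          rw [hA_def]
          have htl : (1:ℝ)/2 ≤ t^2 := by
            have := le_trans hc hw₀le
            clear * - this hwt; linarith
          have e1 : κ₂*ξ^2*(1/2) ≤ κ₂*ξ^2*t^2 :=
            mul_le_mul_of_nonneg_left htl (mul_pos hκ₂ hξ2).le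
          have e2 : 0 ≤ κ₁*t^4 := mul_nonneg hκ₁ (by positivity)
          clear * - e1 e2 hkx1; nlinarith
        have hKw : K*w₀ ≤ γ := by
          have e1 := mul_le_mul_of_nonneg_left hw₀le2 hK.le
          have e2 : K*(κ₂/((α₁-α₂)*K)) = κ₂/(α₁-α₂) := by
            field_simp
          rw [hγ_def]; clear * - e1 e2; linarith
        have h2AWB : 2*A*w + B*w^2 ≤ K*w := by
          have e1 := mul_le_mul_of_nonneg_right hKain hw.le
          have e2 : B*w^2 ≤ B*w := by
            have := mul_le_mul_of_nonneg_left hw1 (mul_nonneg hBpos hw.le)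
            clear * - this; nlinarith
          clear * - e1 e2; nlinarith
        have hKww : K*w ≤ K*w₀ := mul_le_mul_of_nonneg_left hc hK.le
        clear * - hAlow hKw h2AWB hKww hγ; nlinarith
      have hd := div_nonneg hnum (by positivity : (0:ℝ) ≤ w^4*x^2)
      clear * - hd hα₂; linarith
    · -- w ≥ w₀
      have hnum : -(K*w) ≤ A - 2*A*w - B*w^2 := by
        have e1 := mul_le_mul_of_nonneg_right hKain hw.le
        have e2 : B*w^2 ≤ B*w := by
          have := mul_le_mul_of_nonneg_left hw1 (mul_nonneg hBpos hw.le)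
          clear * - this; nlinarith
        clear * - e1 e2 hApos; nlinarith
      have hstep : -(K*w/(w^4*x^2)) ≤ (A - 2*A*w - B*w^2)/(w^4*x^2) := by
        rw [show -(K*w/(w^4*x^2)) = (-(K*w))/(w^4*x^2) by ring]
        apply div_le_div_of_nonneg_right ?_ (by positivity)
        clear * - hnum; linarith
      have heq2 : K*w/(w^4*x^2) = K/(w^3*x^2) := by
        have hw' := hw.ne'
        have hx' : x ≠ 0 := by clear * - hmx; intro h; rw [h] at hmx; simp at hmx
        field_simp
      have hstep2 : K/(w^3*x^2) ≤ K/(w₀^3*M^2) := by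
        apply div_le_div_of_nonneg_left hK.le (by positivity)
        have e1 : w₀^3 ≤ w^3 := pow_le_pow_left₀ hw₀.le hc.le 3
        have e2 : 0 ≤ w₀^3 := by positivity
        have := mul_le_mul e1 hx2 (by clear * - hM1; nlinarith) (by positivity)
        clear * - this; linarith
      have hstep3 : K/(w₀^3*M^2) ≤ α₂/8 := by
        rw [div_le_div_iff₀ (by positivity) (by norm_num)]
        clear * - hM4; nlinarith [hM4]
      clear * - hstep heq2 hstep2 hstep3
      linarith [heq2 ▸ hstep]
  -- Assemble
  have hxv : α₂/4 ≤ α₂/4*(x^2/v^2) := by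
    have := mul_le_mul_of_nonneg_left h2b (by positivity : (0:ℝ) ≤ α₂/4)
    clear * - this; simpa using this
  simp only [Sig]
  clear * - h1 h2 h3 h4 h56 hxv
  linarith [h1, h2, h3, h4, h56, hxv]

lemma php_zero {u : ℝ} (hu : u ≤ 0) : php u = 0 := by
  simp [php, expNegInvGlue.zero_of_nonpos hu]

lemma phpp_zero {u : ℝ} (hu : u ≤ 0) : phpp u = 0 := by
  simp [phpp, expNegInvGlue.zero_of_nonpos hu]

lemma fcut_eq (t : ℝ) : fcut t = expNegInvGlue (1 - t^2) := by
  by_cases ht : t ∈ Set.Ioo (-1:ℝ) 1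
  · rw [fcut, if_pos ht]
    have h2 : 0 < 1 - t^2 := by nlinarith [ht.1, ht.2]
    rw [expNegInvGlue, if_neg (by linarith)]
    congr 1
    field_simp
  · rw [fcut, if_neg ht]
    simp only [Set.mem_Ioo, not_and_or, not_lt] at ht
    have h2 : 1 - t^2 ≤ 0 := by
      rcases ht with h | h
      · nlinarith
      · nlinarith
    rw [expNegInvGlue.zero_of_nonpos h2]

lemma gfun_eq (ξ M : ℝ) (hM : 0 < M) : gfun ξ M = Gg ξ M := by
  funext p
  obtain ⟨x, y⟩ := p
  simp only [gfun, Gg]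
  by_cases hx : x < -M
  · rw [if_pos hx]
    congr 1
    · have h : (0:ℝ) < -(x+M) := by linarith
      rw [expNegInvGlue, if_neg (by linarith)]
      congr 1
      have hne : x + M ≠ 0 := by intro hc; rw [hc] at h; simp at h
      field_simp
    · exact fcut_eq _
  · rw [if_neg hx]
    push_neg at hx
    rw [expNegInvGlue.zero_of_nonpos (by linarith : -(x+M) ≤ 0), zero_mul]

lemma lop_eq (a₁ a₂ α₁ α₂ κ₁ κ₂ ξ M : ℝ) (z : ℝ × ℝ) (hx : z.1 < 0) :
    Lop a₁ a₂ α₁ α₂ κ₁ κ₂ (Gg ξ M) z =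
      (a₁*z.1 - α₁*z.1^2 + z.2^2) * gx ξ M z.1 z.2
      + (a₂*z.2 - α₂*z.1*z.2) * gy ξ M z.1 z.2
      + κ₁ * gxx ξ M z.1 z.2 + κ₂ * gyy ξ M z.1 z.2 := by
  obtain ⟨x, y⟩ := z
  simp only at hx
  have hx0 : x ≠ 0 := ne_of_lt hx
  have hdx : deriv (fun s => Gg ξ M (s,y)) x = gx ξ M x y :=
    (hasDerivAt_gx ξ M x y hx0).deriv
  have hdxx : deriv (deriv (fun s => Gg ξ M (s,y))) x = gxx ξ M x y := by
    have hev : deriv (fun s => Gg ξ M (s,y)) =ᶠ[nhds x] fun s => gx ξ M s y := by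
      filter_upwards [Iio_mem_nhds hx] with s hs
      exact (hasDerivAt_gx ξ M s y (ne_of_lt hs)).deriv
    rw [hev.deriv_eq]
    exact (hasDerivAt_gxx ξ M x y hx0).deriv
  have hdy : deriv (fun t => Gg ξ M (x,t)) = fun t => gy ξ M x t :=
    funext fun t => (hasDerivAt_gy ξ M x t).deriv
  have hdyy : deriv (deriv (fun t => Gg ξ M (x,t))) y = gyy ξ M x y := by
    rw [hdy]
    exact (hasDerivAt_gyy ξ M x y).deriv
  simp only [Lop]
  rw [hdx, hdxx, congrFun hdy y, hdyy]

lemma lop_zero (a₁ a₂ α₁ α₂ κ₁ κ₂ ξ M : ℝ) (z : ℝ × ℝ) (hx : -M < z.1) :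
    Lop a₁ a₂ α₁ α₂ κ₁ κ₂ (Gg ξ M) z = 0 := by
  obtain ⟨x, y⟩ := z
  simp only at hx
  have hy0 : (fun t => Gg ξ M (x,t)) = fun _ => (0:ℝ) := by
    funext t
    simp only [Gg]
    rw [expNegInvGlue.zero_of_nonpos (by linarith : -(x+M) ≤ 0), zero_mul]
  have hloc : ∀ s : ℝ, -M < s → ∀ y' : ℝ,
      (fun s' => Gg ξ M (s',y')) =ᶠ[nhds s] fun _ => (0:ℝ) := by
    intro s hs y'
    filter_upwards [Ioi_mem_nhds hs] with u hu
    simp only [Gg]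
    rw [expNegInvGlue.zero_of_nonpos (by simp at hu; linarith : -(u+M) ≤ 0), zero_mul]
  have hdx : deriv (fun s => Gg ξ M (s,y)) x = 0 := by
    rw [(hloc x hx y).deriv_eq, deriv_const]
  have hdxx : deriv (deriv (fun s => Gg ξ M (s,y))) x = 0 := by
    have hev : deriv (fun s => Gg ξ M (s,y)) =ᶠ[nhds x] fun _ => (0:ℝ) := by
      filter_upwards [Ioi_mem_nhds hx] with s hs
      rw [(hloc s hs y).deriv_eq, deriv_const]
    rw [hev.deriv_eq, deriv_const]
  have hdy : deriv (fun t => Gg ξ M (x,t)) y = 0 := by rw [hy0]; simp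
  have hdyy : deriv (deriv (fun t => Gg ξ M (x,t))) y = 0 := by rw [hy0]; simp
  simp only [Lop]
  rw [hdx, hdxx, hdy, hdyy]
  ring


set_option maxHeartbeats 1600000 in
lemma main_ineq (a₁ a₂ α₁ α₂ κ₁ κ₂ ξ M : ℝ)
    (hα₂ : 0 < α₂) (hα : α₂ < α₁) (hκ₁ : 0 ≤ κ₁) (hκ₂ : 0 < κ₂) (hξ : 0 < ξ)
    (hβ1 : (α₁-α₂)/2 < 1/ξ^2) (hβ2 : 1/ξ^2 < α₁-α₂)
    (hM1 : 1 ≤ M) (hM2 : 2*|a₁| ≤ α₂*M) (hM3 : 16*κ₁ ≤ α₂*M^2)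
    (hM4 : 8*(14*κ₁+20*κ₂/(α₁-α₂)) ≤
      α₂*(min (1/2) (κ₂/((α₁-α₂)*(14*κ₁+20*κ₂/(α₁-α₂)))))^3*M^2)
    (hA : 0 ≤ a₁ - a₂ + (α₁ - α₂ - 1/ξ^2)*M) :
    (∀ z : ℝ × ℝ, (α₂/8) * gfun ξ M z ≤ Lop a₁ a₂ α₁ α₂ κ₁ κ₂ (gfun ξ M) z) ∧
    ∀ p ∈ Uxi ξ M, 0 < gfun ξ M p := by
  have hM0 : 0 < M := by linarith
  rw [gfun_eq ξ M hM0]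
  constructor
  · intro z
    obtain ⟨x, y⟩ := z
    rcases lt_trichotomy x (-M) with hx | hx | hx
    · -- x < -M
      have hx0 : x ≠ 0 := by intro h; rw [h] at hx; linarith
      have hxneg : x < 0 := by linarith
      rw [lop_eq a₁ a₂ α₁ α₂ κ₁ κ₂ ξ M (x,y) hxneg]
      simp only
      rcases le_or_gt (1-(ξ*y/x)^2) 0 with hw | hw
      · have hF : expNegInvGlue (1-(ξ*y/x)^2) = 0 := expNegInvGlue.zero_of_nonpos hw
        have hF1 : php (1-(ξ*y/x)^2) = 0 := php_zero hw
        have hF2 : phpp (1-(ξ*y/x)^2) = 0 := phpp_zero hw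
        simp [Gg, gx, gxx, gy, gyy, hF, hF1, hF2]
      · have hv : 0 < -(x+M) := by linarith
        have hy : y = (ξ*y/x)*x/ξ := by field_simp
        have hb := bridge_alg a₁ a₂ α₁ α₂ κ₁ κ₂ ξ x (ξ*y/x) (-(x+M)) (1-(ξ*y/x)^2)
          (expNegInvGlue (-(x+M))) (expNegInvGlue (1-(ξ*y/x)^2)) y (ne_of_gt hξ) hx0
          (ne_of_gt hv) (ne_of_gt hw) hy
        have hgoal : (a₁*x - α₁*x^2 + y^2) * gx ξ M x y + (a₂*y - α₂*x*y) * gy ξ M x y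
            + κ₁ * gxx ξ M x y + κ₂ * gyy ξ M x y
            = expNegInvGlue (-(x+M)) * expNegInvGlue (1-(ξ*y/x)^2)
              * Sig a₁ a₂ α₁ α₂ κ₁ κ₂ ξ x (ξ*y/x) (-(x+M)) (1-(ξ*y/x)^2) := by
          simp only [gx, gxx, gy, gyy, php, phpp]
          linear_combination hb
        have ht2 : (ξ*y/x)^2 < 1 := by linarith
        have hcore := core a₁ a₂ α₁ α₂ κ₁ κ₂ ξ M x (ξ*y/x) hα₂ hα hκ₁ hκ₂ hξ hβ1 hβ2
          hM1 hM2 hM3 hM4 hA hx ht2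
        have hEF : 0 ≤ expNegInvGlue (-(x+M)) * expNegInvGlue (1-(ξ*y/x)^2) :=
          mul_nonneg (expNegInvGlue.nonneg _) (expNegInvGlue.nonneg _)
        calc (α₂/8) * Gg ξ M (x,y)
            = expNegInvGlue (-(x+M)) * expNegInvGlue (1-(ξ*y/x)^2) * (α₂/8) := by
              simp only [Gg]; ring
          _ ≤ expNegInvGlue (-(x+M)) * expNegInvGlue (1-(ξ*y/x)^2)
              * Sig a₁ a₂ α₁ α₂ κ₁ κ₂ ξ x (ξ*y/x) (-(x+M)) (1-(ξ*y/x)^2) :=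
              mul_le_mul_of_nonneg_left hcore hEF
          _ = _ := hgoal.symm
    · -- x = -M
      subst hx
      have hxneg : -M < 0 := by linarith
      rw [lop_eq a₁ a₂ α₁ α₂ κ₁ κ₂ ξ M (-M,y) hxneg]
      have hE1 : php (0:ℝ) = 0 := php_zero le_rfl
      have hE2 : phpp (0:ℝ) = 0 := phpp_zero le_rfl
      simp [Gg, gx, gxx, gy, gyy, hE1, hE2]
    · -- -M < x
      rw [lop_zero a₁ a₂ α₁ α₂ κ₁ κ₂ ξ M (x,y) hx]
      simp only [Gg]
      rw [expNegInvGlue.zero_of_nonpos (by linarith : -(x+M) ≤ 0), zero_mul, mul_zero]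
  · rintro ⟨x, y⟩ ⟨hp1, hp2⟩
    simp only at hp1 hp2
    have hmx : 0 < -x := by linarith
    have hx0 : x ≠ 0 := by intro h; rw [h] at hmx; simp at hmx
    simp only [Gg]
    apply mul_pos (expNegInvGlue.pos_of_pos (by linarith))
    apply expNegInvGlue.pos_of_pos
    have h2 : (ξ*y)^2 < x^2 := by
      have hh := mul_self_lt_mul_self (mul_nonneg hξ.le (abs_nonneg y)) hp2
      nlinarith [sq_abs y, hh]
    have h3 : (ξ*y/x)^2 < 1 := by
      rw [div_pow]
      rw [div_lt_one (by nlinarith : (0:ℝ) < x^2)]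
      exact h2
    linarith

/-- if `α₁ > α₂ > 0`, for every `ξ` with `(α₁−α₂)/2 < 1/ξ² < α₁−α₂` there are
`M, C > 0` with `Lg ≥ C·g` on `ℝ²` and `g > 0` on `U_{ξ,M}`; if moreover `a₁ ≥ a₂`, a single
`M` works for all such `ξ`. -/
theorem statement18 (a₁ a₂ α₁ α₂ κ₁ κ₂ : ℝ) (hα₂ : 0 < α₂) (hα : α₂ < α₁)
    (hκ₁ : 0 ≤ κ₁) (hκ₂ : 0 < κ₂) :
    (∀ ξ : ℝ, 0 < ξ → (α₁ - α₂) / 2 < 1 / ξ ^ 2 → 1 / ξ ^ 2 < α₁ - α₂ →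
      ∃ M > (0:ℝ), ∃ C > (0:ℝ),
        (∀ z : ℝ × ℝ, C * gfun ξ M z ≤ Lop a₁ a₂ α₁ α₂ κ₁ κ₂ (gfun ξ M) z) ∧
        ∀ p ∈ Uxi ξ M, 0 < gfun ξ M p) ∧
    (a₂ ≤ a₁ →
      ∃ M > (0:ℝ), ∀ ξ : ℝ, 0 < ξ → (α₁ - α₂) / 2 < 1 / ξ ^ 2 → 1 / ξ ^ 2 < α₁ - α₂ →
        ∃ C > (0:ℝ),
          (∀ z : ℝ × ℝ, C * gfun ξ M z ≤ Lop a₁ a₂ α₁ α₂ κ₁ κ₂ (gfun ξ M) z) ∧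
          ∀ p ∈ Uxi ξ M, 0 < gfun ξ M p) := by
  have hαd : 0 < α₁ - α₂ := by linarith
  have hKpos : 0 < 14*κ₁+20*κ₂/(α₁-α₂) := by
    have h20 : 0 < 20*κ₂/(α₁-α₂) := by positivity
    linarith
  have hwmin : 0 < min (1/2) (κ₂/((α₁-α₂)*(14*κ₁+20*κ₂/(α₁-α₂)))) :=
    lt_min (by norm_num) (div_pos hκ₂ (mul_pos hαd hKpos))
  have hcpos : 0 < α₂*(min (1/2) (κ₂/((α₁-α₂)*(14*κ₁+20*κ₂/(α₁-α₂)))))^3 :=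
    mul_pos hα₂ (pow_pos hwmin 3)
  obtain ⟨M₀, hM₀_def⟩ : ∃ m : ℝ, m = 1 + 2*|a₁|/α₂ + 16*κ₁/α₂
      + 8*(14*κ₁+20*κ₂/(α₁-α₂))
        /(α₂*(min (1/2) (κ₂/((α₁-α₂)*(14*κ₁+20*κ₂/(α₁-α₂)))))^3) := ⟨_, rfl⟩
  have e1 : (0:ℝ) ≤ 2*|a₁|/α₂ := by positivity
  have e2 : (0:ℝ) ≤ 16*κ₁/α₂ := div_nonneg (by linarith) hα₂.le
  have e3 : (0:ℝ) ≤ 8*(14*κ₁+20*κ₂/(α₁-α₂))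
      /(α₂*(min (1/2) (κ₂/((α₁-α₂)*(14*κ₁+20*κ₂/(α₁-α₂)))))^3) :=
    div_nonneg (by linarith) hcpos.le
  have hM₀1 : 1 ≤ M₀ := by rw [hM₀_def]; linarith
  have hconds : ∀ M : ℝ, M₀ ≤ M → 1 ≤ M ∧ 2*|a₁| ≤ α₂*M ∧ 16*κ₁ ≤ α₂*M^2 ∧
      8*(14*κ₁+20*κ₂/(α₁-α₂)) ≤
        α₂*(min (1/2) (κ₂/((α₁-α₂)*(14*κ₁+20*κ₂/(α₁-α₂)))))^3*M^2 := by
    intro M hM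
    have hM1 : 1 ≤ M := le_trans hM₀1 hM
    have hMM : M ≤ M^2 := by nlinarith
    refine ⟨hM1, ?_, ?_, ?_⟩
    · have h : 2*|a₁|/α₂ ≤ M := by rw [hM₀_def] at hM; linarith
      rw [div_le_iff₀ hα₂] at h
      linarith
    · have h : 16*κ₁/α₂ ≤ M := by rw [hM₀_def] at hM; linarith
      rw [div_le_iff₀ hα₂] at h
      nlinarith [mul_le_mul_of_nonneg_left hMM hα₂.le]
    · have h : 8*(14*κ₁+20*κ₂/(α₁-α₂))
          /(α₂*(min (1/2) (κ₂/((α₁-α₂)*(14*κ₁+20*κ₂/(α₁-α₂)))))^3) ≤ M := by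
        rw [hM₀_def] at hM; linarith
      rw [div_le_iff₀ hcpos] at h
      nlinarith [mul_le_mul_of_nonneg_left hMM hcpos.le]
  constructor
  · intro ξ hξ hb1 hb2
    have hδ : 0 < α₁-α₂-1/ξ^2 := by linarith
    obtain ⟨MX, hMX_def⟩ : ∃ m : ℝ, m = M₀ + max ((a₂-a₁)/(α₁-α₂-1/ξ^2)) 0 := ⟨_, rfl⟩
    have hmax0 : (0:ℝ) ≤ max ((a₂-a₁)/(α₁-α₂-1/ξ^2)) 0 := le_max_right _ _
    have hMX : M₀ ≤ MX := by rw [hMX_def]; linarith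
    obtain ⟨h1, h2, h3, h4⟩ := hconds MX hMX
    have hA : 0 ≤ a₁ - a₂ + (α₁ - α₂ - 1/ξ^2)*MX := by
      have hmax : (a₂-a₁)/(α₁-α₂-1/ξ^2) ≤ MX := by
        have := le_max_left ((a₂-a₁)/(α₁-α₂-1/ξ^2)) (0:ℝ)
        rw [hMX_def]; linarith
      rw [div_le_iff₀ hδ] at hmax
      nlinarith [hmax]
    obtain ⟨hL, hP⟩ := main_ineq a₁ a₂ α₁ α₂ κ₁ κ₂ ξ MX hα₂ hα hκ₁ hκ₂ hξ hb1 hb2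
      h1 h2 h3 h4 hA
    exact ⟨MX, by linarith, α₂/8, by positivity, hL, hP⟩
  · intro ha
    refine ⟨M₀, by linarith, ?_⟩
    intro ξ hξ hb1 hb2
    have hδ : 0 < α₁-α₂-1/ξ^2 := by linarith
    obtain ⟨h1, h2, h3, h4⟩ := hconds M₀ le_rfl
    have hA : 0 ≤ a₁ - a₂ + (α₁ - α₂ - 1/ξ^2)*M₀ := by
      nlinarith [mul_pos hδ (lt_of_lt_of_le one_pos hM₀1)]
    obtain ⟨hL, hP⟩ := main_ineq a₁ a₂ α₁ α₂ κ₁ κ₂ ξ M₀ hα₂ hα hκ₁ hκ₂ hξ hb1 hb2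
      h1 h2 h3 h4 hA
    exact ⟨α₂/8, by positivity, hL, hP⟩
end

section
/- Let a₁, a₂ ∈ ℝ, α₁ > α₂ > 0, κ₁ ≥ 0 and κ₂ > 0. Then there exist a bounded C^∞ function Ψ : ℝ² → [0, ∞), a nonempty open set A ⊆ ℝ² on which Ψ is strictly positive, and a constant E > 0 such that (LΨ)(z) ≥ E·Ψ(z) for all z ∈ ℝ². -/
set_option maxHeartbeats 2000000

noncomputable def aux_g1 (v : ℝ) : ℝ := if 0 < v then expNegInvGlue v / v^2 else 0
noncomputable def aux_g2 (v : ℝ) : ℝ :=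
  if 0 < v then expNegInvGlue v * (1/v^4 - 2/v^3) else 0

lemma aux_g1_nonneg (v : ℝ) : 0 ≤ aux_g1 v := by
  unfold aux_g1; split
  · exact div_nonneg (expNegInvGlue.nonneg v) (by positivity)
  · exact le_refl 0

lemma aux_g1_nonpos (v : ℝ) (hv : v ≤ 0) : aux_g1 v = 0 := by
  unfold aux_g1; rw [if_neg (not_lt.2 hv)]

lemma aux_g2_nonpos (v : ℝ) (hv : v ≤ 0) : aux_g2 v = 0 := by
  unfold aux_g2; rw [if_neg (not_lt.2 hv)]

lemma aux_g1_pos_eq (v : ℝ) (hv : 0 < v) : aux_g1 v = expNegInvGlue v / v^2 := if_pos hv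
lemma aux_g2_pos_eq (v : ℝ) (hv : 0 < v) : aux_g2 v = expNegInvGlue v * (1/v^4 - 2/v^3) :=
  if_pos hv

lemma expNegInvGlue_eq_of_pos {v : ℝ} (hv : 0 < v) : expNegInvGlue v = Real.exp (-v⁻¹) := by
  unfold expNegInvGlue; rw [if_neg (not_le.2 hv)]

lemma expNegInvGlue_le_one (v : ℝ) : expNegInvGlue v ≤ 1 := by
  rcases le_or_gt v 0 with h | h
  · rw [expNegInvGlue.zero_of_nonpos h]; norm_num
  · rw [expNegInvGlue_eq_of_pos h]
    rw [show (1:ℝ) = Real.exp 0 by simp]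
    apply Real.exp_le_exp.2
    simp [le_of_lt (inv_pos.2 h)]

lemma hasDerivAt_aux_n (v : ℝ) : HasDerivAt expNegInvGlue (aux_g1 v) v := by
  rcases lt_trichotomy v 0 with hv | rfl | hv
  · rw [aux_g1_nonpos v hv.le]
    refine (hasDerivAt_const v (0:ℝ)).congr_of_eventuallyEq ?_
    filter_upwards [gt_mem_nhds hv] with y hy
    rw [expNegInvGlue.zero_of_nonpos hy.le]
  · have hdiff : DifferentiableAt ℝ expNegInvGlue 0 :=
      (expNegInvGlue.contDiff (n := 1)).differentiable (by norm_num) 0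
    have hmin : IsLocalMin expNegInvGlue 0 := by
      refine Filter.Eventually.of_forall (fun y => ?_)
      rw [expNegInvGlue.zero]; exact expNegInvGlue.nonneg y
    have h0 : deriv expNegInvGlue 0 = 0 := hmin.deriv_eq_zero
    have := hdiff.hasDerivAt
    rw [h0] at this
    simpa [aux_g1] using this
  · have h1 : HasDerivAt (fun y : ℝ => Real.exp (-y⁻¹)) (Real.exp (-v⁻¹) * (v^2)⁻¹) v := by
      have hinv : HasDerivAt (fun y : ℝ => -y⁻¹) ((v^2)⁻¹) v := by
        simpa using (hasDerivAt_inv hv.ne').fun_neg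
      simpa using hinv.exp
    have h2 : HasDerivAt expNegInvGlue (Real.exp (-v⁻¹) * (v^2)⁻¹) v := by
      refine h1.congr_of_eventuallyEq ?_
      filter_upwards [lt_mem_nhds hv] with y hy
      rw [expNegInvGlue_eq_of_pos hy]
    rw [aux_g1_pos_eq v hv, expNegInvGlue_eq_of_pos hv, div_eq_mul_inv]
    exact h2

lemma deriv_aux_n : deriv expNegInvGlue = aux_g1 :=
  funext fun v => (hasDerivAt_aux_n v).deriv

lemma hasDerivAt_aux_g1 (v : ℝ) : HasDerivAt aux_g1 (aux_g2 v) v := by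
  rcases lt_trichotomy v 0 with hv | rfl | hv
  · rw [aux_g2_nonpos v hv.le]
    refine (hasDerivAt_const v (0:ℝ)).congr_of_eventuallyEq ?_
    filter_upwards [gt_mem_nhds hv] with y hy
    rw [aux_g1_nonpos y hy.le]
  · have hcd : ContDiff ℝ (⊤:ℕ∞) (deriv expNegInvGlue) :=
      (contDiff_infty_iff_deriv.1 (expNegInvGlue.contDiff (n := ⊤))).2
    have hdiff : DifferentiableAt ℝ aux_g1 0 := by
      rw [← deriv_aux_n]; exact (hcd.differentiable (by simp)) 0
    have hmin : IsLocalMin aux_g1 0 := by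
      refine Filter.Eventually.of_forall (fun y => ?_)
      rw [aux_g1_nonpos 0 le_rfl]; exact aux_g1_nonneg y
    have h0 : deriv aux_g1 0 = 0 := hmin.deriv_eq_zero
    have := hdiff.hasDerivAt
    rw [h0] at this
    simpa [aux_g2] using this
  · have h1 : HasDerivAt (fun y : ℝ => Real.exp (-y⁻¹) * (y^2)⁻¹)
        (Real.exp (-v⁻¹) * (v^2)⁻¹ * (v^2)⁻¹ + Real.exp (-v⁻¹) * (-(2:ℝ) * (v^3)⁻¹)) v := by
      have hinv : HasDerivAt (fun y : ℝ => -y⁻¹) ((v^2)⁻¹) v := by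
        simpa using (hasDerivAt_inv hv.ne').fun_neg
      have hexp : HasDerivAt (fun y : ℝ => Real.exp (-y⁻¹)) (Real.exp (-v⁻¹) * (v^2)⁻¹) v := by
        simpa using hinv.exp
      have hpow : HasDerivAt (fun y : ℝ => (y^2)⁻¹) (-(2:ℝ) * (v^3)⁻¹) v := by
        have := (hasDerivAt_pow 2 v).inv (by positivity : v^2 ≠ 0)
        refine this.congr_deriv ?_
        field_simp
        ring
      exact hexp.mul hpow
    have h2 : HasDerivAt aux_g1
        (Real.exp (-v⁻¹) * (v^2)⁻¹ * (v^2)⁻¹ + Real.exp (-v⁻¹) * (-(2:ℝ) * (v^3)⁻¹)) v := by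
      refine h1.congr_of_eventuallyEq ?_
      filter_upwards [lt_mem_nhds hv] with y hy
      rw [aux_g1_pos_eq y hy, expNegInvGlue_eq_of_pos hy, div_eq_mul_inv]
    have heq : aux_g2 v
        = Real.exp (-v⁻¹) * (v^2)⁻¹ * (v^2)⁻¹ + Real.exp (-v⁻¹) * (-(2:ℝ) * (v^3)⁻¹) := by
      rw [aux_g2_pos_eq v hv, expNegInvGlue_eq_of_pos hv]
      field_simp
      ring
    rw [heq]; exact h2

section Psi

variable (M β c γ : ℝ)

noncomputable def psiF (p : ℝ × ℝ) : ℝ :=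
  expNegInvGlue ((-p.1 - M)/β) * expNegInvGlue ((c*p.1^2 - p.2^2)/γ)

noncomputable def DxF (x y : ℝ) : ℝ :=
  aux_g1 ((-x - M)/β) * (-1/β) * expNegInvGlue ((c*x^2 - y^2)/γ)
  + expNegInvGlue ((-x - M)/β) * (aux_g1 ((c*x^2 - y^2)/γ) * (2*c*x/γ))

noncomputable def DDxF (x y : ℝ) : ℝ :=
  (aux_g2 ((-x - M)/β) * (-1/β) * (-1/β)) * expNegInvGlue ((c*x^2 - y^2)/γ)
  + aux_g1 ((-x - M)/β) * (-1/β) * (aux_g1 ((c*x^2 - y^2)/γ) * (2*c*x/γ))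
  + (aux_g1 ((-x - M)/β) * (-1/β) * (aux_g1 ((c*x^2 - y^2)/γ) * (2*c*x/γ))
     + expNegInvGlue ((-x - M)/β) *
        (aux_g2 ((c*x^2 - y^2)/γ) * (2*c*x/γ) * (2*c*x/γ) + aux_g1 ((c*x^2 - y^2)/γ) * (2*c/γ)))

noncomputable def DyF (x y : ℝ) : ℝ :=
  expNegInvGlue ((-x - M)/β) * (aux_g1 ((c*x^2 - y^2)/γ) * (-2*y/γ))

noncomputable def DDyF (x y : ℝ) : ℝ :=
  expNegInvGlue ((-x - M)/β) *
    (aux_g2 ((c*x^2 - y^2)/γ) * (-2*y/γ) * (-2*y/γ) + aux_g1 ((c*x^2 - y^2)/γ) * (-2/γ))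

variable {M β c γ}

lemma hasDerivAt_u1 (x : ℝ) : HasDerivAt (fun t : ℝ => (-t - M)/β) (-1/β) x := by
  simpa using ((hasDerivAt_id x).neg.sub_const M).div_const β

lemma hasDerivAt_q (y x : ℝ) :
    HasDerivAt (fun t : ℝ => (c*t^2 - y^2)/γ) (2*c*x/γ) x := by
  have h := (((hasDerivAt_pow 2 x).const_mul c).sub_const (y^2)).div_const γ
  refine h.congr_deriv ?_
  ring

lemma hasDerivAt_qy (x y : ℝ) :
    HasDerivAt (fun s : ℝ => (c*x^2 - s^2)/γ) (-2*y/γ) y := by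
  have h := ((hasDerivAt_pow 2 y).const_sub (c*x^2)).div_const γ
  refine h.congr_deriv ?_
  ring

lemma hasDerivAt_psi_x (x y : ℝ) :
    HasDerivAt (fun t : ℝ => psiF M β c γ (t, y)) (DxF M β c γ x y) x := by
  have h1 : HasDerivAt (fun t : ℝ => expNegInvGlue ((-t - M)/β))
      (aux_g1 ((-x - M)/β) * (-1/β)) x :=
    (hasDerivAt_aux_n _).comp x (hasDerivAt_u1 x)
  have h2 : HasDerivAt (fun t : ℝ => expNegInvGlue ((c*t^2 - y^2)/γ))
      (aux_g1 ((c*x^2 - y^2)/γ) * (2*c*x/γ)) x :=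
    (hasDerivAt_aux_n _).comp x (hasDerivAt_q y x)
  exact h1.mul h2

lemma deriv_psi_x (y : ℝ) :
    (deriv (fun t : ℝ => psiF M β c γ (t, y))) = fun t => DxF M β c γ t y :=
  funext fun t => (hasDerivAt_psi_x t y).deriv

lemma hasDerivAt_Dx (x y : ℝ) :
    HasDerivAt (fun t : ℝ => DxF M β c γ t y) (DDxF M β c γ x y) x := by
  have hA : HasDerivAt (fun t : ℝ => aux_g1 ((-t - M)/β) * (-1/β))
      (aux_g2 ((-x - M)/β) * (-1/β) * (-1/β)) x :=
    (((hasDerivAt_aux_g1 _).comp x (hasDerivAt_u1 x)).mul_const (-1/β))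
  have hB : HasDerivAt (fun t : ℝ => expNegInvGlue ((c*t^2 - y^2)/γ))
      (aux_g1 ((c*x^2 - y^2)/γ) * (2*c*x/γ)) x :=
    (hasDerivAt_aux_n _).comp x (hasDerivAt_q y x)
  have hC : HasDerivAt (fun t : ℝ => expNegInvGlue ((-t - M)/β))
      (aux_g1 ((-x - M)/β) * (-1/β)) x :=
    (hasDerivAt_aux_n _).comp x (hasDerivAt_u1 x)
  have hlin : HasDerivAt (fun t : ℝ => 2*c*t/γ) (2*c/γ) x := by
    simpa using ((hasDerivAt_id x).const_mul (2*c)).div_const γ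
  have hD : HasDerivAt (fun t : ℝ => aux_g1 ((c*t^2 - y^2)/γ) * (2*c*t/γ))
      (aux_g2 ((c*x^2 - y^2)/γ) * (2*c*x/γ) * (2*c*x/γ) + aux_g1 ((c*x^2 - y^2)/γ) * (2*c/γ)) x :=
    ((hasDerivAt_aux_g1 _).comp x (hasDerivAt_q y x)).mul hlin
  exact (hA.mul hB).add (hC.mul hD)

lemma hasDerivAt_psi_y (x y : ℝ) :
    HasDerivAt (fun s : ℝ => psiF M β c γ (x, s)) (DyF M β c γ x y) y := by
  have h2 : HasDerivAt (fun s : ℝ => expNegInvGlue ((c*x^2 - s^2)/γ))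
      (aux_g1 ((c*x^2 - y^2)/γ) * (-2*y/γ)) y :=
    (hasDerivAt_aux_n _).comp y (hasDerivAt_qy x y)
  simpa [psiF, DyF, mul_comm] using (h2.const_mul (expNegInvGlue ((-x - M)/β)))

lemma deriv_psi_y (x : ℝ) :
    (deriv (fun s : ℝ => psiF M β c γ (x, s))) = fun s => DyF M β c γ x s :=
  funext fun s => (hasDerivAt_psi_y x s).deriv

lemma hasDerivAt_Dy (x y : ℝ) :
    HasDerivAt (fun s : ℝ => DyF M β c γ x s) (DDyF M β c γ x y) y := by
  have hD : HasDerivAt (fun s : ℝ => aux_g1 ((c*x^2 - s^2)/γ) * (-2*s/γ))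
      (aux_g2 ((c*x^2 - y^2)/γ) * (-2*y/γ) * (-2*y/γ) + aux_g1 ((c*x^2 - y^2)/γ) * (-2/γ)) y := by
    have hlin : HasDerivAt (fun s : ℝ => -2*s/γ) (-2/γ) y := by
      simpa using ((hasDerivAt_id y).const_mul (-2:ℝ)).div_const γ
    exact ((hasDerivAt_aux_g1 _).comp y (hasDerivAt_qy x y)).mul hlin
  simpa [DyF, DDyF] using hD.const_mul (expNegInvGlue ((-x - M)/β))

lemma lop_psi_eq (a₁ a₂ α₁ α₂ κ₁ κ₂ x y : ℝ) :
    Lop a₁ a₂ α₁ α₂ κ₁ κ₂ (psiF M β c γ) (x, y) =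
      (a₁*x - α₁*x^2 + y^2) * DxF M β c γ x y + (a₂*y - α₂*x*y) * DyF M β c γ x y
      + κ₁ * DDxF M β c γ x y + κ₂ * DDyF M β c γ x y := by
  have h0 : Lop a₁ a₂ α₁ α₂ κ₁ κ₂ (psiF M β c γ) (x, y)
      = (a₁*x - α₁*x^2 + y^2) * deriv (fun t => psiF M β c γ (t, y)) x
        + (a₂*y - α₂*x*y) * deriv (fun s => psiF M β c γ (x, s)) y
        + κ₁ * deriv (deriv (fun t => psiF M β c γ (t, y))) x
        + κ₂ * deriv (deriv (fun s => psiF M β c γ (x, s))) y := by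
    unfold Lop
    norm_num
  rw [h0, deriv_psi_x y, deriv_psi_y x]
  beta_reduce
  rw [(hasDerivAt_Dx x y).deriv, (hasDerivAt_Dy x y).deriv]


lemma DxF_eq (x y w τ : ℝ) (hw : w = -x - M) (hτ : τ = c*x^2 - y^2)
    (hwpos : 0 < w) (hτpos : 0 < τ) (hβpos : 0 < β) (hγpos : 0 < γ) :
    DxF M β c γ x y = (expNegInvGlue (w/β) * expNegInvGlue (τ/γ)) *
      (-β/w^2 + 2*c*γ*x/τ^2) := by
  unfold DxF
  rw [show -x - M = w from hw.symm, show c*x^2 - y^2 = τ from hτ.symm,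
    aux_g1_pos_eq _ (by positivity), aux_g1_pos_eq _ (by positivity)]
  have h1 : w ≠ 0 := ne_of_gt hwpos
  have h2 : τ ≠ 0 := ne_of_gt hτpos
  have h3 : β ≠ 0 := ne_of_gt hβpos
  have h4 : γ ≠ 0 := ne_of_gt hγpos
  field_simp

lemma DyF_eq (x y w τ : ℝ) (hw : w = -x - M) (hτ : τ = c*x^2 - y^2)
    (hwpos : 0 < w) (hτpos : 0 < τ) (hβpos : 0 < β) (hγpos : 0 < γ) :
    DyF M β c γ x y = (expNegInvGlue (w/β) * expNegInvGlue (τ/γ)) * (-2*γ*y/τ^2) := by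
  unfold DyF
  rw [show -x - M = w from hw.symm, show c*x^2 - y^2 = τ from hτ.symm,
    aux_g1_pos_eq _ (by positivity)]
  have h2 : τ ≠ 0 := ne_of_gt hτpos
  have h4 : γ ≠ 0 := ne_of_gt hγpos
  field_simp

lemma DDxF_eq (x y w τ : ℝ) (hw : w = -x - M) (hτ : τ = c*x^2 - y^2)
    (hwpos : 0 < w) (hτpos : 0 < τ) (hβpos : 0 < β) (hγpos : 0 < γ) :
    DDxF M β c γ x y = (expNegInvGlue (w/β) * expNegInvGlue (τ/γ)) *
      ((-β/w^2 + 2*c*γ*x/τ^2)^2 + (-2*β/w^3 + 2*c*γ/τ^2 - 8*c^2*γ*x^2/τ^3)) := by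
  unfold DDxF
  rw [show -x - M = w from hw.symm, show c*x^2 - y^2 = τ from hτ.symm,
    aux_g1_pos_eq _ (by positivity), aux_g1_pos_eq _ (by positivity),
    aux_g2_pos_eq _ (by positivity), aux_g2_pos_eq _ (by positivity)]
  have h1 : w ≠ 0 := ne_of_gt hwpos
  have h2 : τ ≠ 0 := ne_of_gt hτpos
  have h3 : β ≠ 0 := ne_of_gt hβpos
  have h4 : γ ≠ 0 := ne_of_gt hγpos
  field_simp
  ring

lemma DDyF_eq (x y w τ : ℝ) (hw : w = -x - M) (hτ : τ = c*x^2 - y^2)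
    (hwpos : 0 < w) (hτpos : 0 < τ) (hβpos : 0 < β) (hγpos : 0 < γ) :
    DDyF M β c γ x y = (expNegInvGlue (w/β) * expNegInvGlue (τ/γ)) *
      ((-2*γ*y/τ^2)^2 + (-2*γ/τ^2 - 8*γ*y^2/τ^3)) := by
  unfold DDyF
  rw [show -x - M = w from hw.symm, show c*x^2 - y^2 = τ from hτ.symm,
    aux_g1_pos_eq _ (by positivity), aux_g2_pos_eq _ (by positivity)]
  have h2 : τ ≠ 0 := ne_of_gt hτpos
  have h4 : γ ≠ 0 := ne_of_gt hγpos
  field_simp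
  ring

lemma psiF_eq (x y w τ : ℝ) (hw : w = -x - M) (hτ : τ = c*x^2 - y^2) :
    psiF M β c γ (x, y) = expNegInvGlue (w/β) * expNegInvGlue (τ/γ) := by
  unfold psiF
  rw [show -x - M = w from hw.symm, show c*x^2 - y^2 = τ from hτ.symm]


end Psi


-- T1 core
lemma lem_b1 (a₁ α₁ α₂ c m y M : ℝ) (hα₂ : 0 < α₂) (hα₁c : α₁ = α₂ + 2*c)
    (hC : 2*|a₁| ≤ α₂*M) (hMm : M < m) (hMpos : 0 < M)
    (hy2le : y^2 ≤ c*m^2) :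
    a₁*(-m) - α₁*(-m)^2 + y^2 ≤ -(α₁/2)*m^2 := by
  have hmpos : 0 < m := lt_trans hMpos hMm
  have h1 : -(a₁*m) ≤ |a₁| * m := by nlinarith [neg_abs_le a₁]
  have haux : 2*|a₁| ≤ α₂*m := by nlinarith [abs_nonneg a₁]
  have h2 : |a₁| * m ≤ (α₂/2)*m^2 := by
    nlinarith [mul_le_mul_of_nonneg_right haux hmpos.le]
  nlinarith

lemma lem_T1 (a₁ α₁ α₂ c m y M β w : ℝ) (hα₂ : 0 < α₂) (hα₁c : α₁ = α₂ + 2*c)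
    (hC : 2*|a₁| ≤ α₂*M) (hMm : M < m) (hMpos : 0 < M)
    (hy2le : y^2 ≤ c*m^2) (hβpos : 0 < β) (hβα : 6 ≤ β*α₁)
    (hwpos : 0 < w) (hwm : w ≤ m) :
    3 ≤ (a₁*(-m) - α₁*(-m)^2 + y^2) * (-β/w^2) := by
  have hb₁ := lem_b1 a₁ α₁ α₂ c m y M hα₂ hα₁c hC hMm hMpos hy2le
  have hw2 : w^2 ≤ m^2 := by nlinarith
  have h9 : (a₁*(-m) - α₁*(-m)^2 + y^2) * (-β/w^2)
      = (-(a₁*(-m) - α₁*(-m)^2 + y^2))*β/w^2 := by ring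
  rw [h9, le_div_iff₀ (by positivity : (0:ℝ) < w^2)]
  have h10 : 6*w^2 ≤ (α₁*β)*m^2 := by
    have hα₁ : 0 < α₁ := by nlinarith
    exact mul_le_mul (by linarith) hw2 (by positivity) (by positivity)
  nlinarith [mul_le_mul_of_nonneg_right hb₁ hβpos.le]

-- T2 core
lemma lem_Num (a₁ a₂ α₁ α₂ c γ m τ M y : ℝ) (hα₂ : 0 < α₂) (hα₁c : α₁ = α₂ + 2*c)
    (hc0 : 0 < c) (hγpos : 0 < γ) (hτpos : 0 < τ) (hMm : M < m) (hMpos : 0 < M)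
    (hA : 2*|a₁ - a₂| ≤ c*M) (hB : |a₂| ≤ c*M)
    (hy2 : y^2 = c*(-m)^2 - τ) :
    γ*c^2*m^3 ≤ 2*c*γ*(-m)*(a₁*(-m) - α₁*(-m)^2 + y^2) - 2*γ*y^2*(a₂ - α₂*(-m)) := by
  have hmpos : 0 < m := lt_trans hMpos hMm
  rw [hy2, hα₁c]
  have hd1 : -(c*m)/2 ≤ a₁ - a₂ := by nlinarith [neg_abs_le (a₁ - a₂)]
  have hd2 : -(c*m) ≤ a₂ := by nlinarith [neg_abs_le a₂]
  have p1 : 0 ≤ 2*c*γ*m^2*((a₁ - a₂) + c*m/2) := by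
    apply mul_nonneg (by positivity); linarith
  have p2 : 0 ≤ 2*γ*τ*((a₂ + c*m) + α₂*m) := by
    apply mul_nonneg (by positivity)
    nlinarith [mul_pos hα₂ hmpos]
  nlinarith [p1, p2]

-- K1 pieces
lemma lem_P1 (κ₁ β w : ℝ) (hκ₁ : 0 ≤ κ₁) (hβ1 : 1 ≤ β) (hβsq : 16*κ₁ ≤ β^2)
    (hwpos : 0 < w) :
    -1 ≤ κ₁*(β^2/w^4 - 2*β/w^3) := by
  have hβpos : 0 < β := by linarith
  have e : κ₁*(β^2/w^4 - 2*β/w^3) = κ₁*(β^2 - 2*β*w)/w^4 := by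
    field_simp
  rw [e, le_div_iff₀ (by positivity : (0:ℝ) < w^4)]
  rcases le_or_gt w (β/2) with h | h
  · have h11 : 2*β*w ≤ β^2 := by nlinarith
    nlinarith [mul_le_mul_of_nonneg_left h11 hκ₁, pow_pos hwpos 4]
  · have h8 : 16*κ₁*β ≤ β^3 := by nlinarith
    have h9 : β^3 ≤ 8*w^3 := by
      nlinarith [mul_nonneg (mul_nonneg (by linarith : (0:ℝ) ≤ w - β/2) hwpos.le) hwpos.le,
        mul_nonneg (by linarith : (0:ℝ) ≤ w - β/2) (sq_nonneg (w + β/2)),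
        mul_nonneg (by linarith : (0:ℝ) ≤ w - β/2) (sq_nonneg β)]
    nlinarith [mul_le_mul_of_nonneg_left h9 hκ₁, mul_le_mul_of_nonneg_left h8 hwpos.le,
      mul_pos (mul_pos hwpos hwpos) hwpos]

lemma lem_P3core (κ₁ γ m τ M : ℝ) (hκ₁ : 0 ≤ κ₁) (hγpos : 0 < γ) (hτpos : 0 < τ)
    (hMm : M < m) (hMpos : 0 < M) (hD : 64*κ₁ ≤ γ*M) :
    0 ≤ 4*κ₁*m^2*(γ - 2*τ) + m^3*τ^2/4 := by
  have hmpos : 0 < m := lt_trans hMpos hMm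
  rcases le_or_gt τ (γ/2) with h | h
  · have h1 : 0 ≤ 4*κ₁*m^2*(γ - 2*τ) := by
      apply mul_nonneg (by positivity); linarith
    nlinarith [pow_pos hmpos 3, sq_nonneg τ]
  · have hmτ : 32*κ₁ ≤ m*τ := by nlinarith
    have h12 : 0 ≤ m^2*τ*(m*τ - 32*κ₁) := by
      apply mul_nonneg (by positivity); linarith
    nlinarith [mul_nonneg (mul_nonneg hκ₁ (sq_nonneg m)) hγpos.le]

-- K2 pieces
lemma lem_K2a (κ₂ γ c m τ M y : ℝ) (hκ₂ : 0 < κ₂) (hγpos : 0 < γ) (hτpos : 0 < τ)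
    (hc0 : 0 < c) (hMm : M < m) (hM1 : 1 ≤ M) (hF : γ ≤ 2*c*M)
    (hy2 : y^2 = c*(-m)^2 - τ) (h : τ ≤ γ/4) :
    0 ≤ 4*γ^2*y^2 - 2*γ*τ^2 - 8*γ*y^2*τ := by
  have hMpos : 0 < M := by linarith
  have hmpos : 0 < m := lt_trans hMpos hMm
  have hcM : γ ≤ 2*c*M^2 := by nlinarith
  have hM2m : M^2 ≤ m^2 := by nlinarith
  have hyy : γ/4 ≤ y^2 := by nlinarith
  have p1 : 0 ≤ 4*γ*y^2*((γ - 2*τ) - γ/2) :=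
    mul_nonneg (mul_nonneg (by positivity) (sq_nonneg y)) (by linarith)
  have q : τ^2 ≤ γ^2/16 := by nlinarith
  have q2 : γ^2/4 ≤ γ*y^2 := by nlinarith
  have r1 : 2*γ*τ^2 ≤ γ^3/8 := by nlinarith
  have r2 : γ^3/2 ≤ 2*γ^2*y^2 := by nlinarith
  nlinarith [p1, r1, r2]

lemma lem_K2b (κ₂ γ c m τ M y : ℝ) (hκ₂ : 0 < κ₂) (hγpos : 0 < γ) (hτpos : 0 < τ)
    (hc0 : 0 < c) (hMm : M < m) (hMpos : 0 < M) (hγκ : 32*κ₂ ≤ γ)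
    (hE128 : 128*κ₂ ≤ c*γ*M) (hy2le : y^2 ≤ c*m^2) (h : γ/4 < τ) :
    -(τ^4) - γ*c^2*m^3*τ^2/4 ≤ κ₂*(4*γ^2*y^2 - 2*γ*τ^2 - 8*γ*y^2*τ) := by
  have hmpos : 0 < m := lt_trans hMpos hMm
  have f1 : 2*κ₂*γ ≤ τ^2 := by nlinarith
  have g1' : κ₂*(2*γ*τ^2) ≤ τ^4 := by nlinarith [sq_nonneg τ]
  have h13 : M*(γ/4) ≤ m*τ := by nlinarith
  have hcmτ : 32*κ₂ ≤ c*m*τ := by nlinarith [mul_le_mul_of_nonneg_left h13 hc0.le]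
  have h10 : 8*κ₂*y^2 ≤ 8*κ₂*(c*m^2) := by nlinarith
  have h11 : 8*κ₂*(c*m^2) ≤ c*m^2*(c*m*τ)/4 := by
    nlinarith [mul_nonneg (mul_nonneg hc0.le (sq_nonneg m))
      (by linarith : (0:ℝ) ≤ c*m*τ - 32*κ₂)]
  have f2 : κ₂*(8*γ*y^2*τ) ≤ γ*c^2*m^3*τ^2/4 := by
    have h14 := mul_le_mul_of_nonneg_left (le_trans h10 h11) (mul_pos hγpos hτpos).le
    nlinarith [h14]
  nlinarith [g1', f2, mul_nonneg (mul_nonneg hκ₂.le (by positivity : (0:ℝ) ≤ 4*γ^2)) (sq_nonneg y)]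

lemma G_ge_one (a₁ a₂ α₁ α₂ κ₁ κ₂ c β γ M x y w τ : ℝ)
    (hα₂ : 0 < α₂) (hα : α₂ < α₁) (hκ₁ : 0 ≤ κ₁) (hκ₂ : 0 < κ₂)
    (hc : c = (α₁ - α₂)/2)
    (hβ : β = 16*κ₁ + 1 + 6/α₁)
    (hγ : γ = 32*κ₂ + 1)
    (hM : M = 1 + 2*|a₁ - a₂| / c + |a₂| / c + 2*|a₁| / α₂ + 64*κ₁/γ + 128*κ₂/(c*γ) + γ/(2*c))
    (hw : w = -x - M) (hτ : τ = c*x^2 - y^2)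
    (hwpos : 0 < w) (hτpos : 0 < τ) :
    1 ≤ (a₁*x - α₁*x^2 + y^2)*(-β/w^2 + 2*c*γ*x/τ^2)
      + (a₂*y - α₂*x*y)*(-2*γ*y/τ^2)
      + κ₁*((-β/w^2 + 2*c*γ*x/τ^2)^2 + (-2*β/w^3 + 2*c*γ/τ^2 - 8*c^2*γ*x^2/τ^3))
      + κ₂*((-2*γ*y/τ^2)^2 + (-2*γ/τ^2 - 8*γ*y^2/τ^3)) := by
  have hα₁ : 0 < α₁ := lt_trans hα₂ hα
  have hc0 : 0 < c := by rw [hc]; linarith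
  have hα₁c : α₁ = α₂ + 2*c := by rw [hc]; ring
  have hβ1 : 1 ≤ β := by
    have h6 : 0 < 6/α₁ := by positivity
    rw [hβ]; linarith
  have hβpos : 0 < β := lt_of_lt_of_le one_pos hβ1
  have hβκ : 16*κ₁ ≤ β := by
    have h6 : 0 < 6/α₁ := by positivity
    rw [hβ]; linarith
  have hβsq : 16*κ₁ ≤ β^2 := by nlinarith
  have hβα : 6 ≤ β*α₁ := by
    rw [hβ]
    have e : (16*κ₁ + 1 + 6/α₁)*α₁ = 16*κ₁*α₁ + α₁ + 6 := by field_simp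
    rw [e]; nlinarith
  have hγ1 : 1 ≤ γ := by rw [hγ]; linarith
  have hγpos : 0 < γ := lt_of_lt_of_le one_pos hγ1
  have hγκ : 32*κ₂ ≤ γ := by rw [hγ]; linarith
  have hm2 : 0 ≤ 2*|a₁ - a₂| / c := by positivity
  have hm3 : 0 ≤ |a₂| / c := by positivity
  have hm4 : 0 ≤ 2*|a₁| / α₂ := by positivity
  have hm5 : 0 ≤ 64*κ₁/γ := by positivity
  have hm6 : 0 ≤ 128*κ₂/(c*γ) := by positivity
  have hm7 : 0 ≤ γ/(2*c) := by positivity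
  have hM1 : 1 ≤ M := by rw [hM]; linarith
  have hMpos : 0 < M := lt_of_lt_of_le one_pos hM1
  have hA : 2*|a₁ - a₂| ≤ c*M := by
    have h : 2*|a₁ - a₂| / c ≤ M := by rw [hM]; linarith
    rw [div_le_iff₀ hc0] at h; linarith
  have hB : |a₂| ≤ c*M := by
    have h : |a₂| / c ≤ M := by rw [hM]; linarith
    rw [div_le_iff₀ hc0] at h; linarith
  have hC : 2*|a₁| ≤ α₂*M := by
    have h : 2*|a₁| / α₂ ≤ M := by rw [hM]; linarith
    rw [div_le_iff₀ hα₂] at h; linarith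
  have hD : 64*κ₁ ≤ γ*M := by
    have h : 64*κ₁/γ ≤ M := by rw [hM]; linarith
    rw [div_le_iff₀ hγpos] at h; linarith
  have hE128 : 128*κ₂ ≤ c*γ*M := by
    have h : 128*κ₂/(c*γ) ≤ M := by rw [hM]; linarith
    rw [div_le_iff₀ (by positivity)] at h; linarith
  have hF : γ ≤ 2*c*M := by
    have h : γ/(2*c) ≤ M := by rw [hM]; linarith
    rw [div_le_iff₀ (by positivity)] at h; linarith
  clear hm2 hm3 hm4 hm5 hm6 hm7 hM hβ hγ hc
  obtain ⟨m, hMm, rfl⟩ : ∃ m : ℝ, M < m ∧ x = -m := ⟨-x, by nlinarith [hw ▸ hwpos], by ring⟩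
  have hmpos : 0 < m := lt_trans hMpos hMm
  have hy2 : y^2 = c*(-m)^2 - τ := by rw [hτ]; ring
  have hy2le : y^2 ≤ c*m^2 := by nlinarith
  have hwm : w ≤ m := by rw [hw]; linarith
  set S := γ*c^2*m^3/τ^2 with hSdef
  have hS : 0 ≤ S := by positivity
  -- bounds
  have hT1 := lem_T1 a₁ α₁ α₂ c m y M β w hα₂ hα₁c hC hMm hMpos hy2le hβpos hβα hwpos hwm
  have hT2 : S ≤ (a₁*(-m) - α₁*(-m)^2 + y^2) * (2*c*γ*(-m)/τ^2)
      + (a₂*y - α₂*(-m)*y)*(-2*γ*y/τ^2) := by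
    have hNum := lem_Num a₁ a₂ α₁ α₂ c γ m τ M y hα₂ hα₁c hc0 hγpos hτpos hMm hMpos hA hB hy2
    have e : (a₁*(-m) - α₁*(-m)^2 + y^2) * (2*c*γ*(-m)/τ^2)
        + (a₂*y - α₂*(-m)*y)*(-2*γ*y/τ^2)
        = (2*c*γ*(-m)*(a₁*(-m) - α₁*(-m)^2 + y^2) - 2*γ*y^2*(a₂ - α₂*(-m)))/τ^2 := by
      ring
    rw [e, hSdef, div_le_div_iff₀ (by positivity) (by positivity)]
    exact mul_le_mul_of_nonneg_right hNum (by positivity)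
  have hP1 := lem_P1 κ₁ β w hκ₁ hβ1 hβsq hwpos
  have hP2 : 0 ≤ κ₁*(-4*c*γ*(-m)*β/(w^2*τ^2) + 2*c*γ/τ^2) := by
    have e : κ₁*(-4*c*γ*(-m)*β/(w^2*τ^2) + 2*c*γ/τ^2)
        = κ₁*(4*c*γ*m*β/(w^2*τ^2) + 2*c*γ/τ^2) := by ring
    rw [e]; positivity
  have hP3 : -(S/4) ≤ κ₁*(4*c^2*γ^2*(-m)^2/τ^4 - 8*c^2*γ*(-m)^2/τ^3) := by
    have hcore := lem_P3core κ₁ γ m τ M hκ₁ hγpos hτpos hMm hMpos hD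
    have e1 : κ₁*(4*c^2*γ^2*(-m)^2/τ^4 - 8*c^2*γ*(-m)^2/τ^3)
        = c^2*γ*(4*κ₁*m^2*(γ - 2*τ))/τ^4 := by field_simp; ring
    have e2 : S/4 = c^2*γ*(m^3*τ^2/4)/τ^4 := by rw [hSdef]; field_simp
    rw [e1, e2, neg_le, ← neg_div, div_le_div_iff₀ (by positivity) (by positivity)]
    have h15 : -(c^2*γ*(4*κ₁*m^2*(γ - 2*τ))) ≤ c^2*γ*(m^3*τ^2/4) := by
      nlinarith [mul_nonneg (mul_nonneg (sq_nonneg c) hγpos.le) hcore]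
    exact mul_le_mul_of_nonneg_right h15 (by positivity)
  have hK2 : -1 - S/4 ≤ κ₂*((-2*γ*y/τ^2)^2 + (-2*γ/τ^2 - 8*γ*y^2/τ^3)) := by
    have e : κ₂*((-2*γ*y/τ^2)^2 + (-2*γ/τ^2 - 8*γ*y^2/τ^3))
        = κ₂*(4*γ^2*y^2 - 2*γ*τ^2 - 8*γ*y^2*τ)/τ^4 := by field_simp; ring
    rcases le_or_gt τ (γ/4) with h | h
    · have hN2 := lem_K2a κ₂ γ c m τ M y hκ₂ hγpos hτpos hc0 hMm hM1 hF hy2 h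
      have h16 : 0 ≤ κ₂*(4*γ^2*y^2 - 2*γ*τ^2 - 8*γ*y^2*τ)/τ^4 := by positivity
      rw [e]; linarith
    · have hcore := lem_K2b κ₂ γ c m τ M y hκ₂ hγpos hτpos hc0 hMm hMpos hγκ hE128 hy2le h
      have e2 : -1 - S/4 = (-(τ^4) - γ*c^2*m^3*τ^2/4)/τ^4 := by
        rw [hSdef]; field_simp
      rw [e, e2, div_le_div_iff₀ (by positivity) (by positivity)]
      exact mul_le_mul_of_nonneg_right hcore (by positivity)
  have hsplit : (a₁*(-m) - α₁*(-m)^2 + y^2)*(-β/w^2 + 2*c*γ*(-m)/τ^2)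
      + (a₂*y - α₂*(-m)*y)*(-2*γ*y/τ^2)
      + κ₁*((-β/w^2 + 2*c*γ*(-m)/τ^2)^2 + (-2*β/w^3 + 2*c*γ/τ^2 - 8*c^2*γ*(-m)^2/τ^3))
      + κ₂*((-2*γ*y/τ^2)^2 + (-2*γ/τ^2 - 8*γ*y^2/τ^3))
      = ((a₁*(-m) - α₁*(-m)^2 + y^2) * (-β/w^2))
      + ((a₁*(-m) - α₁*(-m)^2 + y^2) * (2*c*γ*(-m)/τ^2)
          + (a₂*y - α₂*(-m)*y)*(-2*γ*y/τ^2))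
      + (κ₁*(β^2/w^4 - 2*β/w^3)
          + κ₁*(-4*c*γ*(-m)*β/(w^2*τ^2) + 2*c*γ/τ^2)
          + κ₁*(4*c^2*γ^2*(-m)^2/τ^4 - 8*c^2*γ*(-m)^2/τ^3))
      + κ₂*((-2*γ*y/τ^2)^2 + (-2*γ/τ^2 - 8*γ*y^2/τ^3)) := by
    field_simp
    ring
  rw [hsplit]
  linarith

/-- if `α₁ > α₂ > 0`, `κ₁ ≥ 0`, `κ₂ > 0`, there are a bounded nonnegative
`C^∞` function `Ψ`, a nonempty open set `A` on which `Ψ > 0`, and `E > 0` with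
`LΨ ≥ E·Ψ` on all of `ℝ²`. -/
theorem statement19 (a₁ a₂ α₁ α₂ κ₁ κ₂ : ℝ) (hα₂ : 0 < α₂) (hα : α₂ < α₁)
    (hκ₁ : 0 ≤ κ₁) (hκ₂ : 0 < κ₂) :
    ∃ Ψ : ℝ × ℝ → ℝ, ContDiff ℝ (⊤ : ℕ∞) Ψ ∧
      (∀ z : ℝ × ℝ, 0 ≤ Ψ z) ∧
      (∃ B : ℝ, ∀ z : ℝ × ℝ, Ψ z ≤ B) ∧
      ∃ A : Set (ℝ × ℝ), A.Nonempty ∧ IsOpen A ∧ (∀ z ∈ A, 0 < Ψ z) ∧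
        ∃ E > (0:ℝ), ∀ z : ℝ × ℝ, E * Ψ z ≤ Lop a₁ a₂ α₁ α₂ κ₁ κ₂ Ψ z := by
  have hα₁ : 0 < α₁ := lt_trans hα₂ hα
  set c : ℝ := (α₁ - α₂)/2 with hc
  set β : ℝ := 16*κ₁ + 1 + 6/α₁ with hβ
  set γ : ℝ := 32*κ₂ + 1 with hγ
  set M : ℝ := 1 + 2*|a₁ - a₂| / c + |a₂| / c + 2*|a₁| / α₂ + 64*κ₁/γ + 128*κ₂/(c*γ) + γ/(2*c)
    with hM
  have hc0 : 0 < c := by rw [hc]; linarith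
  have hβpos : 0 < β := by
    have h6 : 0 < 6/α₁ := by positivity
    rw [hβ]; linarith
  have hγpos : 0 < γ := by rw [hγ]; linarith
  have hMpos : 0 < M := by
    have hm2 : 0 ≤ 2*|a₁ - a₂| / c := by positivity
    have hm3 : 0 ≤ |a₂| / c := by positivity
    have hm4 : 0 ≤ 2*|a₁| / α₂ := by positivity
    have hm5 : 0 ≤ 64*κ₁/γ := by positivity
    have hm6 : 0 ≤ 128*κ₂/(c*γ) := by positivity
    have hm7 : 0 ≤ γ/(2*c) := by positivity
    rw [hM]; linarith
  refine ⟨psiF M β c γ, ?_, ?_, ⟨1, ?_⟩, ?_⟩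
  · -- smooth
    unfold psiF
    apply ContDiff.mul
    · exact expNegInvGlue.contDiff.comp
        ((contDiff_fst.neg.sub contDiff_const).div_const β)
    · exact expNegInvGlue.contDiff.comp
        (((contDiff_const.mul (contDiff_fst.pow 2)).sub (contDiff_snd.pow 2)).div_const γ)
  · -- nonneg
    intro z
    exact mul_nonneg (expNegInvGlue.nonneg _) (expNegInvGlue.nonneg _)
  · -- bounded by 1
    intro z
    exact mul_le_one₀ (expNegInvGlue_le_one _) (expNegInvGlue.nonneg _) (expNegInvGlue_le_one _)
  · refine ⟨{p : ℝ × ℝ | 0 < -p.1 - M} ∩ {p : ℝ × ℝ | 0 < c*p.1^2 - p.2^2}, ?_, ?_, ?_, ?_⟩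
    · refine ⟨(-(M+1), 0), ?_, ?_⟩
      · show 0 < -(-(M+1)) - M; norm_num
      · show 0 < c * (-(M+1))^2 - (0:ℝ)^2
        have : 0 < (M+1)^2 := by positivity
        nlinarith
    · exact IsOpen.inter
        (isOpen_lt continuous_const (continuous_fst.neg.sub continuous_const))
        (isOpen_lt continuous_const
          ((continuous_const.mul (continuous_fst.pow 2)).sub (continuous_snd.pow 2)))
    · rintro ⟨x, y⟩ ⟨h1, h2⟩
      exact mul_pos (expNegInvGlue.pos_of_pos (by exact div_pos h1 hβpos))
        (expNegInvGlue.pos_of_pos (by exact div_pos h2 hγpos))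
    · refine ⟨1, one_pos, ?_⟩
      rintro ⟨x, y⟩
      rw [lop_psi_eq]
      by_cases h1 : 0 < -x - M
      · by_cases h2 : 0 < c*x^2 - y^2
        · -- main region
          have hw : (-x - M : ℝ) = -x - M := rfl
          have hτ : (c*x^2 - y^2 : ℝ) = c*x^2 - y^2 := rfl
          have hG := G_ge_one a₁ a₂ α₁ α₂ κ₁ κ₂ c β γ M x y (-x - M) (c*x^2 - y^2)
            hα₂ hα hκ₁ hκ₂ hc hβ hγ hM rfl rfl h1 h2
          rw [DxF_eq x y (-x - M) (c*x^2 - y^2) rfl rfl h1 h2 hβpos hγpos,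
            DyF_eq x y (-x - M) (c*x^2 - y^2) rfl rfl h1 h2 hβpos hγpos,
            DDxF_eq x y (-x - M) (c*x^2 - y^2) rfl rfl h1 h2 hβpos hγpos,
            DDyF_eq x y (-x - M) (c*x^2 - y^2) rfl rfl h1 h2 hβpos hγpos,
            psiF_eq x y (-x - M) (c*x^2 - y^2) rfl rfl]
          set P := expNegInvGlue ((-x - M)/β) * expNegInvGlue ((c*x^2 - y^2)/γ) with hP
          have hPpos : 0 < P := mul_pos
            (expNegInvGlue.pos_of_pos (div_pos h1 hβpos))
            (expNegInvGlue.pos_of_pos (div_pos h2 hγpos))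
          set W1 := -β/(-x - M)^2 + 2*c*γ*x/(c*x^2 - y^2)^2 with hW1
          set W2 := -2*γ*y/(c*x^2 - y^2)^2 with hW2
          set K1 := W1^2 + (-2*β/(-x - M)^3 + 2*c*γ/(c*x^2 - y^2)^2
            - 8*c^2*γ*x^2/(c*x^2 - y^2)^3) with hK1
          set K2 := W2^2 + (-2*γ/(c*x^2 - y^2)^2 - 8*γ*y^2/(c*x^2 - y^2)^3) with hK2
          have hGP := mul_le_mul_of_nonneg_left hG hPpos.le
          nlinarith [hGP]
        · -- q ≤ 0
          have hq : (c*x^2 - y^2)/γ ≤ 0 :=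
            div_nonpos_iff.2 (Or.inr ⟨le_of_not_gt h2, hγpos.le⟩)
          have hz1 : expNegInvGlue ((c*x^2 - y^2)/γ) = 0 := expNegInvGlue.zero_of_nonpos hq
          have hz2 : aux_g1 ((c*x^2 - y^2)/γ) = 0 := aux_g1_nonpos _ hq
          have hz3 : aux_g2 ((c*x^2 - y^2)/γ) = 0 := aux_g2_nonpos _ hq
          unfold psiF DxF DyF DDxF DDyF
          rw [hz1, hz2, hz3]
          ring_nf
          norm_num
      · -- u1 ≤ 0
        have hq : (-x - M)/β ≤ 0 :=
          div_nonpos_iff.2 (Or.inr ⟨le_of_not_gt h1, hβpos.le⟩)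
        have hz1 : expNegInvGlue ((-x - M)/β) = 0 := expNegInvGlue.zero_of_nonpos hq
        have hz2 : aux_g1 ((-x - M)/β) = 0 := aux_g1_nonpos _ hq
        have hz3 : aux_g2 ((-x - M)/β) = 0 := aux_g2_nonpos _ hq
        unfold psiF DxF DyF DDxF DDyF
        rw [hz1, hz2, hz3]
        ring_nf
        norm_num
end
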